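/- arXiv:2605.12793 — 7 statements merged into one kernel-verified Lean document; each statement's English description precedes it below -/
import Mathlib

section
/- Let k ≥ 2 and p_1, …, p_k ≥ 2 be integers. Every element g of the presented group G(p_1,…,p_k) can be written as g = Δ^m · v̄ for some integer m and some finite list v over Fin k such that for no index i is the list consisting of p_i consecutive copies of i a contiguous sublist (infix) of v, where v̄ denotes the ordered product of the positive generators a_{v(0)}·a_{v(1)}⋯a_{v(len−1)}. -/
/-- The value in a group `G` of a word over `k` designated generators: a word of
length `n` is a function `w : Fin n → Fin k × Bool`, and its value is the ordered
product of `g (w j).1` (if the Bool is `true`) or its inverse (if `false`). -/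
def wordValue {G : Type*} [Group G] {k : ℕ} (g : Fin k → G) {n : ℕ}
    (w : Fin n → Fin k × Bool) : G :=
  ((List.finRange n).map (fun j => if (w j).2 then g (w j).1 else (g (w j).1)⁻¹)).prod

/-- The number of words of length `n` whose value is the identity (cogrowth count). -/
noncomputable def cogrowthCount {G : Type*} [Group G] {k : ℕ} (g : Fin k → G) (n : ℕ) : ℕ :=
  Nat.card {w : Fin n → Fin k × Bool // wordValue g w = 1}

/-- The distinguished index `0` in `Fin k` when `2 ≤ k`. -/
def fin0 {k : ℕ} (hk : 2 ≤ k) : Fin k := ⟨0, Nat.lt_of_lt_of_le Nat.zero_lt_two hk⟩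

/-- Relators `a_i ^ (p i) * (a_{i₀} ^ (p i₀))⁻¹` for the presented group
`⟨a_1, …, a_k ∣ a_1^{p_1} = ⋯ = a_k^{p_k}⟩` (with distinguished index `i₀`). -/
def Grels {k : ℕ} (p : Fin k → ℕ) (i₀ : Fin k) : Set (FreeGroup (Fin k)) :=
  { r | ∃ i : Fin k, r = FreeGroup.of i ^ (p i) * (FreeGroup.of i₀ ^ (p i₀))⁻¹ }

/-- Snoc case analysis for runs. -/
lemma snoc_case {k : ℕ} (p : Fin k → ℕ) (hp : ∀ i, 2 ≤ p i) (v : List (Fin k)) (i : Fin k)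
    (hv : ∀ j, ¬ (List.replicate (p j) j <:+: v)) :
    (∀ j, ¬ (List.replicate (p j) j <:+: v ++ [i])) ∨
    ∃ u, (∀ j, ¬ (List.replicate (p j) j <:+: u)) ∧ v = u ++ List.replicate (p i - 1) i := by
  by_cases h : ∀ j, ¬ (List.replicate (p j) j <:+: v ++ [i])
  · exact Or.inl h
  push_neg at h
  obtain ⟨j, s, t, hst⟩ := h
  rcases t.eq_nil_or_concat with rfl | ⟨t', a, rfl⟩
  · -- suffix case
    have hpj : p j = (p j - 1) + 1 := by have := hp j; omega
    rw [List.append_nil, hpj, List.replicate_succ', ← List.append_assoc] at hst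
    obtain ⟨h1, h2⟩ := List.append_inj' hst rfl
    have hji : j = i := by simpa using h2
    subst hji
    refine Or.inr ⟨s, fun j' hj' => hv j' ?_, by rw [← h1]⟩
    exact hj'.trans (List.IsPrefix.isInfix ⟨List.replicate (p j - 1) j, h1⟩)
  · -- infix of v, contradiction
    exfalso
    rw [List.concat_eq_append, show s ++ List.replicate (p j) j ++ (t' ++ [a]) =
        (s ++ List.replicate (p j) j ++ t') ++ [a] by simp [List.append_assoc]] at hst
    obtain ⟨h1, -⟩ := List.append_inj' hst rfl
    exact hv j ⟨s, t', h1⟩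

/-- normal-form predicate -/
def NFP {G : Type*} [Group G] {k : ℕ} (p : Fin k → ℕ) (a : Fin k → G) (Δ : G) (g : G) : Prop :=
  ∃ (m : ℤ) (v : List (Fin k)), (∀ j, ¬ (List.replicate (p j) j <:+: v)) ∧
    g = Δ ^ m * (v.map a).prod

lemma commΔ {G : Type*} [Group G] {k : ℕ} {p : Fin k → ℕ} {a : Fin k → G} {Δ : G}
    (ha : ∀ i, a i ^ p i = Δ) (v : List (Fin k)) : Commute Δ (v.map a).prod := by
  apply Commute.list_prod_right
  intro x hx
  obtain ⟨j, -, rfl⟩ := List.mem_map.1 hx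
  exact (ha j) ▸ (Commute.refl (a j)).pow_left (p j)

lemma NFP_mul_gen {G : Type*} [Group G] {k : ℕ} {p : Fin k → ℕ} {a : Fin k → G} {Δ : G}
    (hp : ∀ i, 2 ≤ p i) (ha : ∀ i, a i ^ p i = Δ) {g : G} (hg : NFP p a Δ g) (i : Fin k) :
    NFP p a Δ (g * a i) := by
  obtain ⟨m, v, hv, rfl⟩ := hg
  rcases snoc_case p hp v i hv with h | ⟨u, hu, rfl⟩
  · exact ⟨m, v ++ [i], h, by rw [List.map_append, List.prod_append, mul_assoc]; simp⟩
  · refine ⟨m + 1, u, hu, ?_⟩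
    have h1 : ((u ++ List.replicate (p i - 1) i).map a).prod * a i
        = (u.map a).prod * Δ := by
      rw [List.map_append, List.prod_append, List.map_replicate, List.prod_replicate,
        mul_assoc, ← pow_succ, Nat.sub_add_cancel (le_trans one_le_two (hp i)), ha i]
    rw [mul_assoc, h1, ← (commΔ ha u).eq, ← mul_assoc, ← zpow_add_one]

lemma NFP_mul_Dinv {G : Type*} [Group G] {k : ℕ} {p : Fin k → ℕ} {a : Fin k → G} {Δ : G}
    (ha : ∀ i, a i ^ p i = Δ) {g : G} (hg : NFP p a Δ g) : NFP p a Δ (g * Δ⁻¹) := by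
  obtain ⟨m, v, hv, rfl⟩ := hg
  refine ⟨m - 1, v, hv, ?_⟩
  rw [mul_assoc, ← ((commΔ ha v).inv_left).eq, ← mul_assoc, ← zpow_sub_one]

lemma NFP_mul_gen_pow {G : Type*} [Group G] {k : ℕ} {p : Fin k → ℕ} {a : Fin k → G} {Δ : G}
    (hp : ∀ i, 2 ≤ p i) (ha : ∀ i, a i ^ p i = Δ) {g : G} (hg : NFP p a Δ g) (i : Fin k)
    (n : ℕ) : NFP p a Δ (g * (a i) ^ n) := by
  induction n with
  | zero => simpa using hg
  | succ n ih => rw [pow_succ, ← mul_assoc]; exact NFP_mul_gen hp ha ih i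

lemma NFP_mul_gen_inv {G : Type*} [Group G] {k : ℕ} {p : Fin k → ℕ} {a : Fin k → G} {Δ : G}
    (hp : ∀ i, 2 ≤ p i) (ha : ∀ i, a i ^ p i = Δ) {g : G} (hg : NFP p a Δ g) (i : Fin k) :
    NFP p a Δ (g * (a i)⁻¹) := by
  have hpi : p i = (p i - 1) + 1 := by have := hp i; omega
  have h : (a i)⁻¹ = (a i) ^ (p i - 1) * Δ⁻¹ := by
    rw [← ha i, hpi, pow_succ', mul_inv_rev, ← mul_assoc]
    simp
  rw [h, ← mul_assoc]
  exact NFP_mul_Dinv ha (NFP_mul_gen_pow hp ha hg i (p i - 1))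

lemma Grel_holds {k : ℕ} (hk : 2 ≤ k) (p : Fin k → ℕ) (i : Fin k) :
    (PresentedGroup.of i : PresentedGroup (Grels p (fin0 hk))) ^ p i
      = (PresentedGroup.of (fin0 hk) : PresentedGroup (Grels p (fin0 hk))) ^ p (fin0 hk) := by
  have hmem : (FreeGroup.of i ^ p i * (FreeGroup.of (fin0 hk) ^ p (fin0 hk))⁻¹ :
      FreeGroup (Fin k)) ∈ Subgroup.normalClosure (Grels p (fin0 hk)) :=
    Subgroup.subset_normalClosure ⟨i, rfl⟩
  have h1 : PresentedGroup.mk (Grels p (fin0 hk))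
      (FreeGroup.of i ^ p i * (FreeGroup.of (fin0 hk) ^ p (fin0 hk))⁻¹) = 1 :=
    (QuotientGroup.eq_one_iff _).mpr hmem
  rw [map_mul, map_inv, map_pow, map_pow, mul_inv_eq_one] at h1
  exact h1

/-- Normal form: every element of `G(p_1,…,p_k)` is `Δ^m * v̄` for some integer `m`
and a list `v` over `Fin k` containing no contiguous run of `p i` copies of `i`,
where `v̄` is the ordered product of the positive generators indexed by `v`. -/
theorem normal_form (k : ℕ) (hk : 2 ≤ k) (p : Fin k → ℕ) (hp : ∀ i, 2 ≤ p i)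
    (g : PresentedGroup (Grels p (fin0 hk))) :
    ∃ (m : ℤ) (v : List (Fin k)),
      (∀ i : Fin k, ¬ (List.replicate (p i) i <:+: v)) ∧
      g = ((PresentedGroup.of (fin0 hk) : PresentedGroup (Grels p (fin0 hk)))
              ^ (p (fin0 hk))) ^ m *
          (v.map (fun i => (PresentedGroup.of i : PresentedGroup (Grels p (fin0 hk))))).prod := by
  set Δ := (PresentedGroup.of (fin0 hk) : PresentedGroup (Grels p (fin0 hk))) ^ (p (fin0 hk))
  set a : Fin k → PresentedGroup (Grels p (fin0 hk)) := fun i => PresentedGroup.of i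
  have ha : ∀ i, a i ^ p i = Δ := fun i => Grel_holds hk p i
  suffices h : NFP p a Δ g by
    obtain ⟨m, v, hv, hg⟩ := h
    exact ⟨m, v, hv, hg⟩
  obtain ⟨f, rfl⟩ := PresentedGroup.mk_surjective (Grels p (fin0 hk)) g
  have key : ∀ f : FreeGroup (Fin k), ∀ h, NFP p a Δ h →
      NFP p a Δ (h * PresentedGroup.mk (Grels p (fin0 hk)) f) := by
    intro f
    induction f using FreeGroup.induction_on with
    | C1 => simp only [map_one, mul_one]; exact fun h hh => hh
    | of x => intro h hh; exact NFP_mul_gen hp ha hh x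
    | inv_of x _ => intro h hh; rw [map_inv]; exact NFP_mul_gen_inv hp ha hh x
    | mul x y hx hy => intro h hh; rw [map_mul, ← mul_assoc]; exact hy _ (hx _ hh)
  simpa using key f 1 ⟨0, [], fun j h => by have := hp j; simp at h; omega, by simp⟩
end

section
/- Let k ≥ 2 and n ≥ 1 be integers. Then n times the number of positive words of length 2n over Fin k whose value in H_k is the identity equals k · Σ_{m=0}^{n−1} (n−m) · binom(2n, m) · (k−1)^m. (This counts closed walks of length 2n based at a vertex of the k-regular tree.) -/
/-- The value in a group `G` of a positive word `w : Fin n → Fin k`: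
the ordered product `g (w 0) * g (w 1) * ⋯ * g (w (n-1))`. -/
def posWordValue {G : Type*} [Group G] {k : ℕ} (g : Fin k → G) {n : ℕ}
    (w : Fin n → Fin k) : G :=
  ((List.finRange n).map (fun j => g (w j))).prod

/-- Relators `a_i ^ 2` for the group `H_k = ℤ/2 * ⋯ * ℤ/2` (k factors),
whose Cayley graph is the k-regular tree. -/
def Hrels (k : ℕ) : Set (FreeGroup (Fin k)) :=
  { r | ∃ i : Fin k, r = FreeGroup.of i ^ 2 }

namespace TreeWalk

variable {k : ℕ}

abbrev Red (k : ℕ) := {l : List (Fin k) // l.Chain' (· ≠ ·)}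

def rnil : Red k := ⟨[], List.isChain_nil⟩

def rstep (i : Fin k) : Red k → Red k
  | ⟨[], _⟩ => ⟨[i], List.isChain_singleton i⟩
  | ⟨j :: tl, h⟩ =>
    if hij : i = j then ⟨tl, h.tail⟩
    else ⟨i :: j :: tl, List.isChain_cons_cons.2 ⟨hij, h⟩⟩

lemma rstep_invol (i : Fin k) : Function.Involutive (rstep i) := by
  rintro ⟨_ | ⟨j, tl⟩, h⟩
  · simp [rstep]
  · by_cases hij : i = j
    · subst hij
      rw [rstep, dif_pos rfl]
      match tl, h with
      | [], h => simp [rstep]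
      | j' :: tl', h =>
        have : i ≠ j' := (List.isChain_cons_cons.1 h).1
        simp [rstep, this]
    · rw [rstep, dif_neg hij]
      simp [rstep]

def sigma (i : Fin k) : Equiv.Perm (Red k) := (rstep_invol i).toPerm

lemma hrel : ∀ r ∈ Hrels k, FreeGroup.lift sigma r = 1 := by
  rintro r ⟨i, rfl⟩
  rw [map_pow, FreeGroup.lift_apply_of]
  ext l
  simp [sq, sigma, rstep_invol i l]

def phi : PresentedGroup (Hrels k) →* Equiv.Perm (Red k) := PresentedGroup.toGroup hrel

def gen : Fin k → PresentedGroup (Hrels k) := PresentedGroup.of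

lemma gsq (i : Fin k) : gen (k := k) i * gen i = 1 := by
  have h : ((FreeGroup.of i) ^ 2 : FreeGroup (Fin k)) ∈ Subgroup.normalClosure (Hrels k) :=
    Subgroup.subset_normalClosure ⟨i, rfl⟩
  have h2 := (QuotientGroup.eq_one_iff ((FreeGroup.of i) ^ 2 : FreeGroup (Fin k))).2 h
  calc gen (k := k) i * gen i
      = PresentedGroup.mk (Hrels k) ((FreeGroup.of i) ^ 2) := by
        rw [sq]; rfl
    _ = 1 := h2

def redList (l : List (Fin k)) : Red k := l.foldr rstep rnil

lemma phi_prod (l : List (Fin k)) (s : Red k) :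
    phi ((l.map gen).prod) s = l.foldr rstep s := by
  induction l with
  | nil => simp
  | cons i tl ih =>
    rw [List.map_cons, List.prod_cons, map_mul, Equiv.Perm.mul_apply, ih]
    have : phi (gen (k := k) i) = sigma i := PresentedGroup.toGroup.of hrel
    rw [List.foldr_cons, this]
    rfl

lemma prod_rstep (i : Fin k) (s : Red k) :
    (((rstep i s).1).map gen).prod = gen i * ((s.1.map gen).prod) := by
  obtain ⟨_ | ⟨j, tl⟩, h⟩ := s
  · simp [rstep]
  · by_cases hij : i = j
    · subst hij
      rw [rstep, dif_pos rfl]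
      simp [← mul_assoc, gsq i]
    · rw [rstep, dif_neg hij]
      simp [mul_assoc]

lemma prod_redList (l : List (Fin k)) :
    (l.map gen).prod = (((redList l).1).map gen).prod := by
  induction l with
  | nil => rfl
  | cons i tl ih =>
    rw [List.map_cons, List.prod_cons, ih]
    have : redList (i :: tl) = rstep i (redList tl) := rfl
    rw [this, prod_rstep]

lemma value_eq_one_iff {N : ℕ} (w : Fin N → Fin k) :
    posWordValue gen w = 1 ↔ redList (List.ofFn w) = rnil := by
  have hval : posWordValue gen w = ((List.ofFn w).map gen).prod := by
    rw [posWordValue, List.ofFn_eq_map, List.map_map]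
    rfl
  constructor
  · intro h1
    have := phi_prod (List.ofFn w) rnil
    rw [← hval, h1, map_one] at this
    simp only [Equiv.Perm.one_apply] at this
    rw [redList, ← this]
  · intro h
    rw [hval, prod_redList, h]
    rfl




variable {k : ℕ}

/-- Walk-count recurrence on the `k`-regular tree, by distance `d` from the root. -/
def pc (k : ℕ) : ℕ → ℕ → ℕ
  | 0, d => if d = 0 then 1 else 0
  | (N+1), d => if d = 0 then k * pc k N 1 else pc k N (d-1) + (k-1) * pc k N (d+1)

lemma rstep_eq_iff (i : Fin k) {a b : Red k} : rstep i a = b ↔ a = rstep i b :=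
  (rstep_invol i).eq_iff

lemma redList_ofFn_succ {N : ℕ} (w : Fin (N+1) → Fin k) :
    redList (List.ofFn w) = rstep (w 0) (redList (List.ofFn (fun j => w j.succ))) := by
  rw [List.ofFn_succ]
  rfl

lemma card_red (N : ℕ) (u : Red k) :
    Nat.card {w : Fin N → Fin k // redList (List.ofFn w) = u} = pc k N u.1.length := by
  induction N generalizing u with
  | zero =>
    rcases eq_or_ne u rnil with h | h
    · subst h
      have : ∀ w : Fin 0 → Fin k, redList (List.ofFn w) = rnil := by
        intro w; rfl
      rw [Nat.card_congr (Equiv.subtypeUnivEquiv this)]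
      simp [pc, rnil, Nat.card_eq_fintype_card]
    · have he : IsEmpty {w : Fin 0 → Fin k // redList (List.ofFn w) = u} := by
        refine ⟨fun w => ?_⟩
        exact h w.2.symm
      rw [Nat.card_of_isEmpty]
      have : u.1.length ≠ 0 := by
        intro hl
        exact h (Subtype.ext (List.length_eq_zero_iff.1 hl))
      simp [pc, this]
  | succ N ih =>
    have e : {w : Fin (N+1) → Fin k // redList (List.ofFn w) = u} ≃
        Σ i : Fin k, {w' : Fin N → Fin k // redList (List.ofFn w') = rstep i u} :=
      { toFun := fun w => ⟨w.1 0, ⟨fun j => w.1 j.succ, by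
          have h2 := w.2
          rw [redList_ofFn_succ, rstep_eq_iff] at h2
          exact h2⟩⟩
        invFun := fun p => ⟨Fin.cons p.1 p.2.1, by
          rw [redList_ofFn_succ]
          simp only [Fin.cons_zero, Fin.cons_succ]
          exact (congrArg (rstep p.1) p.2.2).trans (rstep_invol _ _)⟩
        left_inv := fun w => Subtype.ext (Fin.cons_self_tail w.1)
        right_inv := fun p => by
          refine Sigma.ext ?_ ?_
          · rfl
          · simp only [Fin.cons_zero]
            refine heq_of_eq (Subtype.ext (funext fun j => ?_))
            simp }
    rw [Nat.card_congr e]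
    have hfin : ∀ i : Fin k, Nat.card {w' : Fin N → Fin k // redList (List.ofFn w') = rstep i u}
        = pc k N ((rstep i u).1.length) := fun i => ih _
    rw [Nat.card_eq_fintype_card, Fintype.card_sigma]
    have : ∀ i : Fin k, Fintype.card {w' : Fin N → Fin k // redList (List.ofFn w') = rstep i u}
        = pc k N ((rstep i u).1.length) := by
      intro i
      rw [← Nat.card_eq_fintype_card]
      exact hfin i
    rw [Finset.sum_congr rfl (fun i _ => this i)]
    obtain ⟨_ | ⟨j, tl⟩, h⟩ := u
    · have hlen : ∀ i : Fin k, ((rstep i (⟨[], h⟩ : Red k)).1).length = 1 := fun i => rfl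
      rw [Finset.sum_congr rfl (fun i _ => by rw [hlen i])]
      simp [pc, Finset.sum_const, mul_comm]
    · have hlen : ∀ i : Fin k, ((rstep i (⟨j :: tl, h⟩ : Red k)).1).length
          = if i = j then tl.length else tl.length + 2 := by
        intro i
        by_cases hij : i = j
        · rw [rstep, dif_pos hij, if_pos hij]
        · rw [rstep, dif_neg hij, if_neg hij]
          simp
      rw [Finset.sum_congr rfl (fun i _ => by rw [hlen i])]
      rw [← Finset.add_sum_erase Finset.univ _ (Finset.mem_univ j), if_pos rfl]
      have : ∀ i ∈ Finset.univ.erase j,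
          pc k N (if i = j then tl.length else tl.length + 2) = pc k N (tl.length + 2) := by
        intro i hi
        rw [if_neg (Finset.mem_erase.1 hi).1]
      rw [Finset.sum_congr rfl this, Finset.sum_const, Finset.card_erase_of_mem (Finset.mem_univ j)]
      simp only [Finset.card_univ, Fintype.card_fin, smul_eq_mul]
      show pc k N tl.length + (k-1) * pc k N (tl.length + 2) = pc k (N+1) (tl.length + 1)
      rw [pc]
      simp




variable {k : ℕ}

def Aa (t N s : ℕ) : ℕ := ∑ m ∈ Finset.range s, Nat.choose N m * t^m

lemma Aa_zero (t N : ℕ) : Aa t N 0 = 0 := by simp [Aa]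

lemma Aa_succ (t N s : ℕ) : Aa t N (s+1) = Aa t N s + Nat.choose N s * t^s :=
  Finset.sum_range_succ _ _

lemma PA (t N : ℕ) : ∀ r, Aa t (N+1) r = Aa t N r + t * Aa t N (r-1) := by
  intro r
  induction r with
  | zero => simp [Aa]
  | succ r ih =>
    rw [Nat.add_sub_cancel, Aa_succ, ih, Aa_succ]
    cases r with
    | zero => simp [Aa]
    | succ r' =>
      rw [show r' + 1 - 1 = r' from rfl, Aa_succ, Nat.choose_succ_succ]
      ring

lemma pc_vanish : ∀ N d, N < d → pc k N d = 0 := by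
  intro N
  induction N with
  | zero => intro d hd; rw [pc, if_neg (by omega)]
  | succ N ih =>
    intro d hd
    rw [pc, if_neg (by omega)]
    rw [ih (d-1) (by omega), ih (d+1) (by omega)]
    simp

lemma main (t : ℕ) (hk : k = t+1) : ∀ N d s, N + 1 = d + 2*s →
    (pc k (N+1) d : ℤ) = (Aa t N (s+1) : ℤ) - (t:ℤ)^2 * (Aa t N (s-1) : ℤ) := by
  subst hk
  intro N
  induction N with
  | zero =>
    intro d s h
    obtain ⟨rfl, rfl⟩ : d = 1 ∧ s = 0 := by omega
    simp [pc, Aa]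
  | succ N ih =>
    intro d s h
    by_cases hd : d = 0
    · subst hd
      by_cases hs1 : s = 1
      · subst hs1
        obtain rfl : N = 0 := by omega
        have h2 : pc (t+1) 2 0 = t + 1 := by simp [pc]
        rw [h2]
        simp [Aa, Finset.sum_range_succ]
        ring
      · have hs2 : 2 ≤ s := by omega
        have h1 : (pc (t+1) (N+1) 1 : ℤ)
            = (Aa t N s : ℤ) - (t:ℤ)^2 * (Aa t N (s-2) : ℤ) := by
          have h0 := ih 1 (s-1) (by omega)
          rwa [show s - 1 + 1 = s by omega, show s - 1 - 1 = s - 2 by omega] at h0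
        have hpc : pc (t+1) (N+1+1) 0 = (t+1) * pc (t+1) (N+1) 1 := by
          rw [pc, if_pos rfl]
        have key : (Aa t N (s+1) : ℤ) - (t:ℤ)^2 * (Aa t N (s-1) : ℤ)
            = (Aa t N s : ℤ) - (t:ℤ)^2 * (Aa t N (s-2) : ℤ) := by
          have e2 : Aa t N (s-1) = Aa t N (s-2) + Nat.choose N (s-2) * t^(s-2) := by
            rw [show s - 1 = (s-2) + 1 by omega, Aa_succ]
          have hsym : Nat.choose N s = Nat.choose N (s-2) := by
            have h1' : s ≤ N := by omega
            have h2' := Nat.choose_symm h1'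
            rw [show N - s = s - 2 by omega] at h2'
            exact h2'.symm
          have hpow : (t:ℤ)^2 * (t:ℤ)^(s-2) = (t:ℤ)^s := by
            rw [← pow_add]
            congr 1
            omega
          rw [Aa_succ, e2, hsym]
          push_cast
          linear_combination (-(Nat.choose N (s-2) : ℤ)) * hpow
        have pa1 : Aa t (N+1) (s+1) = Aa t N (s+1) + t * Aa t N s := by
          rw [PA t N (s+1), Nat.add_sub_cancel]
        have pa2 : Aa t (N+1) (s-1) = Aa t N (s-1) + t * Aa t N (s-2) := by
          rw [PA t N (s-1), show s - 1 - 1 = s - 2 by omega]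
        rw [hpc]
        push_cast
        rw [h1, pa1, pa2]
        push_cast
        linear_combination ((-1 : ℤ)) * key
    · have hpc : pc (t+1) (N+1+1) d
          = pc (t+1) (N+1) (d-1) + t * pc (t+1) (N+1) (d+1) := by
        rw [pc, if_neg hd, Nat.add_sub_cancel]
      by_cases hs0 : s = 0
      · subst hs0
        obtain rfl : d = N + 2 := by omega
        have h1 := ih (N+1) 0 (by omega)
        have h2 : pc (t+1) (N+1) (N+2+1) = 0 := pc_vanish _ _ (by omega)
        rw [show N + 2 - 1 = N + 1 by omega] at hpc
        rw [hpc, h2]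
        push_cast
        rw [h1]
        rw [show (0:ℕ) - 1 = 0 from rfl, show (0:ℕ) + 1 = 1 from rfl] at *
        rw [PA t N 1]
        simp [Aa_zero]
      · have hs1 : 1 ≤ s := by omega
        have h1 := ih (d-1) s (by omega)
        have h2 := ih (d+1) (s-1) (by omega)
        rw [show s - 1 + 1 = s by omega, show s - 1 - 1 = s - 2 by omega] at h2
        have pa1 : Aa t (N+1) (s+1) = Aa t N (s+1) + t * Aa t N s := by
          rw [PA t N (s+1), Nat.add_sub_cancel]
        have pa2 : Aa t (N+1) (s-1) = Aa t N (s-1) + t * Aa t N (s-2) := by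
          rw [PA t N (s-1), show s - 1 - 1 = s - 2 by omega]
        rw [hpc]
        push_cast
        rw [h1, h2, pa1, pa2]
        push_cast
        ring




/-- auxiliary shifted summand -/
def Hf (n' t : ℕ) : ℕ → ℤ
  | 0 => 0
  | (m+1) => ((n':ℤ) + 1 - m) * (Nat.choose (2*n'+2) m : ℤ) * (t:ℤ)^(m+1)

def H2f (n' t : ℕ) : ℕ → ℤ
  | 0 => 0
  | 1 => 0
  | (m+2) => ((n':ℤ) + 1) * (Nat.choose (2*n'+1) m : ℤ) * (t:ℤ)^(m+2)

lemma final_sum (t n' : ℕ) :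
    ((n':ℤ)+1) * ((Aa t (2*n'+1) (n'+2) : ℤ) - (t:ℤ)^2 * (Aa t (2*n'+1) n' : ℤ))
    = ((t:ℤ)+1) * ∑ m ∈ Finset.range (n'+1),
        (((n':ℤ)+1) - m) * (Nat.choose (2*n'+2) m : ℤ) * (t:ℤ)^m := by
  set T : ℤ := (t:ℤ) with hT
  -- expand casts of Aa
  have hAa : ∀ s : ℕ, ((Aa t (2*n'+1) s : ℕ) : ℤ)
      = ∑ m ∈ Finset.range s, (Nat.choose (2*n'+1) m : ℤ) * T^m := by
    intro s
    rw [Aa]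
    push_cast
    rfl
  rw [hAa, hAa]
  -- LHS as sum of F over range (n'+2)
  have hL : ((n':ℤ)+1) * ((∑ m ∈ Finset.range (n'+2), (Nat.choose (2*n'+1) m : ℤ) * T^m)
        - T^2 * ∑ m ∈ Finset.range n', (Nat.choose (2*n'+1) m : ℤ) * T^m)
      = ∑ m ∈ Finset.range (n'+2),
          (((n':ℤ)+1) * (Nat.choose (2*n'+1) m : ℤ) * T^m - H2f n' t m) := by
    rw [Finset.sum_sub_distrib]
    have h2 : ∑ m ∈ Finset.range (n'+2), H2f n' t m
        = ∑ m ∈ Finset.range n', ((n':ℤ)+1) * (Nat.choose (2*n'+1) m : ℤ) * T^(m+2) := by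
      rw [Finset.sum_range_succ' (H2f n' t) (n'+1),
          Finset.sum_range_succ' (fun x => H2f n' t (x+1)) n']
      simp only [H2f]
      simp [hT]
    rw [h2, mul_sub, Finset.mul_sum, Finset.mul_sum, Finset.mul_sum]
    congr 1
    · exact Finset.sum_congr rfl fun m _ => by ring
    · exact Finset.sum_congr rfl fun m _ => by ring
  rw [hL]
  -- RHS as sum of G over range (n'+2)
  have hR : ((t:ℤ)+1) * ∑ m ∈ Finset.range (n'+1),
        (((n':ℤ)+1) - m) * (Nat.choose (2*n'+2) m : ℤ) * T^m
      = ∑ m ∈ Finset.range (n'+2),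
          ((((n':ℤ)+1) - m) * (Nat.choose (2*n'+2) m : ℤ) * T^m + Hf n' t m) := by
    rw [Finset.sum_add_distrib]
    have hb : ∑ m ∈ Finset.range (n'+2), (((n':ℤ)+1) - m) * (Nat.choose (2*n'+2) m : ℤ) * T^m
        = ∑ m ∈ Finset.range (n'+1), (((n':ℤ)+1) - m) * (Nat.choose (2*n'+2) m : ℤ) * T^m := by
      rw [Finset.sum_range_succ]
      have : (((n':ℤ)+1) - (n'+1 : ℕ)) = 0 := by push_cast; ring
      rw [this]
      ring
    have hh : ∑ m ∈ Finset.range (n'+2), Hf n' t m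
        = ∑ m ∈ Finset.range (n'+1), (((n':ℤ)+1) - m) * (Nat.choose (2*n'+2) m : ℤ) * T^(m+1) := by
      rw [Finset.sum_range_succ' (Hf n' t) (n'+1)]
      simp only [Hf]
      simp [hT]
    rw [hb, hh, Finset.mul_sum]
    rw [← Finset.sum_add_distrib]
    exact Finset.sum_congr rfl fun m _ => by ring
  rw [hR]
  -- per-coefficient identity
  refine Finset.sum_congr rfl fun m hm => ?_
  have hm' : m < n' + 2 := Finset.mem_range.1 hm
  match m, hm' with
  | 0, _ => simp [Hf, H2f]
  | 1, _ =>
    simp only [Hf, H2f]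
    rw [Nat.choose_one_right, Nat.choose_one_right, Nat.choose_zero_right]
    push_cast
    ring
  | (μ+2), hm' =>
    have hμ : μ < n' := by omega
    simp only [Hf, H2f]
    have hb2 : (Nat.choose (2*n'+2) (μ+2) : ℤ)
        = (Nat.choose (2*n'+1) (μ+1) : ℤ) + (Nat.choose (2*n'+1) (μ+2) : ℤ) := by
      rw [show 2*n'+2 = (2*n'+1)+1 by ring, show μ+2 = (μ+1)+1 from rfl,
        Nat.choose_succ_succ]
      push_cast
      ring
    have hb1 : (Nat.choose (2*n'+2) (μ+1) : ℤ)
        = (Nat.choose (2*n'+1) μ : ℤ) + (Nat.choose (2*n'+1) (μ+1) : ℤ) := by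
      rw [show 2*n'+2 = (2*n'+1)+1 by ring, Nat.choose_succ_succ]
      push_cast
      ring
    have habs2 : ((μ:ℤ)+2) * (Nat.choose (2*n'+1) (μ+2) : ℤ)
        = (2*(n':ℤ) - μ) * (Nat.choose (2*n'+1) (μ+1) : ℤ) := by
      have h0 := Nat.choose_succ_right_eq (2*n'+1) (μ+1)
      have h1 := congrArg (Nat.cast : ℕ → ℤ) h0
      push_cast [Nat.cast_sub (show μ+1 ≤ 2*n'+1 by omega),
        Nat.cast_sub (show μ ≤ 2*n' by omega)] at h1
      linear_combination h1
    have habs1 : ((μ:ℤ)+1) * (Nat.choose (2*n'+1) (μ+1) : ℤ)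
        = (2*(n':ℤ) + 1 - μ) * (Nat.choose (2*n'+1) μ : ℤ) := by
      have h0 := Nat.choose_succ_right_eq (2*n'+1) μ
      have h1 := congrArg (Nat.cast : ℕ → ℤ) h0
      push_cast [Nat.cast_sub (show μ ≤ 2*n'+1 by omega)] at h1
      linear_combination h1
    rw [hb2, hb1]
    push_cast
    linear_combination T^(μ+2) * habs2 + T^(μ+2) * habs1



end TreeWalk

open TreeWalk

/-- `n` times the number of positive words of length `2n` over `Fin k` whose value
in `H_k` is the identity equals `k · Σ_{m=0}^{n-1} (n-m)·C(2n,m)·(k-1)^m`. -/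
theorem tree_walk_count (k n : ℕ) (hk : 2 ≤ k) (hn : 1 ≤ n) :
    n * Nat.card {w : Fin (2*n) → Fin k //
        posWordValue (fun i => (PresentedGroup.of i : PresentedGroup (Hrels k))) w = 1}
      = k * ∑ m ∈ Finset.range n, (n - m) * Nat.choose (2*n) m * (k-1)^m := by
  obtain ⟨n', rfl⟩ : ∃ n', n = n' + 1 := ⟨n - 1, by omega⟩
  have hcard : Nat.card {w : Fin (2*(n'+1)) → Fin k //
      posWordValue (fun i => (PresentedGroup.of i : PresentedGroup (Hrels k))) w = 1}
      = pc k (2*(n'+1)) 0 := by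
    have h0 : ∀ w : Fin (2*(n'+1)) → Fin k,
        posWordValue (fun i => (PresentedGroup.of i : PresentedGroup (Hrels k))) w = 1
        ↔ redList (List.ofFn w) = rnil := fun w => value_eq_one_iff w
    rw [Nat.card_congr (Equiv.subtypeEquivRight h0)]
    have h1 := card_red (k := k) (2*(n'+1)) rnil
    simpa [rnil] using h1
  rw [hcard]
  apply @Nat.cast_injective ℤ _ _
  push_cast
  have hmain := main (k := k) (k-1) (by omega) (2*n'+1) 0 (n'+1) (by omega)
  rw [show 2*n'+1+1 = 2*(n'+1) by ring, Nat.add_sub_cancel] at hmain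
  rw [hmain]
  have hfs := final_sum (k-1) n'
  rw [hfs]
  have hk1 : ((k-1 : ℕ) : ℤ) + 1 = (k : ℤ) := by
    push_cast [Nat.cast_sub (show 1 ≤ k by omega)]
    ring
  rw [hk1]
  congr 1
  refine Finset.sum_congr rfl fun m hm => ?_
  have hm' : m ≤ n' := by
    have := Finset.mem_range.1 hm
    omega
  rw [Nat.cast_sub (show m ≤ n' + 1 by omega)]
  rw [show 2*(n'+1) = 2*n'+2 by ring]
  push_cast
  ring
end

section
/- In the group G(2,2) = ⟨a,b ∣ a² = b²⟩, for every natural number n, the number of words of length 2n in the generators a, b and their inverses whose value is the identity equals binom(2n, n)². -/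
/-- The single relator `a² · (b²)⁻¹` presenting `G(2,2) = ⟨a,b ∣ a² = b²⟩`. -/
def rels22 : Set (FreeGroup (Fin 2)) :=
  {FreeGroup.of 0 ^ 2 * (FreeGroup.of 1 ^ 2)⁻¹}


/-- The Klein bottle group `ℤ ⋊ ℤ` as a concrete group on `ℤ × ℤ`. -/
def KG := ℤ × ℤ

namespace KG

def eps (k : ℤ) : ℤ := (Int.negOnePow k : ℤˣ)

lemma eps_add (k l : ℤ) : eps (k + l) = eps k * eps l := by
  simp [eps, Int.negOnePow_add]

lemma eps_neg (k : ℤ) : eps (-k) = eps k := by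
  simp [eps, Int.negOnePow_neg]

lemma eps_zero : eps 0 = 1 := by simp [eps]

lemma eps_odd {k : ℤ} (h : Odd k) : eps k = -1 := by
  simp [eps, Int.negOnePow_odd _ h]

instance : Mul KG := ⟨fun x y => (x.1 + eps x.2 * y.1, x.2 + y.2)⟩
instance : One KG := ⟨((0 : ℤ), (0 : ℤ))⟩
instance : Inv KG := ⟨fun x => (-(eps x.2 * x.1), -x.2)⟩

lemma mul_def (x y : KG) : x * y = (x.1 + eps x.2 * y.1, x.2 + y.2) := rfl
lemma one_def : (1 : KG) = ((0:ℤ), (0:ℤ)) := rfl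
lemma inv_def (x : KG) : x⁻¹ = (-(eps x.2 * x.1), -x.2) := rfl

instance : Group KG where
  mul_assoc x y z := by
    rw [mul_def, mul_def, mul_def, mul_def, eps_add]
    exact Prod.ext (by dsimp only; ring) (by dsimp only; ring)
  one_mul x := by
    rw [mul_def, one_def]; simp [eps_zero]; rfl
  mul_one x := by
    rw [mul_def, one_def]; simp; rfl
  inv_mul_cancel x := by
    rw [mul_def, inv_def, one_def, eps_neg]
    exact Prod.ext (by dsimp; ring) (by dsimp; ring)

def aK : KG := ((0:ℤ), (1:ℤ))
def bK : KG := ((1:ℤ), (1:ℤ))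

def gens : Fin 2 → KG := fun i => if i = 0 then aK else bK

lemma sq_aK : aK ^ 2 = ((0:ℤ), (2:ℤ)) := by
  change (aK ^ 2 : KG) = _
  rw [sq, mul_def]
  simp [aK, eps_odd odd_one]; rfl

lemma sq_bK : bK ^ 2 = ((0:ℤ), (2:ℤ)) := by
  change (bK ^ 2 : KG) = _
  rw [sq, mul_def]
  simp [bK, eps_odd odd_one]; rfl

end KG

lemma rels_hold : ∀ r ∈ rels22, FreeGroup.lift KG.gens r = 1 := by
  intro r hr
  rcases hr with rfl
  simp only [map_mul, map_pow, map_inv, FreeGroup.lift_apply_of]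
  have h0 : KG.gens 0 = KG.aK := rfl
  have h1 : KG.gens 1 = KG.bK := rfl
  rw [h0, h1]; erw [KG.sq_aK]
  exact mul_inv_cancel (G := KG) _

/-- The canonical homomorphism from the presented group to KG. -/
noncomputable def rho : PresentedGroup rels22 →* KG :=
  PresentedGroup.toGroup rels_hold

namespace G22

abbrev G := PresentedGroup rels22

noncomputable def aG : G := PresentedGroup.of 0
noncomputable def bG : G := PresentedGroup.of 1

lemma sq_eq : aG ^ 2 = bG ^ 2 := by
  have hmem : (FreeGroup.of 0 ^ 2 * (FreeGroup.of 1 ^ 2)⁻¹ : FreeGroup (Fin 2)) ∈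
      Subgroup.normalClosure rels22 :=
    Subgroup.subset_normalClosure rfl
  have h1 : (PresentedGroup.mk rels22 (FreeGroup.of 0 ^ 2 * (FreeGroup.of 1 ^ 2)⁻¹)) = 1 :=
    (QuotientGroup.eq_one_iff _).mpr hmem
  have := h1
  rw [map_mul, map_inv, map_pow, map_pow] at this
  have h2 : (PresentedGroup.mk rels22 (FreeGroup.of 0) : G) = aG := rfl
  have h3 : (PresentedGroup.mk rels22 (FreeGroup.of 1) : G) = bG := rfl
  rw [h2, h3, mul_inv_eq_one] at this
  exact this

noncomputable def tG : G := bG * aG⁻¹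

lemma conj_t : aG * tG * aG⁻¹ = tG⁻¹ := by
  have : aG * (bG * aG⁻¹) * aG⁻¹ = aG * bG * (aG ^ 2)⁻¹ := by group
  rw [tG, mul_inv_rev, inv_inv, this, sq_eq]
  group

end G22

namespace G22

lemma conj_t_inv : aG⁻¹ * tG * aG = tG⁻¹ := by
  have h : aG⁻¹ * tG⁻¹ * aG = tG := by rw [← conj_t]; group
  calc aG⁻¹ * tG * aG = (aG⁻¹ * tG⁻¹ * aG)⁻¹ := by group
    _ = tG⁻¹ := by rw [h]

lemma eps_succ (k : ℤ) : KG.eps (k + 1) = -KG.eps k := by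
  rw [KG.eps_add]
  have : KG.eps 1 = -1 := KG.eps_odd odd_one
  rw [this]; ring

lemma eps_pred (k : ℤ) : KG.eps (k - 1) = -KG.eps k := by
  have h := eps_succ (k - 1)
  simp only [sub_add_cancel] at h
  linarith

lemma conj_a_t_zpow (m : ℤ) : aG * tG ^ m * aG⁻¹ = tG ^ (-m) := by
  rw [← conj_zpow, conj_t, inv_zpow, zpow_neg]

lemma conj_ainv_t_zpow (m : ℤ) : aG⁻¹ * tG ^ m * aG = tG ^ (-m) := by
  have h := @conj_zpow G _ m aG⁻¹ tG
  rw [inv_inv, conj_t_inv] at h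
  rw [← h, inv_zpow, zpow_neg]

lemma conj_t_zpow (k m : ℤ) : aG ^ k * tG ^ m * aG ^ (-k) = tG ^ (KG.eps k * m) := by
  induction k using Int.induction_on with
  | zero => simp [KG.eps_zero]
  | succ i ih =>
    have h1 : aG ^ ((i : ℤ) + 1) * tG ^ m * aG ^ (-((i : ℤ) + 1))
        = aG * (aG ^ (i : ℤ) * tG ^ m * aG ^ (-(i : ℤ))) * aG⁻¹ := by
      group
    rw [h1, ih, conj_a_t_zpow, eps_succ]
    ring_nf
  | pred i ih =>
    have h1 : aG ^ (-(i : ℤ) - 1) * tG ^ m * aG ^ (-(-(i : ℤ) - 1))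
        = aG⁻¹ * (aG ^ (-(i : ℤ)) * tG ^ m * aG ^ (-(-(i : ℤ)))) * aG := by
      group
    rw [h1, ih, conj_ainv_t_zpow, eps_pred]
    ring_nf

end G22

namespace G22

noncomputable def psi : KG →* G :=
  MonoidHom.mk' (fun x => tG ^ x.1 * aG ^ x.2) (by
    intro x y
    show tG ^ (x.1 + KG.eps x.2 * y.1) * aG ^ (x.2 + y.2)
        = (tG ^ x.1 * aG ^ x.2) * (tG ^ y.1 * aG ^ y.2)
    have key : aG ^ x.2 * tG ^ y.1 = tG ^ (KG.eps x.2 * y.1) * aG ^ x.2 := by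
      have h := conj_t_zpow x.2 y.1
      calc aG ^ x.2 * tG ^ y.1
          = (aG ^ x.2 * tG ^ y.1 * aG ^ (-x.2)) * aG ^ x.2 := by group
        _ = tG ^ (KG.eps x.2 * y.1) * aG ^ x.2 := by rw [h]
    calc tG ^ (x.1 + KG.eps x.2 * y.1) * aG ^ (x.2 + y.2)
        = tG ^ x.1 * (tG ^ (KG.eps x.2 * y.1) * aG ^ x.2) * aG ^ y.2 := by
          rw [zpow_add, zpow_add]; group
      _ = tG ^ x.1 * (aG ^ x.2 * tG ^ y.1) * aG ^ y.2 := by rw [key]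
      _ = (tG ^ x.1 * aG ^ x.2) * (tG ^ y.1 * aG ^ y.2) := by group)

lemma psi_rho : ∀ x : G, psi (rho x) = x := by
  have h : (psi.comp rho) = MonoidHom.id G := by
    apply PresentedGroup.ext
    intro x
    fin_cases x
    · show psi (rho (PresentedGroup.of 0)) = PresentedGroup.of 0
      rw [rho, PresentedGroup.toGroup.of]
      show psi KG.aK = _
      show tG ^ (0:ℤ) * aG ^ (1:ℤ) = _
      simp [aG]
    · show psi (rho (PresentedGroup.of 1)) = PresentedGroup.of 1
      rw [rho, PresentedGroup.toGroup.of]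
      show psi KG.bK = _
      show tG ^ (1:ℤ) * aG ^ (1:ℤ) = _
      simp only [zpow_one, tG, bG, aG]
      group
  intro x
  exact DFunLike.congr_fun h x

lemma rho_injective : Function.Injective rho :=
  Function.LeftInverse.injective psi_rho

end G22

lemma wordValue_hom {G H : Type*} [Group G] [Group H] (φ : G →* H) {k : ℕ}
    (g : Fin k → G) {n : ℕ} (w : Fin n → Fin k × Bool) :
    φ (wordValue g w) = wordValue (fun i => φ (g i)) w := by
  unfold wordValue
  rw [← List.prod_hom _ φ, List.map_map]
  congr 1
  apply List.map_congr_left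
  intro j _
  by_cases h : (w j).2 <;> simp [h]

namespace KG

lemma prod_formula : ∀ (m : ℕ) (f : Fin m → KG), (∀ j, Odd (f j).2) →
    ((List.finRange m).map f).prod
      = ((∑ j : Fin m, (-1:ℤ)^(j:ℕ) * (f j).1, ∑ j : Fin m, (f j).2) : ℤ × ℤ) := by
  intro m
  induction m with
  | zero => intro f _; simp [one_def]; rfl
  | succ m ih =>
    intro f hf
    rw [List.finRange_succ, List.map_cons, List.map_map, List.prod_cons,
      ih (f ∘ Fin.succ) (fun j => hf j.succ)]
    erw [mul_def]
    have he : eps (f 0).2 = -1 := eps_odd (hf 0)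
    rw [he]
    refine Prod.ext ?_ ?_
    · show (f 0).1 + -1 * ∑ j : Fin m, (-1:ℤ)^(j:ℕ) * ((f ∘ Fin.succ) j).1
        = ∑ j : Fin (m+1), (-1:ℤ)^(j:ℕ) * (f j).1
      rw [Fin.sum_univ_succ]
      simp only [Fin.val_zero, pow_zero, one_mul, Fin.val_succ, Function.comp_apply,
        pow_succ, Finset.mul_sum, Finset.sum_mul]
      ring_nf
    · show (f 0).2 + ∑ j : Fin m, ((f ∘ Fin.succ) j).2 = ∑ j : Fin (m+1), (f j).2
      rw [Fin.sum_univ_succ]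
      rfl

end KG

namespace KG

def cfn (i : Fin 2) : ℤ := if i = 0 then 0 else 1
def sfn (b : Bool) : ℤ := if b then 1 else -1

lemma letter_eq (i : Fin 2) (b : Bool) :
    (if b then gens i else (gens i)⁻¹) = ((cfn i, sfn b) : ℤ × ℤ) := by
  have hOdd : eps 1 = -1 := eps_odd odd_one
  fin_cases i <;> cases b <;>
    simp [gens, aK, bK, cfn, sfn, inv_def, hOdd] <;> rfl

lemma letter_snd_odd (i : Fin 2) (b : Bool) : Odd (sfn b) := by
  cases b <;> simp [sfn] <;> decide

lemma wordValue_eq {m : ℕ} (w : Fin m → Fin 2 × Bool) :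
    wordValue gens w
      = ((∑ j : Fin m, (-1:ℤ)^(j:ℕ) * cfn (w j).1, ∑ j : Fin m, sfn (w j).2) : ℤ × ℤ) := by
  unfold wordValue
  have hfun : (fun j => if (w j).2 then gens (w j).1 else (gens (w j).1)⁻¹)
      = fun j : Fin m => (((cfn (w j).1, sfn (w j).2)) : ℤ × ℤ) := by
    funext j
    exact letter_eq (w j).1 (w j).2
  rw [hfun]; exact prod_formula m _ (fun j => letter_snd_odd (w j).1 (w j).2)

lemma wordValue_eq_one_iff {m : ℕ} (w : Fin m → Fin 2 × Bool) :
    wordValue gens w = 1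
      ↔ (∑ j : Fin m, (-1:ℤ)^(j:ℕ) * cfn (w j).1 = 0 ∧ ∑ j : Fin m, sfn (w j).2 = 0) := by
  rw [wordValue_eq, one_def]; exact Prod.ext_iff

end KG

section Counting

/-- Bool-valued functions with a given number of `true`s are counted by `choose`. -/
lemma countBool (m k : ℕ) :
    Nat.card {g : Fin m → Bool // (Finset.univ.filter (fun j => g j = true)).card = k}
      = Nat.choose m k := by
  have e2 : {g : Fin m → Bool // (Finset.univ.filter (fun j => g j = true)).card = k}
      ≃ {s : Finset (Fin m) // s.card = k} := by
    refine Equiv.subtypeEquiv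
      ⟨fun g => Finset.univ.filter (fun j => g j = true),
       fun s => fun j => decide (j ∈ s),
       by intro g; funext j; simp,
       by intro s; ext j; simp⟩ ?_
    intro g
    exact Iff.rfl
  rw [Nat.card_congr e2, Nat.card_eq_fintype_card, Fintype.card_finset_len,
    Fintype.card_fin]

def ePoint (b : Bool) : Fin 2 ≃ Bool where
  toFun i := xor (decide (i = 1)) b
  invFun c := if xor c b then 1 else 0
  left_inv i := by fin_cases i <;> cases b <;> rfl
  right_inv c := by cases c <;> cases b <;> rfl

lemma odd_count (n : ℕ) :
    ∑ j : Fin (2*n), (if (j:ℕ) % 2 = 1 then (1:ℤ) else 0) = n := by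
  induction n with
  | zero => simp
  | succ n ih =>
    show ∑ j : Fin (2*n+1+1), (if (j:ℕ) % 2 = 1 then (1:ℤ) else 0) = (n+1 : ℕ)
    rw [Fin.sum_univ_castSucc, Fin.sum_univ_castSucc]
    have h1 : ((Fin.last (2*n+1) : Fin (2*n+1+1)) : ℕ) % 2 = 1 := by
      simp only [Fin.val_last]
      omega
    have h2 : (((Fin.last (2*n)).castSucc : Fin (2*n+1+1)) : ℕ) % 2 = 0 := by
      simp [Fin.last]
    have h3 : ∑ j : Fin (2*n), (if ((j.castSucc.castSucc : Fin (2*n+1+1)) : ℕ) % 2 = 1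
        then (1:ℤ) else 0) = ∑ j : Fin (2*n), (if (j:ℕ) % 2 = 1 then (1:ℤ) else 0) := by
      apply Finset.sum_congr rfl
      intro j _
      rfl
    rw [h3, ih, h1, h2]
    push_cast
    simp

end Counting

section Counting2

lemma countSigns (n : ℕ) :
    Nat.card {g : Fin (2*n) → Bool // ∑ j : Fin (2*n), KG.sfn (g j) = 0}
      = Nat.choose (2*n) n := by
  have key : ∀ g : Fin (2*n) → Bool,
      (∑ j : Fin (2*n), KG.sfn (g j) = 0)
        ↔ (Finset.univ.filter (fun j => g j = true)).card = n := by
    intro g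
    have h1 : ∑ j : Fin (2*n), KG.sfn (g j)
        = 2 * (∑ j : Fin (2*n), (if g j = true then (1:ℤ) else 0)) - 2*n := by
      rw [Finset.mul_sum]
      rw [show (2*(n:ℤ)) = ∑ _j : Fin (2*n), (1:ℤ) by
        rw [Finset.sum_const, Finset.card_univ, Fintype.card_fin, nsmul_eq_mul]
        push_cast; ring]
      rw [← Finset.sum_sub_distrib]
      apply Finset.sum_congr rfl
      intro j _
      cases hj : g j <;> simp [KG.sfn, hj]
    rw [h1, Finset.sum_boole]
    constructor
    · intro h
      have := sub_eq_zero.mp h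
      have h2 : ((Finset.univ.filter (fun j => g j = true)).card : ℤ) = n := by linarith
      exact_mod_cast h2
    · intro h
      rw [h]
      ring
  rw [Nat.card_congr (Equiv.subtypeEquiv
    (q := fun g => (Finset.univ.filter (fun j => g j = true)).card = n)
    (Equiv.refl _) (fun g => key g))]
  exact countBool (2*n) n

lemma term_letters (j : ℕ) (i : Fin 2) :
    (-1:ℤ)^j * KG.cfn i
      = (if xor (decide (i = 1)) (decide (j % 2 = 1)) = true then (1:ℤ) else 0)
        - (if j % 2 = 1 then (1:ℤ) else 0) := by
  rcases Nat.even_or_odd j with he | ho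
  · have h1 : (-1:ℤ)^j = 1 := he.neg_one_pow
    have h2 : j % 2 = 0 := Nat.even_iff.mp he
    fin_cases i <;> simp [KG.cfn, h1, h2]
  · have h1 : (-1:ℤ)^j = -1 := ho.neg_one_pow
    have h2 : j % 2 = 1 := Nat.odd_iff.mp ho
    fin_cases i <;> simp [KG.cfn, h1, h2]

lemma countLetters (n : ℕ) :
    Nat.card {f : Fin (2*n) → Fin 2 // ∑ j : Fin (2*n), (-1:ℤ)^(j:ℕ) * KG.cfn (f j) = 0}
      = Nat.choose (2*n) n := by
  set E : (Fin (2*n) → Fin 2) ≃ (Fin (2*n) → Bool) :=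
    Equiv.piCongrRight (fun j => ePoint (decide ((j:ℕ) % 2 = 1))) with hE
  have key : ∀ f : Fin (2*n) → Fin 2,
      (∑ j : Fin (2*n), (-1:ℤ)^(j:ℕ) * KG.cfn (f j) = 0)
        ↔ (Finset.univ.filter (fun j => E f j = true)).card = n := by
    intro f
    have hEapp : ∀ j : Fin (2*n), E f j = xor (decide (f j = 1)) (decide ((j:ℕ) % 2 = 1)) := by
      intro j; rfl
    have h1 : ∑ j : Fin (2*n), (-1:ℤ)^(j:ℕ) * KG.cfn (f j)
        = (∑ j : Fin (2*n), (if E f j = true then (1:ℤ) else 0))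
          - (∑ j : Fin (2*n), (if (j:ℕ) % 2 = 1 then (1:ℤ) else 0)) := by
      rw [← Finset.sum_sub_distrib]
      apply Finset.sum_congr rfl
      intro j _
      rw [hEapp j]
      exact term_letters (j:ℕ) (f j)
    rw [h1, odd_count, Finset.sum_boole]
    constructor
    · intro h
      have h2 : ((Finset.univ.filter (fun j => E f j = true)).card : ℤ) = n := by linarith
      exact_mod_cast h2
    · intro h
      rw [h]
      ring
  rw [Nat.card_congr (Equiv.subtypeEquiv
    (q := fun g => (Finset.univ.filter (fun j => g j = true)).card = n)
    E (fun f => key f))]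
  exact countBool (2*n) n

end Counting2

lemma split_count {m : ℕ} (P : (Fin m → Fin 2) → Prop) (Q : (Fin m → Bool) → Prop) :
    Nat.card {w : Fin m → Fin 2 × Bool // P (fun j => (w j).1) ∧ Q (fun j => (w j).2)}
      = Nat.card {f // P f} * Nat.card {g // Q g} := by
  have e1 : {w : Fin m → Fin 2 × Bool // P (fun j => (w j).1) ∧ Q (fun j => (w j).2)}
      ≃ {p : (Fin m → Fin 2) × (Fin m → Bool) // P p.1 ∧ Q p.2} :=
    Equiv.subtypeEquiv (q := fun p => P p.1 ∧ Q p.2)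
      (Equiv.arrowProdEquivProdArrow (Fin m) (fun _ => Fin 2) (fun _ => Bool)) (fun w => Iff.rfl)
  rw [Nat.card_congr e1, Nat.card_congr (Equiv.subtypeProdEquivProd), Nat.card_prod]

namespace G22

lemma rho_of (i : Fin 2) : rho (PresentedGroup.of i) = KG.gens i :=
  PresentedGroup.toGroup.of rels_hold

lemma value_iff {m : ℕ} (w : Fin m → Fin 2 × Bool) :
    wordValue (fun i => (PresentedGroup.of i : G)) w = 1
      ↔ (∑ j : Fin m, (-1:ℤ)^(j:ℕ) * KG.cfn (w j).1 = 0
          ∧ ∑ j : Fin m, KG.sfn (w j).2 = 0) := by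
  have hcomm : rho (wordValue (fun i => (PresentedGroup.of i : G)) w)
      = wordValue KG.gens w := by
    rw [wordValue_hom rho _ w]
    congr 1
    funext i
    exact rho_of i
  rw [← KG.wordValue_eq_one_iff]
  constructor
  · intro h
    rw [← hcomm, h, map_one]
  · intro h
    apply rho_injective
    rw [hcomm, h, map_one]

theorem cogrowth (n : ℕ) :
    Nat.card {w : Fin (2*n) → Fin 2 × Bool //
        wordValue (fun i => (PresentedGroup.of i : G)) w = 1}
      = (Nat.choose (2*n) n)^2 := by
  calc Nat.card {w : Fin (2*n) → Fin 2 × Bool //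
        wordValue (fun i => (PresentedGroup.of i : G)) w = 1}
      = Nat.card {w : Fin (2*n) → Fin 2 × Bool //
          (fun f : Fin (2*n) → Fin 2 => ∑ j : Fin (2*n), (-1:ℤ)^(j:ℕ) * KG.cfn (f j) = 0)
            (fun j => (w j).1)
          ∧ (fun g : Fin (2*n) → Bool => ∑ j : Fin (2*n), KG.sfn (g j) = 0)
            (fun j => (w j).2)} := by
        exact Nat.card_congr (Equiv.subtypeEquiv (Equiv.refl _) (fun w => value_iff w))
    _ = Nat.card {f : Fin (2*n) → Fin 2 //
            ∑ j : Fin (2*n), (-1:ℤ)^(j:ℕ) * KG.cfn (f j) = 0}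
        * Nat.card {g : Fin (2*n) → Bool // ∑ j : Fin (2*n), KG.sfn (g j) = 0} :=
        split_count (fun f : Fin (2*n) → Fin 2 => ∑ j : Fin (2*n), (-1:ℤ)^(j:ℕ) * KG.cfn (f j) = 0)
          (fun g : Fin (2*n) → Bool => ∑ j : Fin (2*n), KG.sfn (g j) = 0)
    _ = (Nat.choose (2*n) n) * (Nat.choose (2*n) n) := by
        rw [countLetters, countSigns]
    _ = (Nat.choose (2*n) n)^2 := (sq _).symm

end G22

/-- In `G(2,2) = ⟨a,b ∣ a² = b²⟩`, the number of words of length `2n` in the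
generators and their inverses whose value is the identity equals `C(2n,n)²`. -/
theorem cogrowth_G22 (n : ℕ) :
    cogrowthCount (fun i => (PresentedGroup.of i : PresentedGroup rels22)) (2*n)
      = (Nat.choose (2*n) n)^2 := by
  exact G22.cogrowth n
end

section
/- Let k ≥ 3 be an integer and let G = G(2,…,2) = ⟨a_1,…,a_k ∣ a_1² = ⋯ = a_k²⟩ with cogrowth counts ψ. Then for every integer n ≥ 1, n · ψ(2n) = k · binom(2n, n) · Σ_{m=0}^{n−1} (n−m) · binom(2n, m) · (k−1)^m. -/
namespace CG

variable {k : ℕ}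

def push (i : Fin k) : List (Fin k) → List (Fin k)
  | [] => [i]
  | j :: t => if j = i then t else i :: j :: t

def stk : List (Fin k) → List (Fin k) := List.foldr push []

@[simp] lemma stk_nil : stk ([] : List (Fin k)) = [] := rfl
@[simp] lemma stk_cons (i : Fin k) (m : List (Fin k)) : stk (i :: m) = push i (stk m) := rfl

lemma push_chain {i : Fin k} : ∀ {l : List (Fin k)}, l.Chain' (· ≠ ·) → (push i l).Chain' (· ≠ ·)
  | [], _ => by simp [push]; exact List.isChain_singleton _
  | j :: t, h => by
    by_cases hj : j = i
    · simp [push, hj]; exact h.tail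
    · simp [push, hj]; exact List.isChain_cons_cons.mpr ⟨Ne.symm hj, h⟩

lemma push_push {i : Fin k} : ∀ {l : List (Fin k)}, l.Chain' (· ≠ ·) → push i (push i l) = l
  | [], _ => by simp [push]
  | j :: t, h => by
    by_cases hj : j = i
    · subst hj
      cases t with
      | nil => simp [push]
      | cons x t' =>
        have hx : j ≠ x := (List.isChain_cons_cons.mp h).1
        simp [push, hx, Ne.symm hx]
    · simp [push, hj]

lemma stk_chain (m : List (Fin k)) : (stk m).Chain' (· ≠ ·) := by
  induction m with
  | nil => exact List.isChain_nil
  | cons i m ih => exact push_chain ih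

def pops : List (Fin k) → ℕ
  | [] => 0
  | i :: m => pops m + (if (stk m).head? = some i then 1 else 0)

lemma length_stk (m : List (Fin k)) : m.length = (stk m).length + 2 * pops m := by
  induction m with
  | nil => rfl
  | cons i m ih =>
    rcases hs : stk m with _ | ⟨j, t⟩
    · simp [pops, hs, push] at ih ⊢; omega
    · by_cases hj : j = i
      · simp [pops, hs, push, hj] at ih ⊢; omega
      · simp [pops, hs, push, hj] at ih ⊢; omega

/-! ### the permutation representation -/

def Red (k : ℕ) := {l : List (Fin k) // l.Chain' (· ≠ ·)}

def pushE (i : Fin k) : Equiv.Perm (Red k) where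
  toFun s := ⟨push i s.1, push_chain s.2⟩
  invFun s := ⟨push i s.1, push_chain s.2⟩
  left_inv s := Subtype.ext (push_push s.2)
  right_inv s := Subtype.ext (push_push s.2)

lemma pushE_sq (i : Fin k) : pushE i * pushE i = 1 :=
  Equiv.ext fun s => Subtype.ext (push_push s.2)

lemma pushE_inv (i : Fin k) : (pushE i)⁻¹ = pushE i :=
  inv_eq_of_mul_eq_one_right (pushE_sq i)

variable (i₀ : Fin k)

local notation "R2" => Grels (fun _ : Fin k => 2) i₀
local notation "Γ" => PresentedGroup (Grels (fun _ : Fin k => 2) i₀)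

def a (i : Fin k) : Γ := PresentedGroup.of i

lemma a_sq (i : Fin k) : a i₀ i ^ 2 = a i₀ i₀ ^ 2 := by
  have h : PresentedGroup.mk R2 (FreeGroup.of i ^ 2 * (FreeGroup.of i₀ ^ 2)⁻¹) = 1 := by
    have : FreeGroup.of i ^ 2 * (FreeGroup.of i₀ ^ 2)⁻¹ ∈ Subgroup.normalClosure R2 :=
      Subgroup.subset_normalClosure ⟨i, rfl⟩
    exact (QuotientGroup.eq_one_iff _).mpr this
  rw [map_mul, map_inv, map_pow, map_pow] at h
  have := mul_inv_eq_one.mp h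
  exact this

def phi : Γ →* Multiplicative ℤ :=
  PresentedGroup.toGroup (f := fun _ : Fin k => Multiplicative.ofAdd 1) (by
    rintro r ⟨i, rfl⟩
    simp)

@[simp] lemma phi_a (i : Fin k) : phi i₀ (a i₀ i) = Multiplicative.ofAdd 1 :=
  PresentedGroup.toGroup.of _

def rho : Γ →* Equiv.Perm (Red k) :=
  PresentedGroup.toGroup (f := pushE) (by
    rintro r ⟨i, rfl⟩
    rw [map_mul, map_inv, map_pow, map_pow, FreeGroup.lift_apply_of, FreeGroup.lift_apply_of,
      pow_two, pow_two, pushE_sq, pushE_sq]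
    simp)

@[simp] lemma rho_a (i : Fin k) : rho i₀ (a i₀ i) = pushE i :=
  PresentedGroup.toGroup.of _

/-! ### evaluation of words -/

def gen {Γ' : Type*} [Group Γ'] (g : Fin k → Γ') (p : Fin k × Bool) : Γ' :=
  if p.2 then g p.1 else (g p.1)⁻¹

def evalL {Γ' : Type*} [Group Γ'] (g : Fin k → Γ') (l : List (Fin k × Bool)) : Γ' :=
  (l.map (gen g)).prod

@[simp] lemma evalL_nil {Γ' : Type*} [Group Γ'] (g : Fin k → Γ') : evalL g [] = 1 := rfl
@[simp] lemma evalL_cons {Γ' : Type*} [Group Γ'] (g : Fin k → Γ') (p l) :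
    evalL g (p :: l) = gen g p * evalL g l := by simp [evalL]

lemma rho_evalL (l : List (Fin k × Bool)) (s : Red k) :
    (rho i₀ (evalL (a i₀) l) s).1 = List.foldr push s.1 (l.map Prod.fst) := by
  induction l with
  | nil => simp
  | cons p l ih =>
    rw [evalL_cons, map_mul, Equiv.Perm.mul_apply]
    have hg : rho i₀ (gen (a i₀) p) = pushE p.1 := by
      unfold gen
      rcases p with ⟨i, b⟩
      cases b
      · rw [if_neg (by simp), map_inv, rho_a, pushE_inv]
      · rw [if_pos rfl, rho_a]
    rw [hg]
    show push p.1 (rho i₀ (evalL (a i₀) l) s).1 = _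
    rw [ih]
    simp

def sgnsum (l : List (Fin k × Bool)) : ℤ := (l.map (fun p => if p.2 then (1:ℤ) else -1)).sum

lemma phi_evalL (l : List (Fin k × Bool)) :
    phi i₀ (evalL (a i₀) l) = Multiplicative.ofAdd (sgnsum l) := by
  induction l with
  | nil => simp [sgnsum]
  | cons p l ih =>
    rw [evalL_cons, map_mul, ih]
    have hg : phi i₀ (gen (a i₀) p) = Multiplicative.ofAdd (if p.2 then (1:ℤ) else -1) := by
      unfold gen
      rcases p with ⟨i, b⟩
      cases b
      · rw [if_neg (by simp), map_inv, phi_a]; rfl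
      · rw [if_pos rfl, phi_a]; rfl
    have hss : sgnsum (p :: l) = (if p.2 then (1:ℤ) else -1) + sgnsum l := by simp [sgnsum]
    rw [hg, hss, ofAdd_add]

/-! ### the central element z -/

def Pw (m : List (Fin k)) : Γ := (m.map (a i₀)).prod

@[simp] lemma Pw_nil : Pw i₀ [] = 1 := rfl
@[simp] lemma Pw_cons (i m) : Pw i₀ (i :: m) = a i₀ i * Pw i₀ m := by simp [Pw]

lemma commute_z_a (i : Fin k) : Commute (a i₀ i₀ ^ 2) (a i₀ i) := by
  rw [← a_sq i₀ i]
  exact (Commute.refl (a i₀ i)).pow_left 2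

lemma commute_z_Pw (m : List (Fin k)) : Commute (a i₀ i₀ ^ 2) (Pw i₀ m) := by
  induction m with
  | nil => simpa using Commute.one_right _
  | cons i m ih => rw [Pw_cons]; exact (commute_z_a i₀ i).mul_right ih

lemma Pw_stk (m : List (Fin k)) : Pw i₀ m = Pw i₀ (stk m) * (a i₀ i₀ ^ 2) ^ (pops m) := by
  induction m with
  | nil => simp [pops]
  | cons i m ih =>
    rw [Pw_cons, ih]
    rcases hs : stk m with _ | ⟨j, t⟩
    · simp [pops, hs, push, mul_assoc]
    · by_cases hj : j = i
      · subst hj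
        simp only [stk_cons, hs, push, if_pos rfl, pops, List.head?_cons, Option.some.injEq]
        rw [Pw_cons, ← mul_assoc, ← mul_assoc, ← pow_two, a_sq, (commute_z_Pw i₀ t).eq,
          mul_assoc, ← pow_succ']
        simp
      · simp only [stk_cons, hs, push, if_neg hj, pops, List.head?_cons, Option.some.injEq,
          add_zero]
        simp [Pw_cons, mul_assoc, hj]

lemma commute_z_evalL (l : List (Fin k × Bool)) : Commute (a i₀ i₀ ^ 2) (evalL (a i₀) l) := by
  induction l with
  | nil => simpa using Commute.one_right _
  | cons p l ih =>
    rw [evalL_cons]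
    refine Commute.mul_right ?_ ih
    unfold gen
    rcases p with ⟨i, b⟩
    cases b
    · exact (commute_z_a i₀ i).inv_right
    · exact commute_z_a i₀ i

def cf (l : List (Fin k × Bool)) : ℕ := l.countP (fun p => !p.2)
def ct (l : List (Fin k × Bool)) : ℕ := l.countP (fun p => p.2)

lemma evalL_mul_z (l : List (Fin k × Bool)) :
    evalL (a i₀) l * (a i₀ i₀ ^ 2) ^ (cf l) = Pw i₀ (l.map Prod.fst) := by
  induction l with
  | nil => simp [cf]
  | cons p l ih =>
    rcases p with ⟨i, b⟩
    cases b
    · have hcf : cf (⟨i, false⟩ :: l) = cf l + 1 := by simp [cf, List.countP_cons]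
      rw [hcf, evalL_cons]
      show (gen (a i₀) (i, false) * evalL (a i₀) l) * (a i₀ i₀ ^2) ^ (cf l + 1) = _
      have hc := (commute_z_evalL i₀ l).eq
      rw [pow_succ']
      rw [mul_assoc, ← mul_assoc (evalL (a i₀) l) _ _, ← hc, ← mul_assoc, ← mul_assoc]
      have hgen : gen (a i₀) (i, false) * (a i₀ i₀ ^ 2) = a i₀ i := by
        show (a i₀ i)⁻¹ * (a i₀ i₀ ^2) = a i₀ i
        rw [← a_sq i₀ i]; group
      rw [hgen, mul_assoc, ih]
      simp
    · have hcf : cf (⟨i, true⟩ :: l) = cf l := by simp [cf, List.countP_cons]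
      rw [hcf, evalL_cons]
      show (gen (a i₀) (i, true) * evalL (a i₀) l) * (a i₀ i₀ ^2) ^ (cf l) = _
      rw [mul_assoc, ih]
      show a i₀ i * _ = _
      simp

lemma ct_add_cf (l : List (Fin k × Bool)) : ct l + cf l = l.length := by
  induction l with
  | nil => rfl
  | cons p l ih =>
    rcases p with ⟨i, b⟩
    cases b <;> simp [ct, cf, List.countP_cons] at ih ⊢ <;> omega

lemma sgnsum_eq (l : List (Fin k × Bool)) : sgnsum l = (ct l : ℤ) - (cf l : ℤ) := by
  induction l with
  | nil => simp [sgnsum, ct, cf]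
  | cons p l ih =>
    rcases p with ⟨i, b⟩
    cases b <;>
      simp [sgnsum, ct, cf, List.countP_cons] at ih ⊢ <;> rw [ih] <;> push_cast <;> ring

/-! ### the characterization -/

theorem evalL_eq_one_iff (l : List (Fin k × Bool)) :
    evalL (a i₀) l = 1 ↔ stk (l.map Prod.fst) = [] ∧ ct l = cf l := by
  constructor
  · intro h
    have hstk : stk (l.map Prod.fst) = [] := by
      have h1 := rho_evalL i₀ l ⟨[], List.isChain_nil⟩
      rw [h, map_one] at h1
      exact h1.symm
    refine ⟨hstk, ?_⟩
    have h2 := phi_evalL i₀ l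
    rw [h, map_one] at h2
    have h3 : sgnsum l = 0 := by
      have := congrArg Multiplicative.toAdd h2
      simpa using this.symm
    rw [sgnsum_eq] at h3
    omega
  · rintro ⟨hstk, hct⟩
    have h1 := evalL_mul_z i₀ l
    rw [Pw_stk, hstk] at h1
    have hlen := length_stk (l.map Prod.fst)
    rw [hstk] at hlen
    simp only [List.length_map, List.length_nil, zero_add] at hlen
    have hlen2 := ct_add_cf l
    have hpops : pops (l.map Prod.fst) = cf l := by omega
    rw [hpops] at h1
    simp only [Pw_nil, one_mul] at h1
    exact mul_right_cancel (h1.trans (one_mul _).symm)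



/-- walk counts on the (q+1)-regular tree: `Ar q N h` = number of walks of length `N`
from a vertex at depth `h` to the root. -/
def Ar (q : ℕ) : ℕ → ℕ → ℕ
  | 0, 0 => 1
  | 0, _ + 1 => 0
  | N + 1, 0 => (q + 1) * Ar q N 1
  | N + 1, h + 1 => Ar q N h + q * Ar q N (h + 2)

lemma Ar_zero_of_lt (q : ℕ) : ∀ N h : ℕ, N < h → Ar q N h = 0 := by
  intro N
  induction N with
  | zero => intro h hh; cases h with
    | zero => omega
    | succ h => rfl
  | succ N ih =>
    intro h hh
    cases h with
    | zero => omega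
    | succ h =>
      show Ar q N h + q * Ar q N (h + 2) = 0
      rw [ih h (by omega), ih (h + 2) (by omega)]; simp

/-- partial sum `σ(N,j) = Σ_{m<j} C(N,m) q^m` in ℤ. -/
def sg (q N j : ℕ) : ℤ := ∑ m ∈ Finset.range j, (N.choose m : ℤ) * (q : ℤ) ^ m

lemma sg_succ_N (q N j : ℕ) : sg q (N + 1) (j + 1) = sg q N (j + 1) + q * sg q N j := by
  unfold sg
  have h1 : ∀ m ∈ Finset.range (j+1), ((N+1).choose m : ℤ) * (q:ℤ)^m
      = (N.choose m : ℤ) * (q:ℤ)^m + (if m = 0 then 0 else (N.choose (m-1) : ℤ) * (q:ℤ)^m) := by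
    intro m _
    cases m with
    | zero => simp
    | succ m => simp [Nat.choose_succ_succ]; push_cast; ring
  rw [Finset.sum_congr rfl h1, Finset.sum_add_distrib]
  congr 1
  rw [Finset.sum_range_succ' (fun m => if m = 0 then 0 else (N.choose (m-1) : ℤ) * (q:ℤ)^m) j]
  simp [Finset.mul_sum]
  exact Finset.sum_congr rfl (fun m _ => by ring)

lemma Ar_formula (q : ℕ) : ∀ N M h : ℕ, N = h + 2 * M →
    (Ar q N h : ℤ) = sg q N (M + 1) - q * sg q N M := by
  intro N
  induction N with
  | zero =>
    intro M h hN
    have hM : M = 0 := by omega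
    have hh : h = 0 := by omega
    subst hM; subst hh
    simp [Ar, sg]
  | succ N ih =>
    intro M h hN
    cases h with
    | zero =>
      -- N+1 = 2M, M ≥ 1
      obtain ⟨M', rfl⟩ : ∃ M', M = M' + 1 := ⟨M - 1, by omega⟩
      have hN' : N = 1 + 2 * M' := by omega
      have h1 : (Ar q N 1 : ℤ) = sg q N (M' + 1) - q * sg q N M' := ih M' 1 hN'
      show ((q + 1) * Ar q N 1 : ℕ) = (_ : ℤ)
      push_cast
      rw [h1, sg_succ_N q N (M' + 1), sg_succ_N q N M']
      have hkey : sg q N (M' + 1) - sg q N M' = (N.choose M' : ℤ) * (q : ℤ) ^ M' := by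
        unfold sg; rw [Finset.sum_range_succ]; ring
      have hc : (N.choose (M' + 1) : ℤ) = (N.choose M' : ℤ) := by
        have : N.choose (N - M') = N.choose M' := Nat.choose_symm (by omega)
        have hNM : N - M' = M' + 1 := by omega
        rw [hNM] at this; exact_mod_cast this
      have hkey2 : sg q N (M' + 2) - sg q N (M' + 1) = (N.choose M' : ℤ) * (q : ℤ) ^ (M' + 1) := by
        unfold sg; rw [Finset.sum_range_succ]; rw [hc]; ring
      linear_combination (q:ℤ) * hkey - hkey2
    | succ h =>
      show (Ar q N h + q * Ar q N (h + 2) : ℕ) = (_ : ℤ)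
      push_cast
      cases M with
      | zero =>
        have hh : N = h := by omega
        have h2 : Ar q N (h + 2) = 0 := Ar_zero_of_lt q N (h + 2) (by omega)
        have h1 : (Ar q N h : ℤ) = sg q N 1 - q * sg q N 0 := ih 0 h (by omega)
        rw [h1, h2]
        simp [sg]
      | succ M' =>
        have e1 : (Ar q N h : ℤ) = sg q N (M' + 2) - q * sg q N (M' + 1) := ih (M' + 1) h (by omega)
        have e2 : (Ar q N (h + 2) : ℤ) = sg q N (M' + 1) - q * sg q N M' := ih M' (h + 2) (by omega)
        rw [e1, e2, sg_succ_N q N (M' + 1), sg_succ_N q N M']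
        ring




lemma shift_sum (c : ℕ → ℤ) (n : ℕ) :
    ∑ m ∈ Finset.range n, c m = ∑ m ∈ Finset.range (n+1), (if m = 0 then 0 else c (m-1)) := by
  rw [Finset.sum_range_succ' (fun m => if m = 0 then 0 else c (m-1)) n]
  simp

lemma main_id (q n : ℕ) :
    (n : ℤ) * (sg q (2*n) (n+1) - q * sg q (2*n) n)
      = (q + 1) * ∑ m ∈ Finset.range n, ((n - m : ℕ) : ℤ) * ((2*n).choose m : ℤ) * (q:ℤ)^m := by
  have e1 : (n : ℤ) * sg q (2*n) (n+1)
      = ∑ m ∈ Finset.range (n+1), (n:ℤ) * ((2*n).choose m : ℤ) * (q:ℤ)^m := by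
    unfold sg; rw [Finset.mul_sum]; exact Finset.sum_congr rfl fun m _ => by ring
  have e2 : (n : ℤ) * ((q:ℤ) * sg q (2*n) n)
      = ∑ m ∈ Finset.range n, (n:ℤ) * ((2*n).choose m : ℤ) * (q:ℤ)^(m+1) := by
    unfold sg; rw [Finset.mul_sum, Finset.mul_sum]; exact Finset.sum_congr rfl fun m _ => by ring
  have e3 : (q + 1 : ℤ) * ∑ m ∈ Finset.range n, ((n - m : ℕ) : ℤ) * ((2*n).choose m : ℤ) * (q:ℤ)^m
      = (∑ m ∈ Finset.range n, ((n - m : ℕ) : ℤ) * ((2*n).choose m : ℤ) * (q:ℤ)^m)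
        + ∑ m ∈ Finset.range n, ((n - m : ℕ) : ℤ) * ((2*n).choose m : ℤ) * (q:ℤ)^(m+1) := by
    rw [Finset.mul_sum, ← Finset.sum_add_distrib]
    exact Finset.sum_congr rfl fun m _ => by ring
  rw [mul_sub, ← mul_assoc]
  rw [mul_assoc (n:ℤ) (q:ℤ) _, e1, e2, e3]
  -- convert all to range (n+1)
  have hT1 : ∑ m ∈ Finset.range n, (n:ℤ) * ((2*n).choose m : ℤ) * (q:ℤ)^(m+1)
      = ∑ m ∈ Finset.range (n+1), (if m = 0 then 0 else
          (n:ℤ) * ((2*n).choose (m-1) : ℤ) * (q:ℤ)^m) := by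
    rw [shift_sum (fun m => (n:ℤ) * ((2*n).choose m : ℤ) * (q:ℤ)^(m+1)) n]
    exact Finset.sum_congr rfl fun m _ => by cases m <;> simp
  have hT3 : ∑ m ∈ Finset.range n, ((n - m : ℕ) : ℤ) * ((2*n).choose m : ℤ) * (q:ℤ)^(m+1)
      = ∑ m ∈ Finset.range (n+1), (if m = 0 then 0 else
          ((n - (m-1) : ℕ) : ℤ) * ((2*n).choose (m-1) : ℤ) * (q:ℤ)^m) := by
    rw [shift_sum (fun m => ((n - m : ℕ) : ℤ) * ((2*n).choose m : ℤ) * (q:ℤ)^(m+1)) n]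
    exact Finset.sum_congr rfl fun m _ => by cases m <;> simp
  have hT2 : ∑ m ∈ Finset.range n, ((n - m : ℕ) : ℤ) * ((2*n).choose m : ℤ) * (q:ℤ)^m
      = ∑ m ∈ Finset.range (n+1), ((n - m : ℕ) : ℤ) * ((2*n).choose m : ℤ) * (q:ℤ)^m := by
    rw [Finset.sum_range_succ]; simp
  rw [hT1, hT3, hT2, sub_eq_iff_eq_add, ← Finset.sum_add_distrib, ← Finset.sum_add_distrib]
  refine Finset.sum_congr rfl fun m hm => ?_
  rcases m with _ | μ
  · simp
  · have hμ : μ + 1 ≤ n := by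
      have := Finset.mem_range.mp hm; omega
    simp only [Nat.succ_ne_zero, if_false, Nat.add_sub_cancel]
    have hcast1 : ((n - (μ+1) : ℕ) : ℤ) = (n:ℤ) - μ - 1 := by
      have := Int.ofNat_sub hμ; push_cast at this ⊢; omega
    have hcast2 : ((n - μ : ℕ) : ℤ) = (n:ℤ) - μ := by
      have : μ ≤ n := by omega
      have := Int.ofNat_sub this; push_cast at this ⊢; omega
    have hch : ((2*n).choose (μ+1) : ℤ) * (μ+1) = ((2*n).choose μ : ℤ) * (2*(n:ℤ) - μ) := by
      have h := Nat.choose_succ_right_eq (2*n) μ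
      have hle : μ ≤ 2*n := by omega
      have : ((2*n).choose (μ+1) * (μ+1) : ℕ) = ((2*n).choose μ * (2*n - μ) : ℕ) := h
      have hc := congrArg (Nat.cast : ℕ → ℤ) this
      push_cast [Nat.cast_sub hle] at hc
      linarith [hc]
    rw [hcast1, hcast2]
    linear_combination (q:ℤ)^(μ+1) * hch
/-! ### push equation lemmas -/

lemma push_eq_nil_iff {i : Fin k} {t : List (Fin k)} : push i t = [] ↔ t = [i] := by
  cases t with
  | nil => simp [push]
  | cons x t' =>
    by_cases hx : x = i
    · subst hx; simp [push]
    · simp [push, hx]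

lemma push_eq_cons_self_iff {i : Fin k} {t t' : List (Fin k)} (ht' : t'.Chain' (· ≠ ·))
    (h : (i :: t).Chain' (· ≠ ·)) : push i t' = i :: t ↔ t' = t := by
  cases t' with
  | nil => simp [push, eq_comm]
  | cons x t'' =>
    by_cases hx : x = i
    · subst hx
      have hp : push x (x :: t'') = t'' := by simp [push]
      rw [hp]
      constructor
      · intro he; exfalso; rw [he] at ht'; exact (List.isChain_cons_cons.mp ht').1 rfl
      · intro he; exfalso; rw [← he] at h; exact (List.isChain_cons_cons.mp h).1 rfl
    · simp [push, hx]

lemma push_eq_cons_ne_iff {i j : Fin k} {t t' : List (Fin k)} (hij : i ≠ j) :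
    push i t' = j :: t ↔ t' = i :: j :: t := by
  cases t' with
  | nil => simp [push, hij]
  | cons x t'' =>
    by_cases hx : x = i
    · subst hx; simp [push]
    · simp [push, hx, hij]

/-! ### the splitting equivalence -/

def splitEquiv (N : ℕ) (α : Type*) : (Fin (N + 1) → α) ≃ α × (Fin N → α) where
  toFun v := (v 0, fun j => v j.succ)
  invFun p := Fin.cons p.1 p.2
  left_inv v := by
    funext j
    refine Fin.cases ?_ (fun j' => ?_) j <;> simp
  right_inv p := by
    obtain ⟨x, u⟩ := p
    simp

lemma sum_ite_fin (q : ℕ) (hk : k = q + 1) (j : Fin k) (X Y : ℕ) :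
    ∑ i : Fin k, (if i = j then X else Y) = X + q * Y := by
  have h1 : ∀ i : Fin k, (if i = j then X else Y)
      = (if i = j then X else 0) + (if i = j then 0 else Y) := by
    intro i; by_cases hij : i = j <;> simp [hij]
  rw [Finset.sum_congr rfl (fun i _ => h1 i), Finset.sum_add_distrib]
  rw [Finset.sum_ite_eq' Finset.univ j (fun _ => X)]
  simp only [Finset.mem_univ, if_pos]
  congr 1
  have h2 : ∀ i : Fin k, (if i = j then 0 else Y) = if i ≠ j then Y else 0 := by
    intro i; by_cases hij : i = j <;> simp [hij]
  rw [Finset.sum_congr rfl (fun i _ => h2 i), Finset.sum_ite, Finset.sum_const, Finset.sum_const]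
  simp only [smul_eq_mul, mul_zero, add_zero]
  rw [Finset.filter_ne' Finset.univ j, Finset.card_erase_of_mem (Finset.mem_univ j)]
  simp [Finset.card_univ, hk, mul_comm]

/-! ### the counting lemma -/

lemma card_stk (q : ℕ) (hk : k = q + 1) :
    ∀ (N : ℕ) (s : List (Fin k)), s.Chain' (· ≠ ·) →
      Fintype.card {u : Fin N → Fin k // stk (List.map u (List.finRange N)) = s}
        = Ar q N s.length := by
  intro N
  induction N with
  | zero =>
    intro s hs
    cases s with
    | nil =>
      have e : {u : Fin 0 → Fin k // stk (List.map u (List.finRange 0)) = ([] : List (Fin k))}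
          ≃ (Fin 0 → Fin k) := Equiv.subtypeUnivEquiv (fun u => by simp)
      rw [Fintype.card_congr e]
      simp [Ar]
    | cons j t =>
      have he : IsEmpty {u : Fin 0 → Fin k // stk (List.map u (List.finRange 0)) = j :: t} := by
        constructor; rintro ⟨u, hu⟩; simp at hu
      rw [Fintype.card_eq_zero]
      rfl
  | succ N ih =>
    intro s hs
    have e : {v : Fin (N + 1) → Fin k // stk (List.map v (List.finRange (N + 1))) = s}
        ≃ Σ i : Fin k, {u : Fin N → Fin k //
            push i (stk (List.map u (List.finRange N))) = s} := by
      refine Equiv.trans (Equiv.subtypeEquiv (splitEquiv N (Fin k)) (fun v => ?_))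
        (Equiv.subtypeProdEquivSigmaSubtype
          (fun i (u : Fin N → Fin k) => push i (stk (List.map u (List.finRange N))) = s))
      rw [List.finRange_succ, List.map_cons, List.map_map, stk_cons]
      exact Iff.rfl
    rw [Fintype.card_congr e, Fintype.card_sigma]
    cases s with
    | nil =>
      have hcnt : ∀ i : Fin k,
          Fintype.card {u : Fin N → Fin k //
              push i (stk (List.map u (List.finRange N))) = ([] : List (Fin k))} = Ar q N 1 := by
        intro i
        have e2 : {u : Fin N → Fin k //
            push i (stk (List.map u (List.finRange N))) = ([] : List (Fin k))}
            ≃ {u : Fin N → Fin k // stk (List.map u (List.finRange N)) = [i]} :=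
          Equiv.subtypeEquivRight (fun u => by rw [push_eq_nil_iff])
        rw [Fintype.card_congr e2]
        exact ih [i] (List.isChain_singleton i)
      rw [Finset.sum_congr rfl (fun i _ => hcnt i), Finset.sum_const, Finset.card_univ]
      show Fintype.card (Fin k) * Ar q N 1 = Ar q (N + 1) 0
      rw [Fintype.card_fin, hk]
      rfl
    | cons j t =>
      have hcnt : ∀ i : Fin k,
          Fintype.card {u : Fin N → Fin k //
              push i (stk (List.map u (List.finRange N))) = j :: t}
            = if i = j then Ar q N t.length else Ar q N (t.length + 2) := by
        intro i
        by_cases hij : i = j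
        · subst hij
          have e2 : {u : Fin N → Fin k //
              push i (stk (List.map u (List.finRange N))) = i :: t}
              ≃ {u : Fin N → Fin k // stk (List.map u (List.finRange N)) = t} :=
            Equiv.subtypeEquivRight (fun u => push_eq_cons_self_iff (stk_chain _) hs)
          rw [Fintype.card_congr e2, if_pos rfl]
          exact ih t hs.tail
        · have e2 : {u : Fin N → Fin k //
              push i (stk (List.map u (List.finRange N))) = j :: t}
              ≃ {u : Fin N → Fin k // stk (List.map u (List.finRange N)) = i :: j :: t} :=
            Equiv.subtypeEquivRight (fun u => push_eq_cons_ne_iff hij)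
          rw [Fintype.card_congr e2, if_neg hij]
          have hch : (i :: j :: t).Chain' (· ≠ ·) := List.isChain_cons_cons.mpr ⟨hij, hs⟩
          have := ih (i :: j :: t) hch
          simpa using this
      rw [Finset.sum_congr rfl (fun i _ => hcnt i), sum_ite_fin q hk j]
      show Ar q N t.length + q * Ar q N (t.length + 2) = Ar q (N + 1) (t.length + 1)
      rfl



lemma countP_finRange {N : ℕ} (p : Fin N → Bool) :
    (List.finRange N).countP p = (Finset.univ.filter (fun j => p j = true)).card := by
  rw [List.countP_eq_length_filter]
  have h1 : Finset.univ.filter (fun j => p j = true) = ((List.finRange N).filter p).toFinset := by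
    ext j
    simp [List.mem_filter, List.mem_finRange]
  rw [h1, List.toFinset_card_of_nodup ((List.nodup_finRange N).filter p)]

def boolEquiv (N n : ℕ) :
    {b : Fin N → Bool // (Finset.univ.filter (fun j => b j = true)).card = n}
      ≃ {s : Finset (Fin N) // s.card = n} where
  toFun b := ⟨Finset.univ.filter (fun j => b.1 j = true), b.2⟩
  invFun s := ⟨fun j => decide (j ∈ s.1), by simpa using s.2⟩
  left_inv b := by
    apply Subtype.ext
    funext j
    by_cases h : b.1 j = true <;> simp [h]
  right_inv s := by
    apply Subtype.ext
    simp

lemma card_bool (N n : ℕ) :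
    Fintype.card {b : Fin N → Bool // (List.finRange N).countP (fun j => b j) = n}
      = N.choose n := by
  have e1 : {b : Fin N → Bool // (List.finRange N).countP (fun j => b j) = n}
      ≃ {b : Fin N → Bool // (Finset.univ.filter (fun j => b j = true)).card = n} :=
    Equiv.subtypeEquivRight (fun b => by rw [countP_finRange])
  rw [Fintype.card_congr (e1.trans (boolEquiv N n)), Fintype.card_finset_len, Fintype.card_fin]


/-! ### final assembly -/

lemma wordValue_eq {k : ℕ} {Γ' : Type*} [Group Γ'] (g : Fin k → Γ') {N : ℕ}
    (w : Fin N → Fin k × Bool) :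
    wordValue g w = evalL g ((List.finRange N).map w) := by
  unfold wordValue evalL gen
  rw [List.map_map]
  rfl

lemma main_card {k : ℕ} (i₀ : Fin k) (q : ℕ) (hk1 : k = q + 1) (n : ℕ) :
    cogrowthCount (a i₀) (2*n) = (2*n).choose n * Ar q (2*n) 0 := by
  have hiff : ∀ w : Fin (2*n) → Fin k × Bool,
      wordValue (a i₀) w = 1 ↔
        (stk (List.map (fun j => (w j).1) (List.finRange (2*n))) = [] ∧
          (List.finRange (2*n)).countP (fun j => (w j).2) = n) := by
    intro w
    rw [wordValue_eq, evalL_eq_one_iff]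
    have hm : (List.map w (List.finRange (2*n))).map Prod.fst
        = List.map (fun j => (w j).1) (List.finRange (2*n)) := by
      rw [List.map_map]; rfl
    have hct : ct (List.map w (List.finRange (2*n)))
        = (List.finRange (2*n)).countP (fun j => (w j).2) := by
      unfold ct; rw [List.countP_map]; rfl
    have hlen := ct_add_cf (List.map w (List.finRange (2*n)))
    rw [List.length_map, List.length_finRange] at hlen
    rw [hct] at hlen
    rw [hm, hct]
    constructor
    · rintro ⟨h1, h2⟩; exact ⟨h1, by omega⟩
    · rintro ⟨h1, h2⟩; exact ⟨h1, by omega⟩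
  unfold cogrowthCount
  rw [Nat.card_congr (Equiv.subtypeEquivRight hiff)]
  have esplit : {w : Fin (2*n) → Fin k × Bool //
      stk (List.map (fun j => (w j).1) (List.finRange (2*n))) = [] ∧
        (List.finRange (2*n)).countP (fun j => (w j).2) = n}
      ≃ {u : Fin (2*n) → Fin k // stk (List.map u (List.finRange (2*n))) = []} ×
        {b : Fin (2*n) → Bool // (List.finRange (2*n)).countP (fun j => b j) = n} :=
    (Equiv.subtypeEquiv (Equiv.arrowProdEquivProdArrow (Fin (2*n)) (fun _ => Fin k) (fun _ => Bool))
      (fun w => Iff.rfl)).trans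
      (Equiv.subtypeProdEquivProd
        (p := fun u : Fin (2*n) → Fin k => stk (List.map u (List.finRange (2*n))) = [])
        (q := fun b : Fin (2*n) → Bool => (List.finRange (2*n)).countP (fun j => b j) = n))
  rw [Nat.card_congr esplit, Nat.card_prod, Nat.card_eq_fintype_card, Nat.card_eq_fintype_card,
    card_stk q hk1 (2*n) [] List.isChain_nil, card_bool]
  rw [List.length_nil, Nat.mul_comm]

end CG

/-- Exact cogrowth counts for `G(2,…,2) = ⟨a_1,…,a_k ∣ a_1² = ⋯ = a_k²⟩`, `k ≥ 3`:
`n·ψ(2n) = k·C(2n,n)·Σ_{m=0}^{n-1} (n-m)·C(2n,m)·(k-1)^m` for `n ≥ 1`. -/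
theorem cogrowth_G2k (k : ℕ) (hk : 3 ≤ k) (n : ℕ) (hn : 1 ≤ n) :
    n * cogrowthCount (fun i => (PresentedGroup.of i :
          PresentedGroup (Grels (fun _ : Fin k => 2) (fin0 (Nat.le_of_succ_le hk))))) (2*n)
      = k * Nat.choose (2*n) n *
          ∑ m ∈ Finset.range n, (n - m) * Nat.choose (2*n) m * (k-1)^m := by
  have hk1 : k = (k - 1) + 1 := by omega
  have hfun : (fun i => (PresentedGroup.of i :
      PresentedGroup (Grels (fun _ : Fin k => 2) (fin0 (Nat.le_of_succ_le hk)))))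
      = CG.a (fin0 (Nat.le_of_succ_le hk)) := rfl
  rw [hfun, CG.main_card (fin0 (Nat.le_of_succ_le hk)) (k-1) hk1 n]
  have hAr := CG.Ar_formula (k-1) (2*n) n 0 (by ring)
  have hmain := CG.main_id (k-1) n
  apply @Nat.cast_injective ℤ _ _
  push_cast
  rw [← hAr] at hmain
  have hkq : (k : ℤ) = ((k-1 : ℕ) : ℤ) + 1 := by exact_mod_cast congrArg (Nat.cast : ℕ → ℤ) hk1
  rw [hkq]
  linear_combination ((2*n).choose n : ℤ) * hmain
end

section
/- Let k ≥ 2 and p_1,…,p_k ≥ 2 be integers. For every natural number n there exist natural numbers d_0, d_1, …, d_n such that for every integer m, f(n,m) = Σ_{ℓ=0}^{n} d_ℓ · c(ℓ,m), where c(ℓ,m) = binom(ℓ, (ℓ+m)/2) if |m| ≤ ℓ and ℓ+m is even, and c(ℓ,m) = 0 otherwise. (Equivalently, the generating polynomial Σ_m f(n,m)q^m is a nonnegative-integer combination of the polynomials (q + q⁻¹)^ℓ for 0 ≤ ℓ ≤ n.) -/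
/-- `fcount p i₀ n m` is the number of words of length `n` in the generators of
`G(p_1,…,p_k)` and their inverses whose value equals `Δ^m`, where `Δ = a_{i₀}^{p i₀}`. -/
noncomputable def fcount {k : ℕ} (p : Fin k → ℕ) (i₀ : Fin k) (n : ℕ) (m : ℤ) : ℕ :=
  Nat.card {w : Fin n → Fin k × Bool //
    wordValue (fun i => (PresentedGroup.of i : PresentedGroup (Grels p i₀))) w
      = ((PresentedGroup.of i₀ : PresentedGroup (Grels p i₀)) ^ (p i₀)) ^ m}


section States
variable {k : ℕ} (p : Fin k → ℕ)

/-- head factor differs from `i` (or list empty). -/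
def headNe (i : Fin k) : List (Fin k × ℕ) → Prop
  | [] => True
  | e :: _ => e.1 ≠ i

/-- Valid normal-form syllable lists. -/
def ValidL : List (Fin k × ℕ) → Prop
  | [] => True
  | e :: tl => 1 ≤ e.2 ∧ e.2 < p e.1 ∧ headNe e.1 tl ∧ ValidL tl

/-- Raw action of the letter `(i, b)` on states. -/
def act (i : Fin k) (b : Bool) : List (Fin k × ℕ) × ℤ → List (Fin k × ℕ) × ℤ
  | ⟨[], z⟩ =>
    match b with
    | true => ([(i,1)], z)
    | false => ([(i, p i - 1)], z - 1)
  | ⟨e :: tl, z⟩ =>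
    if e.1 = i then
      match b with
      | true => if e.2 + 1 = p i then (tl, z+1) else ((i, e.2+1) :: tl, z)
      | false => if e.2 = 1 then (tl, z) else ((i, e.2-1) :: tl, z)
    else
      match b with
      | true => ((i,1) :: e :: tl, z)
      | false => ((i, p i - 1) :: e :: tl, z - 1)

variable (hp : ∀ i, 2 ≤ p i)

include hp in
lemma act_valid (i : Fin k) (b : Bool) (s : List (Fin k × ℕ) × ℤ)
    (h : ValidL p s.1) : ValidL p (act p i b s).1 := by
  have h2 := hp i
  obtain ⟨l, z⟩ := s
  match l with
  | [] =>
    cases b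
    · exact ⟨show 1 ≤ p i - 1 by omega, show p i - 1 < p i by omega, trivial, trivial⟩
    · exact ⟨le_refl 1, show 1 < p i by omega, trivial, trivial⟩
  | e :: tl =>
    obtain ⟨h1, hx, h3, h4⟩ := h
    by_cases hei : e.1 = i
    · cases b
      · simp only [act, if_pos hei]
        by_cases he2 : e.2 = 1
        · rw [if_pos he2]; exact h4
        · rw [if_neg he2]
          exact ⟨show 1 ≤ e.2 - 1 by omega,
            show e.2 - 1 < p i by rw [hei] at hx; omega,
            show headNe i tl by rwa [hei] at h3, h4⟩
      · simp only [act, if_pos hei]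
        by_cases he2 : e.2 + 1 = p i
        · rw [if_pos he2]; exact h4
        · rw [if_neg he2]
          exact ⟨show 1 ≤ e.2 + 1 by omega,
            show e.2 + 1 < p i by rw [hei] at hx; omega,
            show headNe i tl by rwa [hei] at h3, h4⟩
    · cases b
      · simp only [act, if_neg hei]
        exact ⟨show 1 ≤ p i - 1 by omega, show p i - 1 < p i by omega,
          show e.1 ≠ i from hei, h1, hx, h3, h4⟩
      · simp only [act, if_neg hei]
        exact ⟨le_refl 1, show 1 < p i by omega,
          show e.1 ≠ i from hei, h1, hx, h3, h4⟩

include hp in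
lemma act_inv1 (i : Fin k) (s : List (Fin k × ℕ) × ℤ) (h : ValidL p s.1) :
    act p i false (act p i true s) = s := by
  have hpi := hp i
  obtain ⟨l, z⟩ := s
  match l with
  | [] =>
    show act p i false ([(i,1)], z) = ([], z)
    simp [act]
  | e :: tl =>
    obtain ⟨h1, hx, h3, h4⟩ := h
    by_cases hei : e.1 = i
    · simp only [act, if_pos hei]
      by_cases he2 : e.2 + 1 = p i
      · rw [if_pos he2]
        match tl, h3 with
        | [], _ =>
          show ([(i, p i - 1)], z + 1 - 1) = (e :: [], z)
          have he : e = (i, p i - 1) := by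
            rw [Prod.ext_iff]; exact ⟨hei, by omega⟩
          rw [he]
          norm_num
        | f :: tl', h3 =>
          rw [hei] at h3
          simp only [act, if_neg h3]
          have he : e = (i, p i - 1) := by
            rw [Prod.ext_iff]; exact ⟨hei, by omega⟩
          rw [he]
          norm_num
      · rw [if_neg he2]
        simp only [act, if_pos rfl]
        rw [if_neg (show ¬ (e.2 + 1 = 1) by omega)]
        have he : e = (i, e.2 + 1 - 1) := by
          rw [Prod.ext_iff]; exact ⟨hei, by omega⟩
        norm_num
        exact he.symm
    · simp only [act, if_neg hei, if_pos rfl]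
      simp

include hp in
lemma act_inv2 (i : Fin k) (s : List (Fin k × ℕ) × ℤ) (h : ValidL p s.1) :
    act p i true (act p i false s) = s := by
  have hpi := hp i
  obtain ⟨l, z⟩ := s
  match l with
  | [] =>
    show act p i true ([(i, p i - 1)], z - 1) = ([], z)
    simp [act, show p i - 1 + 1 = p i by omega]
  | e :: tl =>
    obtain ⟨h1, hx, h3, h4⟩ := h
    by_cases hei : e.1 = i
    · simp only [act, if_pos hei]
      by_cases he2 : e.2 = 1
      · rw [if_pos he2]
        match tl, h3 with
        | [], _ =>
          show ([(i, 1)], z) = (e :: [], z)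
          have he : e = (i, 1) := by
            rw [Prod.ext_iff]; exact ⟨hei, he2⟩
          rw [he]
        | f :: tl', h3 =>
          rw [hei] at h3
          simp only [act, if_neg h3]
          have he : e = (i, 1) := by
            rw [Prod.ext_iff]; exact ⟨hei, he2⟩
          rw [he]
      · rw [if_neg he2]
        simp only [act, if_pos rfl]
        rw [if_neg (show ¬ (e.2 - 1 + 1 = p i) by rw [hei] at hx; omega)]
        have he : e = (i, e.2 - 1 + 1) := by
          rw [Prod.ext_iff]; exact ⟨hei, by omega⟩
        norm_num
        exact he.symm
    · simp only [act, if_neg hei, if_pos rfl]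
      simp [show p i - 1 + 1 = p i by omega]

/-- The state space: valid normal forms together with a winding integer. -/
abbrev St := {s : List (Fin k × ℕ) × ℤ // ValidL p s.1}

instance : DecidableEq (St p) := by unfold St; infer_instance

/-- The letter `(i, +)` as a permutation of states. -/
def actE (i : Fin k) : Equiv.Perm (St p) where
  toFun s := ⟨act p i true s.1, act_valid p hp i true s.1 s.2⟩
  invFun s := ⟨act p i false s.1, act_valid p hp i false s.1 s.2⟩
  left_inv s := Subtype.ext (act_inv1 p hp i s.1 s.2)
  right_inv s := Subtype.ext (act_inv2 p hp i s.1 s.2)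

/-- The central translation as a permutation of states. -/
def Tz : Equiv.Perm (St p) where
  toFun s := ⟨(s.1.1, s.1.2 + 1), s.2⟩
  invFun s := ⟨(s.1.1, s.1.2 - 1), s.2⟩
  left_inv s := by
    apply Subtype.ext
    obtain ⟨⟨l, z⟩, hv⟩ := s
    norm_num
  right_inv s := by
    apply Subtype.ext
    obtain ⟨⟨l, z⟩, hv⟩ := s
    norm_num

lemma iter_push (i : Fin k) (l : List (Fin k × ℕ)) (z : ℤ) (hl : headNe i l) :
    ∀ m, 1 ≤ m → m ≤ p i - 1 → (act p i true)^[m] (l, z) = ((i,m) :: l, z) := by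
  intro m
  induction m with
  | zero => omega
  | succ m ih =>
    intro _ hm
    by_cases hm0 : m = 0
    · subst hm0
      show act p i true (l, z) = ((i,1) :: l, z)
      match l, hl with
      | [], _ => rfl
      | e :: tl, hl => simp only [act, if_neg hl]
    · rw [Function.iterate_succ_apply', ih (by omega) (by omega)]
      simp only [act, if_pos rfl]
      rw [if_neg (show ¬(((i,m) : Fin k × ℕ).2 + 1 = p i) from by
        show ¬(m + 1 = p i); omega)]
      simp

lemma iter_up (i : Fin k) (tl : List (Fin k × ℕ)) (z : ℤ) :
    ∀ d x, 1 ≤ x → x + d = p i → 1 ≤ d →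
      (act p i true)^[d] ((i,x) :: tl, z) = (tl, z+1) := by
  intro d
  induction d with
  | zero => omega
  | succ d ih =>
    intro x hx hxd _
    by_cases hd0 : d = 0
    · subst hd0
      show act p i true ((i,x) :: tl, z) = (tl, z + 1)
      simp only [act, if_pos rfl]
      rw [if_pos (show ((i,x) : Fin k × ℕ).2 + 1 = p i from by
        show x + 1 = p i; omega)]
      simp
    · rw [Function.iterate_succ_apply]
      have hstep : act p i true ((i,x) :: tl, z) = ((i, x+1) :: tl, z) := by
        simp only [act, if_pos rfl]
        rw [if_neg (show ¬(((i,x) : Fin k × ℕ).2 + 1 = p i) from by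
          show ¬(x + 1 = p i); omega)]
        simp
      rw [hstep]
      exact ih (x+1) (by omega) (by omega) (by omega)

include hp in
lemma act_pow_raw (i : Fin k) (l : List (Fin k × ℕ)) (z : ℤ) (h : ValidL p l) :
    (act p i true)^[p i] (l, z) = (l, z + 1) := by
  have h2 := hp i
  match l with
  | [] =>
    rw [show p i = (p i - 1) + 1 by omega, Function.iterate_succ_apply',
      iter_push p i [] z trivial (p i - 1) (by omega) le_rfl]
    simp only [act, if_pos rfl]
    rw [if_pos (show ((i, p i - 1) : Fin k × ℕ).2 + 1 = p i from by
      show p i - 1 + 1 = p i; omega)]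
    simp
  | e :: tl =>
    obtain ⟨h1, hlt, h3, h4⟩ := h
    by_cases hei : e.1 = i
    · have he : e = (i, e.2) := by rw [← hei]
      rw [hei] at hlt h3
      rw [he]
      rw [show p i = e.2 + (p i - e.2) by omega, Function.iterate_add_apply,
        iter_up p i tl z (p i - e.2) e.2 h1 (by omega) (by omega),
        iter_push p i tl (z+1) h3 e.2 h1 (by omega)]
    · rw [show p i = (p i - 1) + 1 by omega, Function.iterate_succ_apply',
        iter_push p i (e :: tl) z hei (p i - 1) (by omega) le_rfl]
      simp only [act, if_pos rfl]
      rw [if_pos (show ((i, p i - 1) : Fin k × ℕ).2 + 1 = p i from by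
        show p i - 1 + 1 = p i; omega)]
      simp

lemma actE_iterate (i : Fin k) (n : ℕ) (s : St p) :
    (((actE p hp i)^[n]) s).1 = (act p i true)^[n] s.1 := by
  induction n with
  | zero => rfl
  | succ n ih =>
    rw [Function.iterate_succ_apply', Function.iterate_succ_apply', ← ih]
    rfl

lemma actE_pow (i : Fin k) : (actE p hp i) ^ (p i) = Tz p := by
  ext s : 1
  have h1 : ((actE p hp i) ^ (p i)) s = ((actE p hp i)^[p i]) s := by
    rw [← Equiv.Perm.iterate_eq_pow]
  rw [h1]
  apply Subtype.ext
  rw [actE_iterate]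
  obtain ⟨⟨l, z⟩, hv⟩ := s
  exact act_pow_raw p hp i l z hv

lemma Tz_zpow (m : ℤ) : ∀ (l : List (Fin k × ℕ)) (z : ℤ) (hv : ValidL p l),
    ((Tz p) ^ m) ⟨(l, z), hv⟩ = ⟨(l, z + m), hv⟩ := by
  induction m using Int.induction_on with
  | zero => intro l z hv; simp
  | succ n ih =>
    intro l z hv
    rw [zpow_add_one, Equiv.Perm.mul_apply]
    have hstep : (Tz p) ⟨(l, z), hv⟩ = ⟨(l, z + 1), hv⟩ := rfl
    rw [hstep, ih]
    apply Subtype.ext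
    norm_num
    ring
  | pred n ih =>
    intro l z hv
    rw [zpow_sub_one, Equiv.Perm.mul_apply]
    have hstep : ((Tz p)⁻¹) ⟨(l, z), hv⟩ = ⟨(l, z - 1), hv⟩ := rfl
    rw [hstep, ih]
    apply Subtype.ext
    norm_num
    ring

end States

section GroupSide
variable {k : ℕ} (p : Fin k → ℕ) (hp : ∀ i, 2 ≤ p i) (i₀ : Fin k)

local notation "Gp" => PresentedGroup (Grels p i₀)

/-- `Δ` -/
def Dl : Gp := (PresentedGroup.of i₀) ^ (p i₀)

lemma rel_holds (i : Fin k) : (PresentedGroup.of i : Gp) ^ (p i) = Dl p i₀ := by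
  have h1 : PresentedGroup.mk (Grels p i₀)
      (FreeGroup.of i ^ p i * (FreeGroup.of i₀ ^ p i₀)⁻¹) = 1 :=
    (QuotientGroup.eq_one_iff _).2 (Subgroup.subset_normalClosure ⟨i, rfl⟩)
  rw [map_mul, map_inv, map_pow, map_pow] at h1
  exact mul_inv_eq_one.1 h1

lemma comm_delta (i : Fin k) : Commute (PresentedGroup.of i : Gp) (Dl p i₀) := by
  have := (Commute.refl (PresentedGroup.of i : Gp)).pow_right (p i)
  rwa [rel_holds] at this

lemma comm_zpow (i : Fin k) (z : ℤ) (a : Gp) (ha : Commute (PresentedGroup.of i : Gp) a) :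
    Commute (PresentedGroup.of i : Gp) (a ^ z) := ha.zpow_right z

/-- Ψ : the presented group acts (on the right) on states. -/
noncomputable def permOp : Gp →* (Equiv.Perm (St p))ᵐᵒᵖ :=
  PresentedGroup.toGroup (f := fun i => MulOpposite.op (actE p hp i)) (by
    rintro r ⟨i, rfl⟩
    rw [map_mul, map_inv, map_pow, map_pow, FreeGroup.lift_apply_of, FreeGroup.lift_apply_of,
      ← MulOpposite.op_pow, ← MulOpposite.op_pow, actE_pow, actE_pow, mul_inv_cancel])

/-- base state -/
def baseSt : St p := ⟨([], 0), trivial⟩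

/-- state reached by a word -/
def muSt {n : ℕ} (w : Fin n → Fin k × Bool) : St p :=
  (List.ofFn w).foldl
    (fun s e => if e.2 then actE p hp e.1 s else (actE p hp e.1).symm s) (baseSt p)

lemma unop_permOp_gen (e : Fin k × Bool) (s : St p) :
    (MulOpposite.unop (permOp p hp i₀
        (if e.2 then (PresentedGroup.of e.1 : Gp) else (PresentedGroup.of e.1)⁻¹))) s
      = (if e.2 then actE p hp e.1 s else (actE p hp e.1).symm s) := by
  obtain ⟨i, b⟩ := e
  cases b
  · simp only [Bool.false_eq_true, if_false, map_inv]
    rw [permOp, PresentedGroup.toGroup.of]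
    rfl
  · simp only [if_true]
    rw [permOp, PresentedGroup.toGroup.of]
    rfl

lemma wordValue_concat {G : Type*} [Group G] (g : Fin k → G) {n : ℕ}
    (w : Fin (n+1) → Fin k × Bool) :
    wordValue g w = wordValue g (fun j => w j.castSucc) *
      (if (w (Fin.last n)).2 then g (w (Fin.last n)).1 else (g (w (Fin.last n)).1)⁻¹) := by
  unfold wordValue
  rw [← List.ofFn_eq_map, ← List.ofFn_eq_map, List.ofFn_succ'
    (fun j => if (w j).2 then g (w j).1 else (g (w j).1)⁻¹),
    List.concat_eq_append, List.prod_append]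
  simp

lemma mu_eq {n : ℕ} (w : Fin n → Fin k × Bool) :
    muSt p hp w = (MulOpposite.unop (permOp p hp i₀
      (wordValue (fun i => (PresentedGroup.of i : Gp)) w))) (baseSt p) := by
  induction n with
  | zero =>
    have h0 : wordValue (fun i => (PresentedGroup.of i : Gp)) w = 1 := by
      unfold wordValue
      simp [List.finRange_zero]
    rw [h0, map_one]
    rfl
  | succ n ih =>
    rw [wordValue_concat, map_mul, MulOpposite.unop_mul, Equiv.Perm.mul_apply, ← ih,
      unop_permOp_gen]
    unfold muSt
    rw [List.ofFn_succ' w, List.concat_eq_append, List.foldl_concat]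

lemma mu_of_val {n : ℕ} (w : Fin n → Fin k × Bool) (m : ℤ)
    (h : wordValue (fun i => (PresentedGroup.of i : Gp)) w = (Dl p i₀) ^ m) :
    muSt p hp w = ⟨([], m), trivial⟩ := by
  rw [mu_eq p hp i₀ w, h, map_zpow]
  have h2 : permOp p hp i₀ (Dl p i₀) = MulOpposite.op (Tz p) := by
    rw [Dl, map_pow, permOp, PresentedGroup.toGroup.of, ← MulOpposite.op_pow, actE_pow]
  rw [h2, ← MulOpposite.op_zpow]
  have h3 : (MulOpposite.unop (MulOpposite.op ((Tz p) ^ m))) = (Tz p)^m := rfl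
  rw [h3]
  have h4 := Tz_zpow p m [] 0 trivial
  rw [show baseSt p = ⟨([], 0), trivial⟩ from rfl, h4]
  norm_num

/-- product of the syllables of a normal form, as a group element -/
def sylProd : List (Fin k × ℕ) → Gp :=
  fun l => (l.reverse.map (fun e => (PresentedGroup.of e.1 : Gp) ^ e.2)).prod

lemma sylProd_nil : sylProd p i₀ [] = 1 := rfl

lemma sylProd_cons (e : Fin k × ℕ) (tl : List (Fin k × ℕ)) :
    sylProd p i₀ (e :: tl) = sylProd p i₀ tl * (PresentedGroup.of e.1 : Gp) ^ e.2 := by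
  unfold sylProd
  rw [List.reverse_cons, List.map_append, List.prod_append]
  simp

/-- evaluation of a state in the group -/
def rhoSt : List (Fin k × ℕ) × ℤ → Gp := fun s => sylProd p i₀ s.1 * (Dl p i₀) ^ s.2

lemma pow_comm_zpowD (i : Fin k) (a : ℕ) (z : ℤ) :
    ((PresentedGroup.of i : Gp) ^ a) * (Dl p i₀) ^ z
      = (Dl p i₀) ^ z * (PresentedGroup.of i : Gp) ^ a :=
  (((comm_delta p i₀ i).zpow_right z).pow_left a).eq

lemma inv_comm_zpowD (i : Fin k) (z : ℤ) :
    ((PresentedGroup.of i : Gp)⁻¹) * (Dl p i₀) ^ z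
      = (Dl p i₀) ^ z * (PresentedGroup.of i : Gp)⁻¹ :=
  (((comm_delta p i₀ i).zpow_right z).inv_left).eq

include hp in
lemma pow_pred (i : Fin k) :
    ((PresentedGroup.of i : Gp)) ^ (p i - 1) = Dl p i₀ * (PresentedGroup.of i)⁻¹ := by
  have h2 := hp i
  rw [← rel_holds p i₀ i, show p i = (p i - 1) + 1 by omega, pow_succ]
  simp [mul_assoc]

lemma L1' (i : Fin k) (z : ℤ) :
    (Dl p i₀ : Gp) ^ z = PresentedGroup.of i * ((Dl p i₀) ^ z * (PresentedGroup.of i)⁻¹) := by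
  rw [← inv_comm_zpowD p i₀ i z, ← mul_assoc]
  simp

lemma L2 (i : Fin k) (x : ℕ) (hx : 1 ≤ x) (z : ℤ) :
    ((PresentedGroup.of i : Gp)) ^ (x-1) * (Dl p i₀) ^ z
      = (PresentedGroup.of i) ^ x * ((Dl p i₀) ^ z * (PresentedGroup.of i)⁻¹) := by
  obtain ⟨y, rfl⟩ : ∃ y, x = y + 1 := ⟨x - 1, by omega⟩
  simp only [Nat.add_sub_cancel]
  rw [pow_succ, ← inv_comm_zpowD p i₀ i z]
  simp [mul_assoc]

lemma L3 (i : Fin k) (x : ℕ) (hx : x + 1 = p i) (z : ℤ) :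
    ((Dl p i₀ : Gp)) ^ (z+1)
      = (PresentedGroup.of i) ^ x * ((Dl p i₀) ^ z * (PresentedGroup.of i)) := by
  rw [← ((comm_delta p i₀ i).zpow_right z).eq, ← mul_assoc, ← pow_succ, hx, rel_holds,
    ← zpow_one_add]
  ring_nf

lemma L4 (i : Fin k) (x : ℕ) (z : ℤ) :
    ((PresentedGroup.of i : Gp)) ^ (x+1) * (Dl p i₀) ^ z
      = (PresentedGroup.of i) ^ x * ((Dl p i₀) ^ z * (PresentedGroup.of i)) := by
  rw [← ((comm_delta p i₀ i).zpow_right z).eq, ← mul_assoc, ← pow_succ]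

include hp in
lemma L5 (i : Fin k) (z : ℤ) :
    ((PresentedGroup.of i : Gp)) ^ (p i - 1) * (Dl p i₀) ^ (z-1)
      = (Dl p i₀) ^ z * (PresentedGroup.of i)⁻¹ := by
  rw [pow_pred p hp i₀ i, mul_assoc, inv_comm_zpowD, ← mul_assoc,
    show (Dl p i₀ : Gp) * (Dl p i₀)^(z-1) = (Dl p i₀)^z from by rw [← zpow_one_add]; ring_nf]

lemma L6 (i : Fin k) (z : ℤ) :
    ((PresentedGroup.of i : Gp)) ^ 1 * (Dl p i₀) ^ z
      = (Dl p i₀) ^ z * (PresentedGroup.of i) := by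
  rw [pow_one]
  exact ((comm_delta p i₀ i).zpow_right z).eq

include hp in
lemma rho_act (i : Fin k) (b : Bool) (s : List (Fin k × ℕ) × ℤ) (h : ValidL p s.1) :
    rhoSt p i₀ (act p i b s) = rhoSt p i₀ s *
      (if b then (PresentedGroup.of i : Gp) else (PresentedGroup.of i)⁻¹) := by
  obtain ⟨l, z⟩ := s
  match l with
  | [] =>
    cases b
    · simp only [act, Bool.false_eq_true, if_false, rhoSt, sylProd_cons, sylProd_nil,
        one_mul, mul_assoc]
      exact L5 p hp i₀ i z
    · simp only [act, if_true, rhoSt, sylProd_cons, sylProd_nil, one_mul, mul_assoc]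
      exact L6 p i₀ i z
  | e :: tl =>
    obtain ⟨h1, hx, h3, h4⟩ := h
    by_cases hei : e.1 = i
    · have he : e = (i, e.2) := by rw [Prod.ext_iff]; exact ⟨hei, rfl⟩
      rw [hei] at hx
      cases b
      · simp only [act, if_pos hei, Bool.false_eq_true, if_false]
        by_cases he2 : e.2 = 1
        · rw [if_pos he2, he, he2]
          simp only [rhoSt, sylProd_cons, mul_assoc]
          congr 1
          rw [pow_one]
          exact L1' p i₀ i z
        · rw [if_neg he2, he]
          simp only [rhoSt, sylProd_cons, mul_assoc]
          congr 1
          exact L2 p i₀ i e.2 h1 z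
      · simp only [act, if_pos hei, if_true]
        by_cases he2 : e.2 + 1 = p i
        · rw [if_pos he2, he]
          simp only [rhoSt, sylProd_cons, mul_assoc]
          congr 1
          exact L3 p i₀ i e.2 he2 z
        · rw [if_neg he2, he]
          simp only [rhoSt, sylProd_cons, mul_assoc]
          congr 1
          exact L4 p i₀ i e.2 z
    · cases b
      · simp only [act, if_neg hei, Bool.false_eq_true, if_false, rhoSt, sylProd_cons,
          mul_assoc]
        congr 1
        congr 1
        exact L5 p hp i₀ i z
      · simp only [act, if_neg hei, if_true, rhoSt, sylProd_cons, mul_assoc]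
        congr 1
        congr 1
        exact L6 p i₀ i z

include hp in
lemma rho_mu {n : ℕ} (w : Fin n → Fin k × Bool) :
    rhoSt p i₀ (muSt p hp w).1 = wordValue (fun i => (PresentedGroup.of i : Gp)) w := by
  induction n with
  | zero =>
    have h0 : wordValue (fun i => (PresentedGroup.of i : Gp)) w = 1 := by
      unfold wordValue; simp [List.finRange_zero]
    rw [h0]
    show rhoSt p i₀ ([], 0) = 1
    unfold rhoSt
    simp [sylProd_nil]
  | succ n ih =>
    rw [wordValue_concat, ← ih]
    unfold muSt
    rw [List.ofFn_succ' w, List.concat_eq_append, List.foldl_concat]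
    set s' := (List.ofFn (fun j => w j.castSucc)).foldl
      (fun s e => if e.2 then actE p hp e.1 s else (actE p hp e.1).symm s) (baseSt p) with hs'
    have hcase : ((if (w (Fin.last n)).2 then actE p hp (w (Fin.last n)).1 s'
        else (actE p hp (w (Fin.last n)).1).symm s') : St p).1
        = act p (w (Fin.last n)).1 (w (Fin.last n)).2 s'.1 := by
      cases hb : (w (Fin.last n)).2
      · simp only [Bool.false_eq_true, if_false]; rfl
      · simp only [if_true]; rfl
    rw [hcase, rho_act p hp i₀ (w (Fin.last n)).1 (w (Fin.last n)).2 s'.1 s'.2]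

include hp in
lemma val_iff_mu {n : ℕ} (w : Fin n → Fin k × Bool) (m : ℤ) :
    wordValue (fun i => (PresentedGroup.of i : Gp)) w = (Dl p i₀) ^ m
      ↔ muSt p hp w = ⟨([], m), trivial⟩ := by
  constructor
  · exact mu_of_val p hp i₀ w m
  · intro h
    rw [← rho_mu p hp i₀ w, h]
    show rhoSt p i₀ ([], m) = (Dl p i₀) ^ m
    unfold rhoSt
    simp [sylProd_nil]

end GroupSide

section Counting
variable {k : ℕ} (p : Fin k → ℕ) (hp : ∀ i, 2 ≤ p i)

/-- number of words of length `t` reaching state `s` -/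
noncomputable def Fcnt (t : ℕ) (s : St p) : ℕ :=
  Nat.card {w : Fin t → Fin k × Bool // muSt p hp w = s}

lemma muSt_zero (w : Fin 0 → Fin k × Bool) : muSt p hp w = baseSt p := by
  unfold muSt
  rw [List.ofFn_zero]
  rfl

lemma Fcnt_zero (s : St p) : Fcnt p hp 0 s = if s = baseSt p then 1 else 0 := by
  by_cases hs : s = baseSt p
  · rw [if_pos hs, Fcnt]
    subst hs
    rw [Nat.card_congr (Equiv.subtypeUnivEquiv (fun w => muSt_zero p hp w))]
    simp [Nat.card_eq_fintype_card]
  · rw [if_neg hs, Fcnt]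
    have : IsEmpty {w : Fin 0 → Fin k × Bool // muSt p hp w = s} := by
      constructor
      rintro ⟨w, hw⟩
      rw [muSt_zero] at hw
      exact hs hw.symm
    simp [Nat.card_of_isEmpty]

/-- inverse step -/
def invStep (e : Fin k × Bool) (s : St p) : St p :=
  if e.2 then (actE p hp e.1).symm s else actE p hp e.1 s

lemma muSt_succ {t : ℕ} (w : Fin (t+1) → Fin k × Bool) :
    muSt p hp w = (if (w (Fin.last t)).2 then actE p hp (w (Fin.last t)).1
        (muSt p hp (fun j => w j.castSucc))
      else (actE p hp (w (Fin.last t)).1).symm (muSt p hp (fun j => w j.castSucc))) := by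
  unfold muSt
  rw [List.ofFn_succ' w, List.concat_eq_append, List.foldl_concat]

lemma Fcnt_succ (t : ℕ) (s : St p) :
    Fcnt p hp (t+1) s = ∑ e : Fin k × Bool, Fcnt p hp t (invStep p hp e s) := by
  classical
  let e0 := (Fin.insertNthEquiv (fun _ : Fin (t+1) => Fin k × Bool) (Fin.last t)).symm
  have key : ∀ w : Fin (t+1) → Fin k × Bool,
      muSt p hp w = s ↔ muSt p hp (fun j => w j.castSucc)
        = invStep p hp (w (Fin.last t)) s := by
    intro w
    rw [muSt_succ p hp w]
    unfold invStep
    cases hb : (w (Fin.last t)).2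
    · simp only [Bool.false_eq_true, if_false]
      exact Equiv.symm_apply_eq _
    · simp only [if_true]
      exact Equiv.apply_eq_iff_eq_symm_apply _
  -- reorganize as a sigma type
  have E : {w : Fin (t+1) → Fin k × Bool // muSt p hp w = s}
      ≃ Σ e : Fin k × Bool, {w' : Fin t → Fin k × Bool //
          muSt p hp w' = invStep p hp e s} := by
    refine Equiv.trans (Equiv.subtypeEquiv e0
      (q := fun x => muSt p hp x.2 = invStep p hp x.1 s) ?_) ?_
    · intro w
      rw [key w]
      have h2 : (e0 w).2 = fun j => w j.castSucc := by
        funext j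
        show w ((Fin.last t).succAbove j) = _
        rw [Fin.succAbove_last]
      constructor
      · intro h
        show muSt p hp (e0 w).2 = invStep p hp (e0 w).1 s
        rw [h2]
        exact h
      · intro h
        have h' : muSt p hp (e0 w).2 = invStep p hp (e0 w).1 s := h
        rw [h2] at h'
        exact h'
    · exact {
        toFun := fun x => ⟨x.1.1, ⟨x.1.2, x.2⟩⟩
        invFun := fun y => ⟨(y.1, y.2.1), y.2.2⟩
        left_inv := fun x => rfl
        right_inv := fun y => rfl }
  rw [Fcnt, Nat.card_congr E, Nat.card_eq_fintype_card, Fintype.card_sigma]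
  congr 1
  funext e
  rw [Fcnt, Nat.card_eq_fintype_card]

end Counting


/-- Coefficient of `q^m` in `(q+q⁻¹)^ℓ`, defined recursively. -/
def Ccomb : ℕ → ℤ → ℕ
  | 0, m => if m = 0 then 1 else 0
  | (ℓ+1), m => Ccomb ℓ (m - 1) + Ccomb ℓ (m + 1)

lemma Ccomb_closed (ℓ : ℕ) : ∀ m : ℤ,
    (Ccomb ℓ m : ℤ) = (if |m| ≤ (ℓ : ℤ) ∧ Even ((ℓ : ℤ) + m)
            then (Nat.choose ℓ (((ℓ : ℤ) + m) / 2).toNat : ℤ) else 0) := by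
  induction ℓ with
  | zero =>
    intro m
    simp only [Ccomb]
    by_cases h : m = 0
    · subst h; norm_num
    · simp only [h, if_false]
      rw [if_neg]
      · norm_num
      simp only [abs_le, Nat.cast_zero]
      intro ⟨h1, _⟩
      exact h (by omega)
  | succ ℓ ih =>
    intro m
    simp only [Ccomb]
    push_cast
    rw [ih (m-1), ih (m+1)]
    simp only [abs_le, Int.even_iff]
    split_ifs with h1 h2 h3 h4 h5 h6 h7
    · -- interior: Pascal
      obtain ⟨⟨a1, a2⟩, a3⟩ := h1
      obtain ⟨⟨b1, b2⟩, b3⟩ := h2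
      set A := (((ℓ:ℤ) + (m - 1)) / 2).toNat with hA
      have e1 : (((ℓ:ℤ) + (m + 1)) / 2).toNat = A + 1 := by omega
      have e2 : (((ℓ:ℤ) + 1 + m) / 2).toNat = A + 1 := by omega
      rw [e1, e2, Nat.choose_succ_succ]
      push_cast; ring
    · exfalso; omega
    · -- m = ℓ + 1 boundary
      obtain ⟨⟨a1, a2⟩, a3⟩ := h1
      push_neg at h2
      have hm : m = (ℓ:ℤ) + 1 := by omega
      have e1 : (((ℓ:ℤ) + (m - 1)) / 2).toNat = ℓ := by omega
      have e2 : (((ℓ:ℤ) + 1 + m) / 2).toNat = ℓ + 1 := by omega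
      rw [e1, e2, Nat.choose_self, Nat.choose_self]
      norm_num
    · exfalso; push_neg at h2 h4; omega
    · -- m = -(ℓ+1) boundary
      obtain ⟨⟨b1, b2⟩, b3⟩ := h5
      push_neg at h1
      have hm : m = -((ℓ:ℤ) + 1) := by omega
      have e1 : (((ℓ:ℤ) + (m + 1)) / 2).toNat = 0 := by omega
      have e2 : (((ℓ:ℤ) + 1 + m) / 2).toNat = 0 := by omega
      rw [e1, e2, Nat.choose_zero_right, Nat.choose_zero_right]
      norm_num
    · exfalso; push_neg at h1 h6; omega
    · exfalso; push_neg at h1 h5; omega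
    · norm_num

section Comb
variable {k : ℕ} (p : Fin k → ℕ)

/-- The master coefficient recursion. -/
def Nrec : ℕ → List (Fin k × ℕ) → ℕ → ℕ
  | 0, L, ℓ => if L = [] ∧ ℓ = 0 then 1 else 0
  | (t+1), [], ℓ => ∑ j : Fin k,
      (2 * Nrec t [(j,1)] ℓ + (if ℓ = 0 then 0 else Nrec t [(j, p j - 1)] (ℓ-1)))
  | (t+1), e :: L0, ℓ =>
      (if e.2 + 1 ≤ p e.1 - 1 then Nrec t ((e.1, e.2+1) :: L0) ℓ else 0)
    + ((if 2 ≤ e.2 then Nrec t ((e.1, e.2-1) :: L0) ℓ else 0)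
    + ((if e.2 = 1 then Nrec t L0 ℓ else 0)
    + ∑ j : Fin k, (if j = e.1 then 0 else
        2 * Nrec t ((j,1) :: e :: L0) ℓ +
          (if ℓ = 0 then 0 else Nrec t ((j, p j - 1) :: e :: L0) (ℓ-1)))))

lemma Nrec_supp : ∀ (t : ℕ) (L : List (Fin k × ℕ)) (ℓ : ℕ), t < ℓ → Nrec p t L ℓ = 0 := by
  intro t
  induction t with
  | zero =>
    intro L ℓ hℓ
    unfold Nrec
    rw [if_neg]
    rintro ⟨-, h2⟩
    omega
  | succ t ih =>
    intro L ℓ hℓ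
    have h1 : ∀ L' : List (Fin k × ℕ), Nrec p t L' ℓ = 0 := fun L' => ih L' ℓ (by omega)
    have h2 : ∀ L' : List (Fin k × ℕ), Nrec p t L' (ℓ-1) = 0 :=
      fun L' => ih L' (ℓ-1) (by omega)
    have h3 : ¬(ℓ = 0) := by omega
    match L with
    | [] =>
      unfold Nrec
      simp [h1, h2, h3]
    | e :: L0 =>
      unfold Nrec
      simp [h1, h2, h3]

/-- number of `true`s -/
def cntB {m : ℕ} (b : Fin m → Bool) : ℕ := ∑ a, (if b a then 1 else 0)

/-- reflected list -/
def reflL (l : List (Fin k × ℕ)) (b : Fin l.length → Bool) : List (Fin k × ℕ) :=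
  List.ofFn (fun a => ((l.get a).1, if b a then p (l.get a).1 - (l.get a).2 else (l.get a).2))

lemma reflL_nil (b : Fin ([] : List (Fin k × ℕ)).length → Bool) : reflL p [] b = [] := rfl

lemma reflL_cons (e : Fin k × ℕ) (L0 : List (Fin k × ℕ))
    (B : Fin (L0.length + 1) → Bool) :
    reflL p (e :: L0) B
      = (e.1, if B 0 then p e.1 - e.2 else e.2) :: reflL p L0 (Fin.tail B) := by
  unfold reflL
  rw [List.ofFn_succ]
  rfl

lemma cntB_cons {m : ℕ} (B : Fin (m+1) → Bool) :
    cntB B = (if B 0 then 1 else 0) + cntB (Fin.tail B) := by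
  unfold cntB
  rw [Fin.sum_univ_succ]
  rfl

lemma sum_split (m : ℕ) (f : (Fin (m+1) → Bool) → ℕ) :
    ∑ B : Fin (m+1) → Bool, f B = ∑ b₀ : Bool, ∑ B' : Fin m → Bool, f (Fin.cons b₀ B') := by
  have h1 : ∑ x : Bool × (Fin m → Bool), f (Fin.cons x.1 x.2) = ∑ B, f B :=
    Fintype.sum_equiv (Fin.consEquiv fun _ => Bool) _ f (fun x => rfl)
  rw [← h1, Fintype.sum_prod_type]

/-- RHS sum with flexible range -/
def Ssum (t r : ℕ) (l : List (Fin k × ℕ)) (z : ℤ) : ℕ :=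
  ∑ b : Fin l.length → Bool, ∑ ℓ ∈ Finset.range r,
    Nrec p t (reflL p l b) ℓ * Ccomb ℓ (z + (cntB b : ℤ))

lemma Ssum_ext (t : ℕ) (l : List (Fin k × ℕ)) (z : ℤ) :
    Ssum p t (t+2) l z = Ssum p t (t+1) l z := by
  unfold Ssum
  apply Finset.sum_congr rfl
  intro b _
  rw [Finset.sum_range_succ, Nrec_supp p t _ (t+1) (by omega)]
  simp

end Comb

section Core
variable {k : ℕ} (p : Fin k → ℕ)

lemma child_core (t : ℕ) (R : List (Fin k × ℕ)) (j : Fin k) (u : ℤ) :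
    ∑ ℓ ∈ Finset.range (t+2),
      (2 * Nrec p t ((j,1) :: R) ℓ +
        (if ℓ = 0 then 0 else Nrec p t ((j, p j - 1) :: R) (ℓ-1))) * Ccomb ℓ u
    = ((∑ ℓ ∈ Finset.range (t+2), Nrec p t ((j,1) :: R) ℓ * Ccomb ℓ u)
      + ∑ ℓ ∈ Finset.range (t+2), Nrec p t ((j, p j - 1) :: R) ℓ * Ccomb ℓ (u+1))
    + ((∑ ℓ ∈ Finset.range (t+2), Nrec p t ((j, p j - 1) :: R) ℓ * Ccomb ℓ (u-1))
      + ∑ ℓ ∈ Finset.range (t+2), Nrec p t ((j,1) :: R) ℓ * Ccomb ℓ u) := by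
  simp only [add_mul, Finset.sum_add_distrib]
  have h1 : ∑ ℓ ∈ Finset.range (t+2), (2 * Nrec p t ((j,1) :: R) ℓ) * Ccomb ℓ u
      = (∑ ℓ ∈ Finset.range (t+2), Nrec p t ((j,1) :: R) ℓ * Ccomb ℓ u)
        + ∑ ℓ ∈ Finset.range (t+2), Nrec p t ((j,1) :: R) ℓ * Ccomb ℓ u := by
    rw [← Finset.sum_add_distrib]
    apply Finset.sum_congr rfl
    intro ℓ _
    ring
  have h2 : ∑ ℓ ∈ Finset.range (t+2),
      (if ℓ = 0 then 0 else Nrec p t ((j, p j - 1) :: R) (ℓ-1)) * Ccomb ℓ u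
      = (∑ ℓ ∈ Finset.range (t+2), Nrec p t ((j, p j - 1) :: R) ℓ * Ccomb ℓ (u+1))
        + ∑ ℓ ∈ Finset.range (t+2), Nrec p t ((j, p j - 1) :: R) ℓ * Ccomb ℓ (u-1) := by
    rw [Finset.sum_range_succ' (fun ℓ =>
      (if ℓ = 0 then 0 else Nrec p t ((j, p j - 1) :: R) (ℓ-1)) * Ccomb ℓ u) (t+1)]
    have hc : ∀ i : ℕ, Ccomb (i+1) u = Ccomb i (u - 1) + Ccomb i (u + 1) := fun i => rfl
    simp only [Nat.add_sub_cancel, if_false, if_true, ite_true, ite_false, zero_mul, add_zero]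
    have hrw : ∑ x ∈ Finset.range (t+1),
          (if x + 1 = 0 then 0 else Nrec p t ((j, p j - 1) :: R) x) * Ccomb (x+1) u
        = ∑ x ∈ Finset.range (t+1), (Nrec p t ((j, p j - 1) :: R) x * Ccomb x (u+1)
            + Nrec p t ((j, p j - 1) :: R) x * Ccomb x (u-1)) := by
      apply Finset.sum_congr rfl
      intro i _
      rw [if_neg (Nat.succ_ne_zero i), hc i, mul_add]
      ring
    rw [hrw, Finset.sum_add_distrib,
      Finset.sum_range_succ (fun ℓ => Nrec p t ((j, p j - 1) :: R) ℓ * Ccomb ℓ (u+1)) (t+1),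
      Finset.sum_range_succ (fun ℓ => Nrec p t ((j, p j - 1) :: R) ℓ * Ccomb ℓ (u-1)) (t+1),
      Nrec_supp p t _ (t+1) (by omega)]
    simp
  rw [h1, h2]
  ring

lemma Ssum_cons (t r : ℕ) (f : Fin k × ℕ) (L0 : List (Fin k × ℕ)) (z : ℤ) :
    Ssum p t r (f :: L0) z
      = ∑ B : Fin L0.length → Bool, ∑ ℓ ∈ Finset.range r,
          (Nrec p t ((f.1, f.2) :: reflL p L0 B) ℓ * Ccomb ℓ (z + (cntB B : ℤ))
           + Nrec p t ((f.1, p f.1 - f.2) :: reflL p L0 B) ℓ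
              * Ccomb ℓ (z + 1 + (cntB B : ℤ))) := by
  show (∑ B : Fin (L0.length + 1) → Bool, ∑ ℓ ∈ Finset.range r,
      Nrec p t (reflL p (f :: L0) B) ℓ * Ccomb ℓ (z + (cntB B : ℤ))) = _
  rw [sum_split]
  rw [Fintype.sum_bool]
  rw [← Finset.sum_add_distrib]
  apply Finset.sum_congr rfl
  intro B _
  rw [← Finset.sum_add_distrib]
  apply Finset.sum_congr rfl
  intro ℓ _
  rw [reflL_cons, reflL_cons, cntB_cons, cntB_cons]
  simp only [Fin.cons_zero, Fin.tail_cons, if_true, if_false, Bool.false_eq_true]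
  push_cast
  have e1 : z + (1 + (cntB B : ℤ)) = z + 1 + (cntB B : ℤ) := by ring
  have e2 : z + (0 + (cntB B : ℤ)) = z + (cntB B : ℤ) := by ring
  rw [e1, e2]
  ring

lemma child_sum (hp : ∀ i, 2 ≤ p i) (t : ℕ) (l : List (Fin k × ℕ)) (z : ℤ) (j : Fin k) :
    ∑ B : Fin l.length → Bool, ∑ ℓ ∈ Finset.range (t+2),
      (2 * Nrec p t ((j,1) :: reflL p l B) ℓ +
        (if ℓ = 0 then 0 else Nrec p t ((j, p j - 1) :: reflL p l B) (ℓ-1))) *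
        Ccomb ℓ (z + (cntB B : ℤ))
    = Ssum p t (t+2) ((j,1) :: l) z + Ssum p t (t+2) ((j, p j - 1) :: l) (z-1) := by
  rw [Ssum_cons, Ssum_cons, ← Finset.sum_add_distrib]
  apply Finset.sum_congr rfl
  intro B _
  rw [child_core p t (reflL p l B) j (z + (cntB B : ℤ)), ← Finset.sum_add_distrib,
    ← Finset.sum_add_distrib, ← Finset.sum_add_distrib, ← Finset.sum_add_distrib]
  apply Finset.sum_congr rfl
  intro ℓ _
  have e1 : p j - (p j - 1) = 1 := by have := hp j; omega
  have e2 : z + (cntB B : ℤ) + 1 = z + 1 + (cntB B : ℤ) := by ring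
  have e3 : z + (cntB B : ℤ) - 1 = z - 1 + (cntB B : ℤ) := by ring
  have e4 : z - 1 + 1 + (cntB B : ℤ) = z + (cntB B : ℤ) := by ring
  simp only [e1, e2, e3, e4]
  try ring

end Core

section Tower
variable {k : ℕ} (p : Fin k → ℕ)

lemma tower_core (t ℓ : ℕ) (i : Fin k) (x : ℕ) (hx1 : 1 ≤ x) (hx2 : x < p i)
    (R : List (Fin k × ℕ)) (C0 C1 : ℕ) :
    ((if x + 1 ≤ p i - 1 then Nrec p t ((i, x+1) :: R) ℓ else 0)
      + ((if 2 ≤ x then Nrec p t ((i, x-1) :: R) ℓ else 0)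
      + (if x = 1 then Nrec p t R ℓ else 0))) * C0
    + ((if (p i - x) + 1 ≤ p i - 1 then Nrec p t ((i, (p i - x) + 1) :: R) ℓ else 0)
      + ((if 2 ≤ p i - x then Nrec p t ((i, (p i - x) - 1) :: R) ℓ else 0)
      + (if p i - x = 1 then Nrec p t R ℓ else 0))) * C1
    = (if x + 1 = p i then Nrec p t R ℓ * C1
        else Nrec p t ((i, x+1) :: R) ℓ * C0 + Nrec p t ((i, p i - (x+1)) :: R) ℓ * C1)
      + (if x = 1 then Nrec p t R ℓ * C0
        else Nrec p t ((i, x-1) :: R) ℓ * C0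
          + Nrec p t ((i, p i - (x-1)) :: R) ℓ * C1) := by
  by_cases h1 : x = 1 <;> by_cases h2 : x + 1 = p i
  · -- x = 1, p i = 2
    rw [if_neg (by omega), if_neg (by omega), if_pos h1, if_neg (by omega),
      if_neg (by omega), if_pos (by omega), if_pos h2, if_pos h1]
    ring
  · -- x = 1 < p i - 1
    rw [if_pos (by omega), if_neg (by omega), if_pos h1, if_neg (by omega),
      if_pos (by omega), if_neg (by omega), if_neg h2, if_pos h1]
    have e1 : p i - x - 1 = p i - (x + 1) := by omega
    rw [e1]
    ring
  · -- x = p i - 1 ≥ 2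
    rw [if_neg (by omega), if_pos (by omega), if_neg h1, if_pos (by omega),
      if_neg (by omega), if_pos (by omega), if_pos h2, if_neg h1]
    have e1 : p i - x + 1 = p i - (x - 1) := by omega
    rw [e1]
    ring
  · -- generic
    rw [if_pos (by omega), if_pos (by omega), if_neg h1, if_pos (by omega),
      if_pos (by omega), if_neg (by omega), if_neg h2, if_neg h1]
    have e1 : p i - x + 1 = p i - (x - 1) := by omega
    have e2 : p i - x - 1 = p i - (x + 1) := by omega
    rw [e1, e2]
    ring

end Tower

section ConsStep
variable {k : ℕ} (p : Fin k → ℕ)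

lemma sum_ite_erase (i : Fin k) (X : Fin k → ℕ) :
    ∑ j, (if j = i then 0 else X j) = ∑ j ∈ Finset.univ.erase i, X j := by
  rw [← Finset.add_sum_erase Finset.univ _ (Finset.mem_univ i), if_pos rfl, zero_add]
  apply Finset.sum_congr rfl
  intro j hj
  rw [if_neg (Finset.ne_of_mem_erase hj)]

lemma cons_step (hp : ∀ i, 2 ≤ p i) (t : ℕ) (e : Fin k × ℕ) (L0 : List (Fin k × ℕ))
    (z : ℤ) (h1x : 1 ≤ e.2) (hx2 : e.2 < p e.1) :
    Ssum p (t+1) (t+2) (e :: L0) z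
    = ((if e.2 + 1 = p e.1 then Ssum p t (t+2) L0 (z+1)
          else Ssum p t (t+2) ((e.1, e.2+1) :: L0) z)
       + (if e.2 = 1 then Ssum p t (t+2) L0 z
          else Ssum p t (t+2) ((e.1, e.2-1) :: L0) z))
      + ∑ j ∈ Finset.univ.erase e.1,
          (Ssum p t (t+2) ((j,1) :: e :: L0) z
            + Ssum p t (t+2) ((j, p j - 1) :: e :: L0) (z-1)) := by
  -- Step 1: expand Nrec (t+1) pointwise and separate tower / children parts.
  have step1 : Ssum p (t+1) (t+2) (e :: L0) z
      = (∑ B : Fin (L0.length + 1) → Bool, ∑ ℓ ∈ Finset.range (t+2),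
          ((if (if B 0 then p e.1 - e.2 else e.2) + 1 ≤ p e.1 - 1
              then Nrec p t ((e.1, (if B 0 then p e.1 - e.2 else e.2) + 1)
                :: reflL p L0 (Fin.tail B)) ℓ else 0)
            + ((if 2 ≤ (if B 0 then p e.1 - e.2 else e.2)
              then Nrec p t ((e.1, (if B 0 then p e.1 - e.2 else e.2) - 1)
                :: reflL p L0 (Fin.tail B)) ℓ else 0)
            + (if (if B 0 then p e.1 - e.2 else e.2) = 1
              then Nrec p t (reflL p L0 (Fin.tail B)) ℓ else 0)))
            * Ccomb ℓ (z + (cntB B : ℤ)))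
        + ∑ B : Fin (L0.length + 1) → Bool, ∑ ℓ ∈ Finset.range (t+2),
          (∑ j : Fin k, (if j = e.1 then 0 else
            2 * Nrec p t ((j,1) :: reflL p (e :: L0) B) ℓ +
              (if ℓ = 0 then 0 else Nrec p t ((j, p j - 1) :: reflL p (e :: L0) B) (ℓ-1))))
            * Ccomb ℓ (z + (cntB B : ℤ)) := by
    show (∑ B : Fin (L0.length + 1) → Bool, ∑ ℓ ∈ Finset.range (t+2),
        Nrec p (t+1) (reflL p (e :: L0) B) ℓ * Ccomb ℓ (z + (cntB B : ℤ))) = _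
    rw [← Finset.sum_add_distrib]
    apply Finset.sum_congr rfl
    intro B _
    rw [← Finset.sum_add_distrib]
    apply Finset.sum_congr rfl
    intro ℓ _
    rw [← add_mul]
    congr 1
    rw [reflL_cons]
    simp only [Nrec]
    ring
  rw [step1]
  congr 1
  -- Tower part
  · rw [sum_split, Fintype.sum_bool, ← Finset.sum_add_distrib]
    trans (∑ B' : Fin L0.length → Bool,
      ((∑ ℓ ∈ Finset.range (t+2),
          (if e.2 + 1 = p e.1 then Nrec p t (reflL p L0 B') ℓ * Ccomb ℓ (z + 1 + (cntB B' : ℤ))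
            else Nrec p t ((e.1, e.2+1) :: reflL p L0 B') ℓ * Ccomb ℓ (z + (cntB B' : ℤ))
              + Nrec p t ((e.1, p e.1 - (e.2+1)) :: reflL p L0 B') ℓ
                  * Ccomb ℓ (z + 1 + (cntB B' : ℤ))))
        + ∑ ℓ ∈ Finset.range (t+2),
          (if e.2 = 1 then Nrec p t (reflL p L0 B') ℓ * Ccomb ℓ (z + (cntB B' : ℤ))
            else Nrec p t ((e.1, e.2-1) :: reflL p L0 B') ℓ * Ccomb ℓ (z + (cntB B' : ℤ))
              + Nrec p t ((e.1, p e.1 - (e.2-1)) :: reflL p L0 B') ℓ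
                  * Ccomb ℓ (z + 1 + (cntB B' : ℤ)))))
    · apply Finset.sum_congr rfl
      intro B' _
      rw [← Finset.sum_add_distrib, ← Finset.sum_add_distrib]
      apply Finset.sum_congr rfl
      intro ℓ _
      rw [cntB_cons, cntB_cons]
      simp only [Fin.cons_zero, Fin.tail_cons, if_true, if_false, Bool.false_eq_true]
      push_cast
      rw [show z + ((1:ℤ) + (cntB B' : ℤ)) = z + 1 + (cntB B' : ℤ) by ring,
        show z + ((0:ℤ) + (cntB B' : ℤ)) = z + (cntB B' : ℤ) by ring]
      rw [add_comm]
      exact tower_core p t ℓ e.1 e.2 h1x hx2 (reflL p L0 B')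
        (Ccomb ℓ (z + (cntB B' : ℤ))) (Ccomb ℓ (z + 1 + (cntB B' : ℤ)))
    · rw [Finset.sum_add_distrib]
      congr 1
      · by_cases he2 : e.2 + 1 = p e.1
        · simp only [if_pos he2]
          rfl
        · simp only [if_neg he2]
          exact (Ssum_cons p t (t+2) (e.1, e.2+1) L0 z).symm
      · by_cases he1 : e.2 = 1
        · simp only [if_pos he1]
          rfl
        · simp only [if_neg he1]
          exact (Ssum_cons p t (t+2) (e.1, e.2-1) L0 z).symm
  -- Children part
  · trans (∑ B : Fin (L0.length+1) → Bool, ∑ j : Fin k, (if j = e.1 then 0 else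
      ∑ ℓ ∈ Finset.range (t+2),
        (2 * Nrec p t ((j,1) :: reflL p (e :: L0) B) ℓ +
          (if ℓ = 0 then 0 else Nrec p t ((j, p j - 1) :: reflL p (e :: L0) B) (ℓ-1)))
          * Ccomb ℓ (z + (cntB B : ℤ))))
    · apply Finset.sum_congr rfl
      intro B _
      trans (∑ ℓ ∈ Finset.range (t+2), ∑ j : Fin k,
        (if j = e.1 then 0 else
          2 * Nrec p t ((j,1) :: reflL p (e :: L0) B) ℓ +
            (if ℓ = 0 then 0 else Nrec p t ((j, p j - 1) :: reflL p (e :: L0) B) (ℓ-1)))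
          * Ccomb ℓ (z + (cntB B : ℤ)))
      · apply Finset.sum_congr rfl
        intro ℓ _
        exact Finset.sum_mul _ _ _
      · rw [Finset.sum_comm]
        apply Finset.sum_congr rfl
        intro j _
        by_cases hj : j = e.1
        · simp [hj]
        · simp only [if_neg hj]
    · rw [Finset.sum_comm]
      trans (∑ j : Fin k, (if j = e.1 then 0 else
        ∑ B : Fin (L0.length+1) → Bool, ∑ ℓ ∈ Finset.range (t+2),
          (2 * Nrec p t ((j,1) :: reflL p (e :: L0) B) ℓ +
            (if ℓ = 0 then 0 else Nrec p t ((j, p j - 1) :: reflL p (e :: L0) B) (ℓ-1)))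
            * Ccomb ℓ (z + (cntB B : ℤ))))
      · apply Finset.sum_congr rfl
        intro j _
        by_cases hj : j = e.1
        · simp [hj]
        · simp only [if_neg hj]
      · rw [sum_ite_erase]
        apply Finset.sum_congr rfl
        intro j _
        exact child_sum p hp t (e :: L0) z j

end ConsStep

section Main
variable {k : ℕ} (p : Fin k → ℕ)

lemma sum_Bnil (f : (Fin (List.length ([] : List (Fin k × ℕ))) → Bool) → ℕ) :
    ∑ B, f B = f (fun a => a.elim0) :=
  Fintype.sum_eq_single _ (fun b hb => absurd (funext fun a => a.elim0) hb)

lemma cnt_nil : (cntB (fun a : Fin (List.length ([] : List (Fin k × ℕ))) => a.elim0)) = 0 :=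
  rfl

lemma nil_step (hp : ∀ i, 2 ≤ p i) (t : ℕ) (z : ℤ) :
    Ssum p (t+1) (t+2) ([] : List (Fin k × ℕ)) z
      = ∑ j : Fin k, (Ssum p t (t+2) [(j,1)] z + Ssum p t (t+2) [(j, p j - 1)] (z-1)) := by
  have hchild : ∀ j : Fin k,
      (∑ ℓ ∈ Finset.range (t+2),
        (2 * Nrec p t [(j,1)] ℓ +
          (if ℓ = 0 then 0 else Nrec p t [(j, p j - 1)] (ℓ-1))) * Ccomb ℓ (z + (0:ℤ)))
      = Ssum p t (t+2) [(j,1)] z + Ssum p t (t+2) [(j, p j - 1)] (z-1) := by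
    intro j
    have h := child_sum p hp t [] z j
    rw [sum_Bnil] at h
    rw [reflL_nil, cnt_nil] at h
    exact h
  unfold Ssum
  rw [sum_Bnil]
  rw [reflL_nil, cnt_nil]
  have hexp : ∀ ℓ, Nrec p (t+1) ([] : List (Fin k × ℕ)) ℓ
      = ∑ j : Fin k, (2 * Nrec p t [(j,1)] ℓ +
          (if ℓ = 0 then 0 else Nrec p t [(j, p j - 1)] (ℓ-1))) := fun ℓ => rfl
  calc ∑ ℓ ∈ Finset.range (t+2), Nrec p (t+1) ([] : List (Fin k × ℕ)) ℓ * Ccomb ℓ (z + (0:ℤ))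
      = ∑ ℓ ∈ Finset.range (t+2), ∑ j : Fin k,
          (2 * Nrec p t [(j,1)] ℓ +
            (if ℓ = 0 then 0 else Nrec p t [(j, p j - 1)] (ℓ-1))) * Ccomb ℓ (z + (0:ℤ)) := by
        apply Finset.sum_congr rfl
        intro ℓ _
        rw [hexp ℓ]
        exact Finset.sum_mul _ _ _
    _ = ∑ j : Fin k, ∑ ℓ ∈ Finset.range (t+2),
          (2 * Nrec p t [(j,1)] ℓ +
            (if ℓ = 0 then 0 else Nrec p t [(j, p j - 1)] (ℓ-1))) * Ccomb ℓ (z + (0:ℤ)) :=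
        Finset.sum_comm
    _ = _ := by
        apply Finset.sum_congr rfl
        intro j _
        exact hchild j

theorem main_inv (hp : ∀ i, 2 ≤ p i) :
    ∀ (t : ℕ) (l : List (Fin k × ℕ)) (z : ℤ) (hv : ValidL p l),
      Fcnt p hp t ⟨(l, z), hv⟩ = Ssum p t (t+1) l z := by
  intro t
  induction t with
  | zero =>
    intro l z hv
    rw [Fcnt_zero p hp ⟨(l, z), hv⟩]
    match l with
    | [] =>
      unfold Ssum
      rw [sum_Bnil (fun B => ∑ ℓ ∈ Finset.range 1,
        Nrec p 0 (reflL p [] B) ℓ * Ccomb ℓ (z + (cntB B : ℤ)))]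
      rw [reflL_nil, cnt_nil, Finset.sum_range_one]
      have h1 : Nrec p 0 ([] : List (Fin k × ℕ)) 0 = 1 := rfl
      rw [h1, one_mul]
      have h2 : z + ((0:ℕ):ℤ) = z := by push_cast; ring
      rw [h2]
      show _ = if z = 0 then 1 else 0
      by_cases hz : z = 0
      · subst hz
        rw [if_pos (show (⟨([], (0:ℤ)), hv⟩ : St p) = baseSt p from rfl)]
        simp
      · rw [if_neg hz, if_neg (by
          intro hc
          apply hz
          have := congrArg (fun s : St p => s.1.2) hc
          exact this)]
    | e :: L0 =>
      rw [if_neg (by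
        intro hc
        have := congrArg (fun s : St p => s.1.1) hc
        simp [baseSt] at this)]
      unfold Ssum
      symm
      apply Finset.sum_eq_zero
      intro B _
      apply Finset.sum_eq_zero
      intro ℓ _
      have : Nrec p 0 (reflL p (e :: L0) B) ℓ = 0 := by
        unfold Nrec
        rw [if_neg]
        rintro ⟨hL, -⟩
        have := congrArg List.length hL
        rw [reflL] at this
        simp at this
      rw [this, zero_mul]
  | succ t ih =>
    intro l z hv
    rw [Fcnt_succ p hp t ⟨(l, z), hv⟩, Fintype.sum_prod_type]
    match l with
    | [] =>
      rw [nil_step p hp t z]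
      apply Finset.sum_congr rfl
      intro j _
      rw [Fintype.sum_bool]
      have h1 : invStep p hp (j, true) ⟨(([] : List (Fin k × ℕ)), z), hv⟩
          = ⟨([(j, p j - 1)], z - 1),
              act_valid p hp j false (([] : List (Fin k × ℕ)), z) hv⟩ := rfl
      have h2 : invStep p hp (j, false) ⟨(([] : List (Fin k × ℕ)), z), hv⟩
          = ⟨([(j, 1)], z),
              act_valid p hp j true (([] : List (Fin k × ℕ)), z) hv⟩ := rfl
      erw [h1, h2, ih _ _ _, ih _ _ _, ← Ssum_ext p t, ← Ssum_ext p t]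
      ring
    | e :: L0 =>
      obtain ⟨hx1, hx2, h3, h4⟩ := hv
      rw [cons_step p hp t e L0 z hx1 hx2]
      rw [← Finset.add_sum_erase Finset.univ _ (Finset.mem_univ e.1)]
      congr 1
      -- j = e.1 terms
      · rw [Fintype.sum_bool]
        have hvt : ValidL p (e :: L0) := ⟨hx1, hx2, h3, h4⟩
        by_cases he2 : e.2 + 1 = p e.1 <;> by_cases he1 : e.2 = 1
        · -- act true pops up, act false pops down
          have h1 : invStep p hp (e.1, true) ⟨((e :: L0), z), hvt⟩ = ⟨(L0, z), h4⟩ := by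
            apply Subtype.ext
            show act p e.1 false (e :: L0, z) = (L0, z)
            simp [act, he1]
          have h2 : invStep p hp (e.1, false) ⟨((e :: L0), z), hvt⟩ = ⟨(L0, z+1), h4⟩ := by
            apply Subtype.ext
            show act p e.1 true (e :: L0, z) = (L0, z+1)
            simp [act, he2]
          erw [h1, h2, ih _ _ _, ih _ _ _, ← Ssum_ext p t, ← Ssum_ext p t,
            if_pos he2, if_pos he1]
          ring
        · have h1 : invStep p hp (e.1, true) ⟨((e :: L0), z), hvt⟩
              = ⟨((e.1, e.2 - 1) :: L0, z), ⟨show 1 ≤ e.2 - 1 by omega, show e.2 - 1 < p e.1 by omega, h3, h4⟩⟩ := by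
            apply Subtype.ext
            show act p e.1 false (e :: L0, z) = ((e.1, e.2 - 1) :: L0, z)
            simp [act, he1]
          have h2 : invStep p hp (e.1, false) ⟨((e :: L0), z), hvt⟩ = ⟨(L0, z+1), h4⟩ := by
            apply Subtype.ext
            show act p e.1 true (e :: L0, z) = (L0, z+1)
            simp [act, he2]
          erw [h1, h2, ih _ _ _, ih _ _ _, ← Ssum_ext p t, ← Ssum_ext p t,
            if_pos he2, if_neg he1]
          ring
        · have h1 : invStep p hp (e.1, true) ⟨((e :: L0), z), hvt⟩ = ⟨(L0, z), h4⟩ := by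
            apply Subtype.ext
            show act p e.1 false (e :: L0, z) = (L0, z)
            simp [act, he1]
          have h2 : invStep p hp (e.1, false) ⟨((e :: L0), z), hvt⟩
              = ⟨((e.1, e.2 + 1) :: L0, z), ⟨show 1 ≤ e.2 + 1 by omega, show e.2 + 1 < p e.1 by omega, h3, h4⟩⟩ := by
            apply Subtype.ext
            show act p e.1 true (e :: L0, z) = ((e.1, e.2 + 1) :: L0, z)
            simp [act, he2]
          erw [h1, h2, ih _ _ _, ih _ _ _, ← Ssum_ext p t, ← Ssum_ext p t,
            if_neg he2, if_pos he1]
          ring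
        · have h1 : invStep p hp (e.1, true) ⟨((e :: L0), z), hvt⟩
              = ⟨((e.1, e.2 - 1) :: L0, z), ⟨show 1 ≤ e.2 - 1 by omega, show e.2 - 1 < p e.1 by omega, h3, h4⟩⟩ := by
            apply Subtype.ext
            show act p e.1 false (e :: L0, z) = ((e.1, e.2 - 1) :: L0, z)
            simp [act, he1]
          have h2 : invStep p hp (e.1, false) ⟨((e :: L0), z), hvt⟩
              = ⟨((e.1, e.2 + 1) :: L0, z), ⟨show 1 ≤ e.2 + 1 by omega, show e.2 + 1 < p e.1 by omega, h3, h4⟩⟩ := by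
            apply Subtype.ext
            show act p e.1 true (e :: L0, z) = ((e.1, e.2 + 1) :: L0, z)
            simp [act, he2]
          erw [h1, h2, ih _ _ _, ih _ _ _, ← Ssum_ext p t, ← Ssum_ext p t,
            if_neg he2, if_neg he1]
          ring
      -- j ≠ e.1 terms
      · apply Finset.sum_congr rfl
        intro j hj
        have hje : ¬ (e.1 = j) := fun hc => (Finset.ne_of_mem_erase hj) hc.symm
        have hvt : ValidL p (e :: L0) := ⟨hx1, hx2, h3, h4⟩
        rw [Fintype.sum_bool]
        have h1 : invStep p hp (j, true) ⟨((e :: L0), z), hvt⟩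
            = ⟨((j, p j - 1) :: e :: L0, z - 1),
                ⟨show 1 ≤ p j - 1 by have := hp j; omega,
                 show p j - 1 < p j by have := hp j; omega, hje, hx1, hx2, h3, h4⟩⟩ := by
          apply Subtype.ext
          show act p j false (e :: L0, z) = ((j, p j - 1) :: e :: L0, z - 1)
          simp [act, hje]
        have h2 : invStep p hp (j, false) ⟨((e :: L0), z), hvt⟩
            = ⟨((j, 1) :: e :: L0, z),
                ⟨le_refl 1, show 1 < p j by have := hp j; omega, hje, hx1, hx2, h3, h4⟩⟩ := by
          apply Subtype.ext
          show act p j true (e :: L0, z) = ((j, 1) :: e :: L0, z)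
          simp [act, hje]
        erw [h1, h2, ih _ _ _, ih _ _ _, ← Ssum_ext p t, ← Ssum_ext p t]
        ring

end Main

/-- Decomposition lemma: for each `n` there are naturals `d_0,…,d_n` with
`f(n,m) = Σ_{ℓ=0}^{n} d_ℓ · c(ℓ,m)`, where `c(ℓ,m) = C(ℓ, (ℓ+m)/2)` if `|m| ≤ ℓ`
and `ℓ + m` is even, and `c(ℓ,m) = 0` otherwise; i.e. `Σ_m f(n,m)q^m` is a
nonnegative-integer combination of the `(q + q⁻¹)^ℓ`, `0 ≤ ℓ ≤ n`. -/
theorem winding_decomposition (k : ℕ) (hk : 2 ≤ k) (p : Fin k → ℕ)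
    (hp : ∀ i, 2 ≤ p i) (n : ℕ) :
    ∃ d : ℕ → ℕ, ∀ m : ℤ,
      (fcount p (fin0 hk) n m : ℤ) =
        ∑ ℓ ∈ Finset.range (n+1), (d ℓ : ℤ) *
          (if |m| ≤ (ℓ : ℤ) ∧ Even ((ℓ : ℤ) + m)
            then (Nat.choose ℓ (((ℓ : ℤ) + m) / 2).toNat : ℤ) else 0) := by
  refine ⟨Nrec p n [], ?_⟩
  intro m
  have h1 : fcount p (fin0 hk) n m = Fcnt p hp n ⟨([], m), trivial⟩ := by
    unfold fcount Fcnt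
    apply Nat.card_congr
    apply Equiv.subtypeEquivRight
    intro w
    exact val_iff_mu p hp (fin0 hk) w m
  have h2 := main_inv p hp n [] m trivial
  have h3 : Ssum p n (n+1) ([] : List (Fin k × ℕ)) m
      = ∑ ℓ ∈ Finset.range (n+1), Nrec p n [] ℓ * Ccomb ℓ m := by
    unfold Ssum
    rw [sum_Bnil (fun B => ∑ ℓ ∈ Finset.range (n+1),
      Nrec p n (reflL p [] B) ℓ * Ccomb ℓ (m + (cntB B : ℤ)))]
    rw [reflL_nil, cnt_nil]
    apply Finset.sum_congr rfl
    intro ℓ _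
    norm_num
  rw [h1, h2, h3]
  push_cast
  apply Finset.sum_congr rfl
  intro ℓ _
  rw [Ccomb_closed ℓ m]
end

section
/- Let k ≥ 2 and p_1,…,p_k ≥ 2 be integers and fix a real number q > 0. Then the sequence n ↦ (Σ_{m=−2n}^{2n} f(2n, m) · q^m)^{1/(2n)} converges to a finite limit as n → ∞. -/
namespace GrowthAux

lemma wordValue_eq_ofFn {G : Type*} [Group G] {k : ℕ} (g : Fin k → G) {n : ℕ}
    (w : Fin n → Fin k × Bool) :
    wordValue g w = (List.ofFn fun j => if (w j).2 then g (w j).1 else (g (w j).1)⁻¹).prod := by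
  rw [wordValue, ← List.ofFn_eq_map]

lemma wordValue_split {G : Type*} [Group G] {k : ℕ} (g : Fin k → G) {m n : ℕ}
    (w : Fin (m + n) → Fin k × Bool) :
    wordValue g w = wordValue g (fun i => w (Fin.castAdd n i)) *
      wordValue g (fun j => w (Fin.natAdd m j)) := by
  rw [wordValue_eq_ofFn, wordValue_eq_ofFn, wordValue_eq_ofFn, ← List.prod_append]
  rw [List.ofFn_add (f := fun j => if (w j).2 then g (w j).1 else (g (w j).1)⁻¹)]
  rfl

lemma wordValue_append {G : Type*} [Group G] {k : ℕ} (g : Fin k → G) {m n : ℕ}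
    (w₁ : Fin m → Fin k × Bool) (w₂ : Fin n → Fin k × Bool) :
    wordValue g (Fin.append w₁ w₂) = wordValue g w₁ * wordValue g w₂ := by
  rw [wordValue_split]
  simp [Fin.append_left, Fin.append_right]

variable {k : ℕ} (p : Fin k → ℕ) (i₀ : Fin k)

/-- The generators of the presented group. -/
noncomputable abbrev A : Fin k → PresentedGroup (Grels p i₀) := fun i => PresentedGroup.of i

/-- The central element `Δ`. -/
noncomputable abbrev D : PresentedGroup (Grels p i₀) :=
  (PresentedGroup.of i₀ : PresentedGroup (Grels p i₀)) ^ (p i₀)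

noncomputable def phi : PresentedGroup (Grels p i₀) →* Multiplicative ℤ :=
  PresentedGroup.toGroup (f := fun i => Multiplicative.ofAdd (((∏ j, p j) / p i : ℕ) : ℤ))
    (by
      rintro r ⟨i, rfl⟩
      rw [map_mul, map_inv, map_pow, map_pow, FreeGroup.lift_apply_of, FreeGroup.lift_apply_of,
        mul_inv_eq_one]
      have h : ∀ j : Fin k, (Multiplicative.ofAdd (((∏ j, p j) / p j : ℕ) : ℤ)) ^ (p j)
          = Multiplicative.ofAdd ((∏ j, p j : ℕ) : ℤ) := by
        intro j
        have : p j * ((∏ j, p j) / p j) = ∏ j, p j :=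
          Nat.mul_div_cancel' (Finset.dvd_prod_of_mem _ (Finset.mem_univ j))
        rw [← ofAdd_nsmul]
        congr 1
        rw [nsmul_eq_mul]
        exact_mod_cast this
      rw [h i, h i₀])

lemma phi_of (i : Fin k) :
    phi p i₀ (PresentedGroup.of i) = Multiplicative.ofAdd (((∏ j, p j) / p i : ℕ) : ℤ) :=
  PresentedGroup.toGroup.of _

lemma phi_delta :
    phi p i₀ (D p i₀) = Multiplicative.ofAdd ((∏ j, p j : ℕ) : ℤ) := by
  rw [D, map_pow, phi_of, ← ofAdd_nsmul]
  congr 1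
  have : p i₀ * ((∏ j, p j) / p i₀) = ∏ j, p j :=
    Nat.mul_div_cancel' (Finset.dvd_prod_of_mem _ (Finset.mem_univ i₀))
  rw [nsmul_eq_mul]
  exact_mod_cast this

lemma delta_zpow_inj (hp : ∀ i, 2 ≤ p i) {m m' : ℤ}
    (h : D p i₀ ^ m = D p i₀ ^ m') : m = m' := by
  have hP : (0:ℤ) < ((∏ j, p j : ℕ) : ℤ) := by
    have : 0 < ∏ j, p j := Finset.prod_pos fun j _ => lt_of_lt_of_le (by norm_num) (hp j)
    exact_mod_cast this
  have := congrArg (fun x => Multiplicative.toAdd (phi p i₀ x)) h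
  simp only [map_zpow, phi_delta, Int.toAdd_zpow, toAdd_ofAdd] at this
  exact mul_left_cancel₀ hP.ne' this

lemma abs_toAdd_list (l : List (Fin k × Bool)) :
    |Multiplicative.toAdd (phi p i₀
      ((l.map (fun x => if x.2 then A p i₀ x.1 else (A p i₀ x.1)⁻¹)).prod))|
      ≤ (l.length : ℤ) * ((∏ j, p j : ℕ) : ℤ) := by
  induction l with
  | nil => simp
  | cons hd tl ih =>
    rw [List.map_cons, List.prod_cons, map_mul, toAdd_mul]
    refine (abs_add_le _ _).trans ?_
    have hhd : |Multiplicative.toAdd (phi p i₀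
        (if hd.2 then A p i₀ hd.1 else (A p i₀ hd.1)⁻¹))| ≤ ((∏ j, p j : ℕ) : ℤ) := by
      have hle : (((∏ j, p j) / p hd.1 : ℕ) : ℤ) ≤ ((∏ j, p j : ℕ) : ℤ) := by
        exact_mod_cast Nat.div_le_self _ _
      have hnn : (0:ℤ) ≤ (((∏ j, p j) / p hd.1 : ℕ) : ℤ) := Int.natCast_nonneg _
      have key : |Multiplicative.toAdd (phi p i₀ (A p i₀ hd.1))| ≤ ((∏ j, p j : ℕ) : ℤ) := by
        show |Multiplicative.toAdd (phi p i₀ (PresentedGroup.of hd.1))| ≤ _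
        rw [phi_of, toAdd_ofAdd, abs_of_nonneg hnn]
        exact hle
      by_cases h : hd.2
      · simpa [h] using key
      · simp only [h, Bool.false_eq_true, if_false, map_inv, toAdd_inv, abs_neg]
        exact key
    have : (tl.length : ℤ) * ((∏ j, p j : ℕ) : ℤ) + ((∏ j, p j : ℕ) : ℤ)
        = ((hd :: tl).length : ℤ) * ((∏ j, p j : ℕ) : ℤ) := by
      simp [List.length_cons]; ring
    linarith [ih]

lemma abs_m_le (hp : ∀ i, 2 ≤ p i) {n : ℕ} {m : ℤ} {w : Fin n → Fin k × Bool}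
    (hw : wordValue (A p i₀) w = D p i₀ ^ m) : |m| ≤ (n : ℤ) := by
  have hP : (0:ℤ) < ((∏ j, p j : ℕ) : ℤ) := by
    have : 0 < ∏ j, p j := Finset.prod_pos fun j _ => lt_of_lt_of_le (by norm_num) (hp j)
    exact_mod_cast this
  have hb := abs_toAdd_list p i₀ ((List.finRange n).map w)
  rw [List.map_map, List.length_map, List.length_finRange] at hb
  have : ((List.finRange n).map ((fun x : Fin k × Bool =>
      if x.2 then A p i₀ x.1 else (A p i₀ x.1)⁻¹) ∘ w)).prod = wordValue (A p i₀) w := rfl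
  rw [this, hw] at hb
  have h2 : Multiplicative.toAdd (phi p i₀ (D p i₀ ^ m)) = ((∏ j, p j : ℕ) : ℤ) * m := by
    rw [map_zpow, phi_delta, Int.toAdd_zpow, toAdd_ofAdd]
  rw [h2, abs_mul, abs_of_pos hP] at hb
  calc |m| = ((∏ j, p j : ℕ) : ℤ) * |m| / ((∏ j, p j : ℕ) : ℤ) := by
        rw [mul_comm, Int.mul_ediv_cancel _ hP.ne']
    _ ≤ (n : ℤ) * ((∏ j, p j : ℕ) : ℤ) / ((∏ j, p j : ℕ) : ℤ) :=
        Int.ediv_le_ediv hP hb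
    _ = (n : ℤ) := Int.mul_ediv_cancel _ hP.ne'

open Classical in
/-- weight of a word: `q^m` if its value is `Δ^m`, else `0`. -/
noncomputable def chi (q : ℝ) (N : ℕ) (w : Fin N → Fin k × Bool) : ℝ :=
  ∑ m ∈ Finset.Icc (-(N:ℤ)) (N:ℤ),
    if wordValue (A p i₀) w = D p i₀ ^ m then q ^ m else 0

lemma chi_nonneg {q : ℝ} (hq : 0 < q) (N : ℕ) (w : Fin N → Fin k × Bool) :
    0 ≤ chi p i₀ q N w := by
  refine Finset.sum_nonneg fun m _ => ?_
  split
  · positivity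
  · exact le_refl 0

lemma chi_eq (hp : ∀ i, 2 ≤ p i) {q : ℝ} {N : ℕ} {w : Fin N → Fin k × Bool} {m : ℤ}
    (hm : wordValue (A p i₀) w = D p i₀ ^ m) (hmn : |m| ≤ (N:ℤ)) :
    chi p i₀ q N w = q ^ m := by
  classical
  rw [chi]
  have hcong : ∀ m' ∈ Finset.Icc (-(N:ℤ)) (N:ℤ),
      (if wordValue (A p i₀) w = D p i₀ ^ m' then q ^ m' else 0)
        = (if m' = m then q ^ m' else 0) := by
    intro m' _
    have : (wordValue (A p i₀) w = D p i₀ ^ m') ↔ m' = m := by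
      constructor
      · intro h
        exact delta_zpow_inj p i₀ hp (hm.symm.trans h).symm
      · rintro rfl
        exact hm
    simp only [this]
  rw [Finset.sum_congr rfl hcong, Finset.sum_ite_eq' (Finset.Icc (-(N:ℤ)) (N:ℤ))]
  rw [if_pos (Finset.mem_Icc.mpr ⟨neg_le_of_abs_le hmn, le_of_abs_le hmn⟩)]

lemma chi_eq_zero {q : ℝ} {N : ℕ} {w : Fin N → Fin k × Bool}
    (h : ¬ ∃ m : ℤ, wordValue (A p i₀) w = D p i₀ ^ m) :
    chi p i₀ q N w = 0 := by
  rw [chi]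
  refine Finset.sum_eq_zero fun m _ => ?_
  rw [if_neg fun hc => h ⟨m, hc⟩]

lemma chi_mul (hp : ∀ i, 2 ≤ p i) {q : ℝ} (hq : 0 < q) {N₁ N₂ : ℕ}
    (w₁ : Fin N₁ → Fin k × Bool) (w₂ : Fin N₂ → Fin k × Bool) :
    chi p i₀ q N₁ w₁ * chi p i₀ q N₂ w₂ ≤ chi p i₀ q (N₁ + N₂) (Fin.append w₁ w₂) := by
  by_cases h1 : ∃ m : ℤ, wordValue (A p i₀) w₁ = D p i₀ ^ m
  · by_cases h2 : ∃ m : ℤ, wordValue (A p i₀) w₂ = D p i₀ ^ m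
    · obtain ⟨m₁, hm₁⟩ := h1
      obtain ⟨m₂, hm₂⟩ := h2
      have hb₁ := abs_m_le p i₀ hp hm₁
      have hb₂ := abs_m_le p i₀ hp hm₂
      have hval : wordValue (A p i₀) (Fin.append w₁ w₂) = D p i₀ ^ (m₁ + m₂) := by
        rw [wordValue_append, hm₁, hm₂, zpow_add]
      have hb : |m₁ + m₂| ≤ ((N₁ + N₂ : ℕ) : ℤ) := by
        calc |m₁ + m₂| ≤ |m₁| + |m₂| := abs_add_le _ _
          _ ≤ ((N₁ + N₂ : ℕ) : ℤ) := by push_cast; linarith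
      rw [chi_eq p i₀ hp hm₁ hb₁, chi_eq p i₀ hp hm₂ hb₂, chi_eq p i₀ hp hval hb,
        ← zpow_add₀ hq.ne']
    · rw [chi_eq_zero p i₀ h2, mul_zero]
      exact chi_nonneg p i₀ hq _ _
  · rw [chi_eq_zero p i₀ h1, zero_mul]
    exact chi_nonneg p i₀ hq _ _

/-- The weighted sum `S`. -/
noncomputable def SS (q : ℝ) (N : ℕ) : ℝ :=
  ∑ m ∈ Finset.Icc (-(N:ℤ)) (N:ℤ), (fcount p i₀ N m : ℝ) * q ^ m

lemma SS_eq_sum_chi (q : ℝ) (N : ℕ) :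
    SS p i₀ q N = ∑ w : Fin N → Fin k × Bool, chi p i₀ q N w := by
  classical
  rw [SS]
  unfold chi
  rw [Finset.sum_comm]
  refine Finset.sum_congr rfl fun m _ => ?_
  have hcard : fcount p i₀ N m
      = (Finset.univ.filter
          (fun w : Fin N → Fin k × Bool => wordValue (A p i₀) w = D p i₀ ^ m)).card := by
    rw [fcount, Nat.card_eq_fintype_card]
    exact Fintype.card_subtype _
  rw [hcard]
  rw [← Finset.sum_filter, Finset.sum_const, nsmul_eq_mul]

/-- the trivial word `a a⁻¹ a a⁻¹ …` of length `2n`. -/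
def eW (n : ℕ) : Fin (2*n) → Fin k × Bool := fun j => (i₀, decide (j.val % 2 = 0))

lemma eW_value (n : ℕ) : wordValue (A p i₀) (eW i₀ n) = 1 := by
  induction n with
  | zero =>
    show ((List.finRange 0).map _).prod = 1
    simp
  | succ n ih =>
    have hsplit := wordValue_split (m := 2*n) (n := 2) (A p i₀) (eW i₀ (n+1))
    have h1 : (fun i : Fin (2*n) => eW i₀ (n+1) (Fin.castAdd 2 i)) = eW i₀ n := by
      funext i
      simp [eW, Fin.coe_castAdd]
    have h2 : wordValue (A p i₀) (fun j : Fin 2 => eW i₀ (n+1) (Fin.natAdd (2*n) j)) = 1 := by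
      have he : ∀ j : Fin 2, eW i₀ (n+1) (Fin.natAdd (2*n) j) = (i₀, decide (j.val % 2 = 0)) := by
        intro j
        simp only [eW, Fin.coe_natAdd]
        have : (2*n + j.val) % 2 = j.val % 2 := by omega
        simp only [this]
      rw [wordValue_eq_ofFn]
      simp only [he]
      norm_num [List.ofFn_succ]
    rw [hsplit, h1, ih, h2, one_mul]

lemma one_le_SS (hp : ∀ i, 2 ≤ p i) {q : ℝ} (hq : 0 < q) (n : ℕ) :
    1 ≤ SS p i₀ q (2*n) := by
  rw [SS_eq_sum_chi]
  have hchi : chi p i₀ q (2*n) (eW i₀ n) = 1 := by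
    have hm : wordValue (A p i₀) (eW i₀ n) = D p i₀ ^ (0:ℤ) := by
      rw [zpow_zero, eW_value]
    rw [chi_eq p i₀ hp hm (by simp), zpow_zero]
  calc (1:ℝ) = chi p i₀ q (2*n) (eW i₀ n) := hchi.symm
    _ ≤ ∑ w : Fin (2*n) → Fin k × Bool, chi p i₀ q (2*n) w :=
        Finset.single_le_sum (fun w _ => chi_nonneg p i₀ hq _ w) (Finset.mem_univ _)

lemma SS_pos (hp : ∀ i, 2 ≤ p i) {q : ℝ} (hq : 0 < q) (n : ℕ) : 0 < SS p i₀ q (2*n) :=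
  lt_of_lt_of_le one_pos (one_le_SS p i₀ hp hq n)

lemma SS_supermul (hp : ∀ i, 2 ≤ p i) {q : ℝ} (hq : 0 < q) (N₁ N₂ : ℕ) :
    SS p i₀ q N₁ * SS p i₀ q N₂ ≤ SS p i₀ q (N₁ + N₂) := by
  classical
  rw [SS_eq_sum_chi, SS_eq_sum_chi, SS_eq_sum_chi, Finset.sum_mul_sum]
  have step1 : ∑ w₁ : Fin N₁ → Fin k × Bool, ∑ w₂ : Fin N₂ → Fin k × Bool,
      chi p i₀ q N₁ w₁ * chi p i₀ q N₂ w₂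
      ≤ ∑ w₁ : Fin N₁ → Fin k × Bool, ∑ w₂ : Fin N₂ → Fin k × Bool,
        chi p i₀ q (N₁+N₂) (Fin.append w₁ w₂) :=
    Finset.sum_le_sum fun w₁ _ => Finset.sum_le_sum fun w₂ _ => chi_mul p i₀ hp hq w₁ w₂
  refine step1.trans ?_
  rw [← Fintype.sum_prod_type' (f := fun (w₁ : Fin N₁ → Fin k × Bool) (w₂ : Fin N₂ → Fin k × Bool) => chi p i₀ q (N₁+N₂) (Fin.append w₁ w₂))]
  have hinj : Function.Injective
      (fun wp : (Fin N₁ → Fin k × Bool) × (Fin N₂ → Fin k × Bool) =>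
        Fin.append wp.1 wp.2) := by
    intro a b h
    have h1 : a.1 = b.1 := by
      funext i
      have := congrFun h (Fin.castAdd N₂ i)
      simpa [Fin.append_left] using this
    have h2 : a.2 = b.2 := by
      funext i
      have := congrFun h (Fin.natAdd N₁ i)
      simpa [Fin.append_right] using this
    exact Prod.ext h1 h2
  rw [show (∑ wp : (Fin N₁ → Fin k × Bool) × (Fin N₂ → Fin k × Bool),
        chi p i₀ q (N₁+N₂) (Fin.append wp.1 wp.2))
      = ∑ w ∈ Finset.univ.image (fun wp : (Fin N₁ → Fin k × Bool) × (Fin N₂ → Fin k × Bool)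
          => Fin.append wp.1 wp.2), chi p i₀ q (N₁+N₂) w from
    (Finset.sum_image fun a _ b _ h => hinj h).symm]
  exact Finset.sum_le_sum_of_subset_of_nonneg (Finset.subset_univ _)
    (fun w _ _ => chi_nonneg p i₀ hq _ w)

lemma zpow_le_max {q : ℝ} (hq : 0 < q) {m : ℤ} {N : ℕ} (h : |m| ≤ (N:ℤ)) :
    q ^ m ≤ (max q q⁻¹) ^ N := by
  have hM1 : 1 ≤ max q q⁻¹ := by
    rcases le_total 1 q with h1 | h1
    · exact le_max_of_le_left h1
    · exact le_max_of_le_right (one_le_inv_iff₀.mpr ⟨hq, h1⟩)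
  have hMq : q ≤ max q q⁻¹ := le_max_left _ _
  have hMqi : q⁻¹ ≤ max q q⁻¹ := le_max_right _ _
  have hMpos : 0 < max q q⁻¹ := lt_of_lt_of_le one_pos hM1
  rcases le_or_gt 0 m with hm | hm
  · have hmN : m ≤ (N:ℤ) := (abs_of_nonneg hm) ▸ h
    have : q ^ m = q ^ m.toNat := by rw [← zpow_natCast, Int.toNat_of_nonneg hm]
    rw [this]
    calc q ^ m.toNat ≤ (max q q⁻¹) ^ m.toNat := pow_le_pow_left₀ hq.le hMq _
      _ ≤ (max q q⁻¹) ^ N := pow_le_pow_right₀ hM1 (by omega)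
  · have hmN : -m ≤ (N:ℤ) := (abs_of_neg hm) ▸ h
    have h1 : q ^ m = (q⁻¹) ^ (-m).toNat := by
      rw [← zpow_natCast, Int.toNat_of_nonneg (by omega), inv_zpow, ← zpow_neg, neg_neg]
    rw [h1]
    calc (q⁻¹) ^ (-m).toNat ≤ (max q q⁻¹) ^ (-m).toNat :=
        pow_le_pow_left₀ (by positivity) hMqi _
      _ ≤ (max q q⁻¹) ^ N := pow_le_pow_right₀ hM1 (by omega)

lemma SS_le {q : ℝ} (hq : 0 < q) (N : ℕ) :
    SS p i₀ q N ≤ (2*(N:ℝ)+1) * ((2*k*(max q q⁻¹)) ^ N) := by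
  classical
  have hterm : ∀ m ∈ Finset.Icc (-(N:ℤ)) (N:ℤ),
      (fcount p i₀ N m : ℝ) * q ^ m ≤ ((2*k*(max q q⁻¹)) ^ N) := by
    intro m hm
    rw [Finset.mem_Icc] at hm
    have habs : |m| ≤ (N:ℤ) := abs_le.mpr hm
    have hf : (fcount p i₀ N m : ℝ) ≤ ((2*(k:ℝ)) ^ N) := by
      have h1 : fcount p i₀ N m ≤ (2*k)^N := by
        rw [fcount, Nat.card_eq_fintype_card]
        calc Fintype.card _ ≤ Fintype.card (Fin N → Fin k × Bool) :=
              Fintype.card_subtype_le _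
          _ = (2*k)^N := by simp [Fintype.card_fun, mul_comm]
      calc (fcount p i₀ N m : ℝ) ≤ (((2*k)^N : ℕ) : ℝ) := by exact_mod_cast h1
        _ = (2*(k:ℝ))^N := by push_cast; ring
    have hq' : q ^ m ≤ (max q q⁻¹) ^ N := zpow_le_max hq habs
    calc (fcount p i₀ N m : ℝ) * q ^ m ≤ (2*(k:ℝ))^N * (max q q⁻¹)^N :=
        mul_le_mul hf hq' (by positivity) (by positivity)
      _ = (2*k*(max q q⁻¹))^N := by rw [← mul_pow]
  calc SS p i₀ q N ≤ (Finset.Icc (-(N:ℤ)) (N:ℤ)).card • ((2*k*(max q q⁻¹)) ^ N) :=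
      Finset.sum_le_card_nsmul _ _ _ hterm
    _ = (2*(N:ℝ)+1) * ((2*k*(max q q⁻¹)) ^ N) := by
        rw [Int.card_Icc]
        have hc : ((N:ℤ) + 1 - -(N:ℤ)).toNat = 2*N+1 := by omega
        rw [hc, nsmul_eq_mul]
        push_cast; ring

end GrowthAux

open Filter in
/-- For every fixed real `q > 0`, the sequence
`(Σ_{m=-2n}^{2n} f(2n,m)·q^m)^{1/(2n)}` converges to a finite limit. -/
theorem growth_rate_exists (k : ℕ) (hk : 2 ≤ k) (p : Fin k → ℕ)
    (hp : ∀ i, 2 ≤ p i) (q : ℝ) (hq : 0 < q) :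
    ∃ L : ℝ, Tendsto (fun n : ℕ =>
        (∑ m ∈ Finset.Icc (-(2 * (n : ℤ))) (2 * (n : ℤ)),
            (fcount p (fin0 hk) (2*n) m : ℝ) * q ^ m)
          ^ (1 / (2 * (n : ℝ))))
      atTop (nhds L) := by
  set i₀ := fin0 hk with hi₀
  have hSsum : ∀ n : ℕ, (∑ m ∈ Finset.Icc (-(2 * (n : ℤ))) (2 * (n : ℤ)),
      (fcount p i₀ (2*n) m : ℝ) * q ^ m) = GrowthAux.SS p i₀ q (2*n) := by
    intro n
    have hc : ((2*n : ℕ) : ℤ) = 2*(n:ℤ) := by push_cast; ring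
    rw [GrowthAux.SS, hc]
  have hpos : ∀ n : ℕ, 0 < GrowthAux.SS p i₀ q (2*n) := GrowthAux.SS_pos p i₀ hp hq
  set u : ℕ → ℝ := fun n => -Real.log (GrowthAux.SS p i₀ q (2*n)) with hu
  have hsub : Subadditive u := by
    intro a b
    have hmul := GrowthAux.SS_supermul p i₀ hp hq (2*a) (2*b)
    have h2 : 2*a + 2*b = 2*(a+b) := by ring
    rw [h2] at hmul
    have hlog : Real.log (GrowthAux.SS p i₀ q (2*a)) + Real.log (GrowthAux.SS p i₀ q (2*b))
        ≤ Real.log (GrowthAux.SS p i₀ q (2*(a+b))) := by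
      rw [← Real.log_mul (hpos a).ne' (hpos b).ne']
      exact Real.log_le_log (mul_pos (hpos a) (hpos b)) hmul
    simp only [hu]
    linarith
  set C : ℝ := 2*k*(max q q⁻¹) with hC
  have hC1 : 1 ≤ C := by
    have h1 : 1 ≤ max q q⁻¹ := by
      rcases le_total 1 q with h1 | h1
      · exact le_max_of_le_left h1
      · exact le_max_of_le_right (one_le_inv_iff₀.mpr ⟨hq, h1⟩)
    have hk' : (4:ℝ) ≤ 2*k := by
      have : (2:ℝ) ≤ (k:ℝ) := by exact_mod_cast hk
      linarith
    nlinarith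
  have hlogC : 0 ≤ Real.log C := Real.log_nonneg hC1
  have hub : ∀ n : ℕ, 1 ≤ n →
      Real.log (GrowthAux.SS p i₀ q (2*n)) ≤ (n:ℝ) * (5 + 2*Real.log C) := by
    intro n hn
    have h1 := GrowthAux.SS_le p i₀ hq (2*n)
    rw [← hC] at h1
    have hfac : (0:ℝ) < 2*((2*n : ℕ):ℝ)+1 := by positivity
    have hCpos : (0:ℝ) < C := lt_of_lt_of_le one_pos hC1
    have hlog1 : Real.log (GrowthAux.SS p i₀ q (2*n))
        ≤ Real.log ((2*((2*n : ℕ):ℝ)+1) * C ^ (2*n)) :=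
      Real.log_le_log (hpos n) h1
    rw [Real.log_mul hfac.ne' (by positivity), Real.log_pow] at hlog1
    have hlog2 : Real.log (2*((2*n : ℕ):ℝ)+1) ≤ 2*((2*n : ℕ):ℝ)+1 :=
      Real.log_le_self (by positivity)
    have hn' : (1:ℝ) ≤ (n:ℝ) := by exact_mod_cast hn
    have hcast : ((2*n : ℕ):ℝ) = 2*(n:ℝ) := by push_cast; ring
    rw [hcast] at hlog1 hlog2
    nlinarith [hlog1, hlog2, hlogC, hn']
  have hbdd : BddBelow (Set.range fun n : ℕ => u n / n) := by
    refine ⟨min 0 (-(5 + 2*Real.log C)), ?_⟩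
    rintro x ⟨n, rfl⟩
    rcases Nat.eq_zero_or_pos n with rfl | hn
    · simp
    · have hn' : (0:ℝ) < (n:ℝ) := by exact_mod_cast hn
      have h := hub n hn
      have : -(5 + 2*Real.log C) ≤ u n / n := by
        rw [le_div_iff₀ hn']
        simp only [hu]
        linarith
      exact le_trans (min_le_right _ _) this
  refine ⟨Real.exp (-(hsub.lim) / 2), ?_⟩
  have ht := hsub.tendsto_lim hbdd
  have hexp : Tendsto (fun n : ℕ => Real.exp (-(u n / n) / 2)) atTop
      (nhds (Real.exp (-(hsub.lim) / 2))) := by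
    have h2 : Tendsto (fun n : ℕ => -(u n / n) / 2) atTop (nhds (-(hsub.lim)/2)) :=
      (ht.neg).div_const 2
    exact (Real.continuous_exp.tendsto _).comp h2
  refine Filter.Tendsto.congr' ?_ hexp
  filter_upwards [eventually_ge_atTop 1] with n hn
  rw [hSsum n, Real.rpow_def_of_pos (hpos n)]
  congr 1
  simp only [hu, neg_div, neg_neg]
  rw [div_div, mul_one_div, mul_comm (n:ℝ) 2]
end

section
/- Let k ≥ 2 and p_1,…,p_k ≥ 2 be integers. Let ψ(n) be the number of words of length n in the generators of G(p_1,…,p_k) and their inverses whose value is the identity, and let g(n) be the number of words of length n whose value lies in the cyclic subgroup generated by Δ (the subgroup of all integer powers of Δ). Then limsup_{n→∞} ψ(n)^{1/n} = limsup_{n→∞} g(n)^{1/n} as real numbers; that is, the cogrowth count and the count of words valued in ⟨Δ⟩ have the same exponential growth rate. -/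
/-- The number of words of length `n` whose value lies in the cyclic subgroup
generated by `Δ = a_{i₀}^{p i₀}`. -/
noncomputable def deltaCount {k : ℕ} (p : Fin k → ℕ) (i₀ : Fin k) (n : ℕ) : ℕ :=
  Nat.card {w : Fin n → Fin k × Bool //
    ∃ m : ℤ, wordValue (fun i => (PresentedGroup.of i : PresentedGroup (Grels p i₀))) w
      = ((PresentedGroup.of i₀ : PresentedGroup (Grels p i₀)) ^ (p i₀)) ^ m}

namespace SG
variable {G : Type*} [Group G] {k n : ℕ}

lemma wordValue_eq_ofFn (g : Fin k → G) (w : Fin n → Fin k × Bool) :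
    wordValue g w
      = (List.ofFn (fun j => if (w j).2 then g (w j).1 else (g (w j).1)⁻¹)).prod := by
  rw [wordValue, List.ofFn_eq_map]

/-- reversed, letterwise-inverted word -/
def wrev (w : Fin n → Fin k × Bool) : Fin n → Fin k × Bool :=
  fun j => ((w j.rev).1, !(w j.rev).2)

lemma wrev_wrev (w : Fin n → Fin k × Bool) : wrev (wrev w) = w := by
  funext j; simp [wrev, Fin.rev_rev]

lemma ofFn_comp_rev {α : Type*} (f : Fin n → α) :
    List.ofFn (fun j => f j.rev) = (List.ofFn f).reverse := by
  rw [List.ofFn_eq_map, List.ofFn_eq_map, ← List.map_reverse, List.finRange_reverse,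
    List.map_map]
  rfl

lemma wordValue_wrev (g : Fin k → G) (w : Fin n → Fin k × Bool) :
    wordValue g (wrev w) = (wordValue g w)⁻¹ := by
  rw [wordValue_eq_ofFn, wordValue_eq_ofFn, List.prod_inv_reverse, List.map_ofFn,
    ← ofFn_comp_rev]
  congr 1
  apply congrArg List.ofFn
  funext j
  simp only [wrev, Function.comp]
  by_cases h : (w j.rev).2 = true <;> simp [h]

lemma wordValue_append {m : ℕ} (g : Fin k → G) (u : Fin m → Fin k × Bool)
    (v : Fin n → Fin k × Bool) :
    wordValue g (Fin.append u v) = wordValue g u * wordValue g v := by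
  rw [wordValue_eq_ofFn, wordValue_eq_ofFn, wordValue_eq_ofFn, ← List.prod_append,
    ← List.ofFn_fin_append]
  congr 1
  apply congrArg List.ofFn
  funext j
  induction j using Fin.addCases with
  | left i => simp [Fin.append_left]
  | right i => simp [Fin.append_right]

end SG

namespace SG
variable {k : ℕ} (p : Fin k → ℕ) (i₀ : Fin k)

noncomputable def gen : Fin k → PresentedGroup (Grels p i₀) :=
  fun i => PresentedGroup.of i

noncomputable def Dl : PresentedGroup (Grels p i₀) := gen p i₀ i₀ ^ p i₀

variable (hp : ∀ i, 2 ≤ p i)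

noncomputable def phi (hp : ∀ i, 2 ≤ p i) : PresentedGroup (Grels p i₀) →* Multiplicative ℚ :=
  PresentedGroup.toGroup (f := fun i => Multiplicative.ofAdd ((p i : ℚ)⁻¹)) (by
    rintro r ⟨i, rfl⟩
    have h1 : (p i : ℚ) ≠ 0 := by
      have := hp i; positivity
    have h2 : (p i₀ : ℚ) ≠ 0 := by
      have := hp i₀; positivity
    simp only [map_mul, map_pow, map_inv, FreeGroup.lift_apply_of]
    rw [← ofAdd_nsmul, ← ofAdd_nsmul]
    rw [nsmul_eq_mul, nsmul_eq_mul, mul_inv_cancel₀ h1, mul_inv_cancel₀ h2]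
    simp)

lemma phi_gen (i : Fin k) : phi p i₀ hp (gen p i₀ i) = Multiplicative.ofAdd ((p i : ℚ)⁻¹) :=
  PresentedGroup.toGroup.of _

lemma phi_Dl : phi p i₀ hp (Dl p i₀) = Multiplicative.ofAdd (1 : ℚ) := by
  have h1 : (p i₀ : ℚ) ≠ 0 := by have := hp i₀; positivity
  rw [Dl, map_pow, phi_gen, ← ofAdd_nsmul, nsmul_eq_mul, mul_inv_cancel₀ h1]

lemma phi_Dl_zpow (m : ℤ) :
    phi p i₀ hp (Dl p i₀ ^ m) = Multiplicative.ofAdd (m : ℚ) := by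
  rw [map_zpow, phi_Dl, ← ofAdd_zsmul, zsmul_eq_mul, mul_one]

lemma abs_toAdd_prod_le (l : List (Multiplicative ℚ))
    (h : ∀ x ∈ l, |Multiplicative.toAdd x| ≤ 1) :
    |Multiplicative.toAdd l.prod| ≤ l.length := by
  induction l with
  | nil => simp
  | cons a t ih =>
    simp only [List.prod_cons, toAdd_mul, List.length_cons]
    have h1 := h a List.mem_cons_self
    have h2 := ih (fun x hx => h x (List.mem_cons_of_mem a hx))
    calc |Multiplicative.toAdd a + Multiplicative.toAdd t.prod|
        ≤ |Multiplicative.toAdd a| + |Multiplicative.toAdd t.prod| := abs_add_le _ _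
      _ ≤ 1 + t.length := add_le_add h1 h2
      _ = ((t.length + 1 : ℕ) : ℚ) := by push_cast; ring

lemma abs_toAdd_phi_wordValue_le {n : ℕ} (w : Fin n → Fin k × Bool) :
    |Multiplicative.toAdd (phi p i₀ hp (wordValue (gen p i₀) w))| ≤ n := by
  rw [wordValue, map_list_prod]
  have := abs_toAdd_prod_le (((List.finRange n).map
    (fun j => if (w j).2 then gen p i₀ (w j).1 else (gen p i₀ (w j).1)⁻¹)).map
      (phi p i₀ hp)) ?_
  · simpa using this
  · intro x hx
    simp only [List.mem_map, List.mem_finRange] at hx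
    obtain ⟨y, ⟨j, -, rfl⟩, rfl⟩ := hx
    have hj : |((p (w j).1 : ℚ))⁻¹| ≤ 1 := by
      rw [abs_of_nonneg (by positivity)]
      have h2 : (1:ℚ) ≤ (p (w j).1 : ℚ) := by exact_mod_cast (hp (w j).1).trans' one_le_two
      exact inv_le_one_of_one_le₀ h2
    cases hb : (w j).2 <;> simp [hb, phi_gen, hj] <;>
      exact inv_le_one_of_one_le₀ (by exact_mod_cast (hp (w j).1).trans' one_le_two)
end SG


namespace SG
variable {k : ℕ} (p : Fin k → ℕ) (i₀ : Fin k)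

lemma cog_le_delta (n : ℕ) :
    cogrowthCount (gen p i₀) n ≤ deltaCount p i₀ n := by
  apply Nat.card_le_card_of_injective
    (f := fun w : {w : Fin n → Fin k × Bool // wordValue (gen p i₀) w = 1} =>
      (⟨w.1, 0, by
        show wordValue (gen p i₀) w.1 = Dl p i₀ ^ (0:ℤ)
        rw [w.2, zpow_zero]⟩ : {w : Fin n → Fin k × Bool //
        ∃ m : ℤ, wordValue (fun i => (PresentedGroup.of i : PresentedGroup (Grels p i₀))) w
          = ((PresentedGroup.of i₀ : PresentedGroup (Grels p i₀)) ^ (p i₀)) ^ m}))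
  intro a b hab
  simp only [Subtype.mk.injEq] at hab
  exact Subtype.ext hab

lemma delta_le_pow (n : ℕ) : deltaCount p i₀ n ≤ (2 * k) ^ n := by
  calc deltaCount p i₀ n ≤ Nat.card (Fin n → Fin k × Bool) :=
        Nat.card_le_card_of_injective Subtype.val Subtype.val_injective
    _ = (2 * k) ^ n := by
        simp [Nat.card_eq_fintype_card, Fintype.card_fun, mul_comm]

lemma key_count (hp : ∀ i, 2 ≤ p i) (n : ℕ) :
    deltaCount p i₀ n ^ 2 ≤ (2*n+1)^2 * cogrowthCount (gen p i₀) (2*n) := by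
  classical
  set g : Fin k → PresentedGroup (Grels p i₀) := gen p i₀ with hg
  let P : (Fin n → Fin k × Bool) → Prop := fun w => ∃ m : ℤ, wordValue g w = Dl p i₀ ^ m
  let μ : (Fin n → Fin k × Bool) → ℤ := fun w => if h : P w then h.choose else 0
  have hμ : ∀ w, P w → wordValue g w = Dl p i₀ ^ (μ w) := by
    intro w hw
    simp only [μ, dif_pos hw]
    exact hw.choose_spec
  have hmem : ∀ w, P w → μ w ∈ Finset.Icc (-(n:ℤ)) n := by
    intro w hw
    have h1 := abs_toAdd_phi_wordValue_le p i₀ hp w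
    rw [hμ w hw, phi_Dl_zpow] at h1
    simp only [toAdd_ofAdd] at h1
    have h2 : |(μ w : ℚ)| ≤ (n : ℚ) := h1
    rw [← Int.cast_abs] at h2
    have h3 : |μ w| ≤ (n : ℤ) := by exact_mod_cast h2
    rw [Finset.mem_Icc]
    exact abs_le.mp h3
  let S : Finset (Fin n → Fin k × Bool) := Finset.univ.filter P
  have hdc : deltaCount p i₀ n = S.card := by
    have : deltaCount p i₀ n = Nat.card {w : Fin n → Fin k × Bool // P w} := rfl
    rw [this, Nat.card_eq_fintype_card, Fintype.card_subtype]
  have hsum : S.card = ∑ m ∈ Finset.Icc (-(n:ℤ)) n, (S.filter (fun w => μ w = m)).card :=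
    Finset.card_eq_sum_card_fiberwise (fun w hw => hmem w ((Finset.mem_filter.mp hw).2))
  obtain ⟨m₀, -, hmax⟩ := Finset.exists_max_image (Finset.Icc (-(n:ℤ)) n)
    (fun m => (S.filter (fun w => μ w = m)).card) ⟨0, by simp⟩
  have hIcc : (Finset.Icc (-(n:ℤ)) n).card = 2*n+1 := by
    rw [Int.card_Icc]; omega
  let F : Finset (Fin n → Fin k × Bool) := S.filter (fun w => μ w = m₀)
  have hS_le : S.card ≤ (2*n+1) * F.card := by
    rw [hsum]
    calc ∑ m ∈ Finset.Icc (-(n:ℤ)) n, (S.filter (fun w => μ w = m)).card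
        ≤ (Finset.Icc (-(n:ℤ)) n).card • F.card :=
          Finset.sum_le_card_nsmul _ _ _ (fun m hm => hmax m hm)
      _ = (2*n+1) * F.card := by rw [hIcc, smul_eq_mul]
  -- injection of F × F into identity words of length n+n
  have hFF : F.card ^ 2 ≤ cogrowthCount g (n+n) := by
    rw [cogrowthCount, Nat.card_eq_fintype_card, Fintype.card_subtype]
    rw [sq, ← Finset.card_product]
    apply Finset.card_le_card_of_injOn (fun q => Fin.append q.1 (wrev q.2))
    · rintro ⟨u, v⟩ hq
      rw [Finset.mem_coe, Finset.mem_product] at hq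
      obtain ⟨hu, hv⟩ := hq
      have hu' := Finset.mem_filter.mp hu
      have hv' := Finset.mem_filter.mp hv
      have hup := Finset.mem_filter.mp hu'.1
      have hvp := Finset.mem_filter.mp hv'.1
      simp only [Finset.mem_coe, Finset.mem_filter, Finset.mem_univ, true_and]
      rw [wordValue_append, wordValue_wrev, hμ u hup.2, hμ v hvp.2, hu'.2, hv'.2]
      simp
    · rintro ⟨u, v⟩ - ⟨u', v'⟩ - h
      have h' : Fin.append u (wrev v) = Fin.append u' (wrev v') := h
      have h1 : u = u' := by
        funext i
        have := congrFun h' (Fin.castAdd n i)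
        rwa [Fin.append_left, Fin.append_left] at this
      have h2 : wrev v = wrev v' := by
        funext i
        have := congrFun h' (Fin.natAdd n i)
        rwa [Fin.append_right, Fin.append_right] at this
      have h3 : v = v' := by
        rw [← wrev_wrev (w := v), h2, wrev_wrev]
      simp [h1, h3]
  have h2n : cogrowthCount g (2*n) = cogrowthCount g (n+n) := by rw [two_mul]
  calc deltaCount p i₀ n ^ 2 = S.card ^ 2 := by rw [hdc]
    _ ≤ ((2*n+1) * F.card)^2 := Nat.pow_le_pow_left hS_le 2
    _ = (2*n+1)^2 * F.card^2 := by ring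
    _ ≤ (2*n+1)^2 * cogrowthCount g (n+n) := Nat.mul_le_mul_left _ hFF
    _ = (2*n+1)^2 * cogrowthCount g (2*n) := by rw [h2n]
end SG

namespace SG
open Filter Real Topology
variable {k : ℕ} (p : Fin k → ℕ) (i₀ : Fin k)

lemma main (hp : ∀ i, 2 ≤ p i) :
    limsup (fun n : ℕ => (cogrowthCount (gen p i₀) n : ℝ) ^ (1 / (n : ℝ))) atTop
      = limsup (fun n : ℕ => (deltaCount p i₀ n : ℝ) ^ (1 / (n : ℝ))) atTop := by
  have hk0 : 0 < k := i₀.pos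
  set Fψ := fun n : ℕ => (cogrowthCount (gen p i₀) n : ℝ) ^ (1 / (n : ℝ)) with hFψ
  set Fg := fun n : ℕ => (deltaCount p i₀ n : ℝ) ^ (1 / (n : ℝ)) with hFg
  have hinv0 : ∀ n : ℕ, 0 ≤ 1 / (n : ℝ) := fun n => by positivity
  have hψ0 : ∀ n, 0 ≤ Fψ n := fun n => Real.rpow_nonneg (Nat.cast_nonneg _) _
  have hg0 : ∀ n, 0 ≤ Fg n := fun n => Real.rpow_nonneg (Nat.cast_nonneg _) _
  have hψle : ∀ n, Fψ n ≤ Fg n := by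
    intro n
    apply Real.rpow_le_rpow (Nat.cast_nonneg _) _ (hinv0 n)
    exact_mod_cast cog_le_delta p i₀ n
  have hgB : ∀ n, Fg n ≤ 2 * k := by
    intro n
    have hk1 : (1:ℝ) ≤ 2 * k := by
      have : (1:ℝ) ≤ (k:ℝ) := by exact_mod_cast hk0
      nlinarith
    rcases Nat.eq_zero_or_pos n with rfl | hn
    · simp only [hFg, Nat.cast_zero, div_zero, Real.rpow_zero]
      exact hk1
    · have h1 : (deltaCount p i₀ n : ℝ) ≤ (((2 * k) ^ n : ℕ) : ℝ) := by
        exact_mod_cast delta_le_pow p i₀ n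
      have hn0 : (n:ℝ) ≠ 0 := by positivity
      calc Fg n ≤ (((2 * k) ^ n : ℕ) : ℝ) ^ (1 / (n : ℝ)) :=
            Real.rpow_le_rpow (Nat.cast_nonneg _) h1 (hinv0 n)
        _ = 2 * k := by
            push_cast
            rw [← Real.rpow_natCast (2 * (k:ℝ)) n, ← Real.rpow_mul (by positivity),
              mul_one_div, div_self hn0, Real.rpow_one]
  have hbψ : IsBoundedUnder (· ≤ ·) atTop Fψ :=
    isBoundedUnder_of ⟨2 * k, fun n => (hψle n).trans (hgB n)⟩
  have hbg : IsBoundedUnder (· ≤ ·) atTop Fg :=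
    isBoundedUnder_of ⟨2 * k, fun n => hgB n⟩
  have hcbψ : IsCoboundedUnder (· ≤ ·) atTop Fψ :=
    isCoboundedUnder_le_of_le atTop (x := 0) hψ0
  have hcbg : IsCoboundedUnder (· ≤ ·) atTop Fg :=
    isCoboundedUnder_le_of_le atTop (x := 0) hg0
  refine le_antisymm (limsup_le_limsup (Eventually.of_forall hψle) hcbψ hbg) ?_
  apply le_of_forall_gt_imp_ge_of_dense
  intro c hc
  have h0L : 0 ≤ limsup Fψ atTop :=
    le_limsup_of_frequently_le (Frequently.of_forall hψ0) hbψ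
  have hc0 : 0 < c := lt_of_le_of_lt h0L hc
  obtain ⟨N₀, hN₀⟩ := eventually_atTop.mp (eventually_lt_of_limsup_lt hc hbψ)
  have key : ∀ n : ℕ, N₀ + 1 ≤ n →
      Fg n ≤ (3:ℝ) ^ (1/(n:ℝ)) * (n:ℝ) ^ (1/(n:ℝ)) * c := by
    intro n hn
    have hn1 : 1 ≤ n := le_trans (Nat.le_add_left 1 N₀) hn
    have hn0 : (n:ℝ) ≠ 0 := by positivity
    have hnR1 : (1:ℝ) ≤ (n:ℝ) := by exact_mod_cast hn1
    -- ψ(2n) ≤ c ^ (2n)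
    have hψ2n : Fψ (2 * n) ≤ c := (hN₀ (2 * n) (by omega)).le
    have hm0 : ((2 * n : ℕ) : ℝ) ≠ 0 := by positivity
    have hψnat : (cogrowthCount (gen p i₀) (2 * n) : ℝ) ≤ c ^ (2 * n) := by
      have h2 := Real.rpow_le_rpow (hψ0 (2 * n)) hψ2n (le_of_lt (by positivity :
        (0:ℝ) < ((2 * n : ℕ) : ℝ)))
      rw [hFψ] at h2
      rw [← Real.rpow_mul (Nat.cast_nonneg _), one_div, inv_mul_cancel₀ hm0,
        Real.rpow_one, Real.rpow_natCast] at h2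
      exact h2
    -- deltaCount n ≤ 3n * c^n
    have hkeyN := key_count p i₀ hp n
    have hkeyR : (deltaCount p i₀ n : ℝ) ^ 2
        ≤ (((2 * n + 1 : ℕ)) : ℝ) ^ 2 * (cogrowthCount (gen p i₀) (2 * n) : ℝ) := by
      exact_mod_cast hkeyN
    have h31 : (((2 * n + 1 : ℕ)) : ℝ) ≤ 3 * (n:ℝ) := by push_cast; linarith
    have hsq : (deltaCount p i₀ n : ℝ) ^ 2 ≤ (3 * (n:ℝ) * c ^ n) ^ 2 := by
      calc (deltaCount p i₀ n : ℝ) ^ 2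
          ≤ (((2 * n + 1 : ℕ)) : ℝ) ^ 2 * (cogrowthCount (gen p i₀) (2 * n) : ℝ) := hkeyR
        _ ≤ (3 * (n:ℝ)) ^ 2 * c ^ (2 * n) := by
            apply mul_le_mul (by nlinarith [Nat.cast_nonneg (α := ℝ) (2*n+1)]) hψnat
              (Nat.cast_nonneg _) (by positivity)
        _ = (3 * (n:ℝ) * c ^ n) ^ 2 := by rw [pow_mul']; ring
    have hd3 : (deltaCount p i₀ n : ℝ) ≤ 3 * (n:ℝ) * c ^ n := by
      have h3 : (0:ℝ) ≤ 3 * (n:ℝ) * c ^ n := by positivity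
      exact (pow_le_pow_iff_left₀ (Nat.cast_nonneg _) h3 two_ne_zero).mp hsq
    -- take n-th roots
    calc Fg n ≤ (3 * (n:ℝ) * c ^ n) ^ (1/(n:ℝ)) :=
          Real.rpow_le_rpow (Nat.cast_nonneg _) hd3 (hinv0 n)
      _ = (3:ℝ) ^ (1/(n:ℝ)) * (n:ℝ) ^ (1/(n:ℝ)) * c := by
          rw [Real.mul_rpow (by positivity) (by positivity),
            Real.mul_rpow (by norm_num) (by positivity)]
          congr 1
          rw [← Real.rpow_natCast c n, ← Real.rpow_mul hc0.le, mul_one_div,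
            div_self hn0, Real.rpow_one]
  -- the upper bound tends to c
  have t2 : Tendsto (fun n : ℕ => (n:ℝ) ^ (1/(n:ℝ))) atTop (𝓝 1) :=
    tendsto_rpow_div.comp tendsto_natCast_atTop_atTop
  have t1 : Tendsto (fun n : ℕ => (3:ℝ) ^ (1/(n:ℝ))) atTop (𝓝 1) := by
    have he : (fun n : ℕ => (3:ℝ) ^ (1/(n:ℝ)))
        = fun n : ℕ => Real.exp (Real.log 3 * (1/(n:ℝ))) := by
      funext n
      rw [Real.rpow_def_of_pos (by norm_num)]
    rw [he]
    have : Tendsto (fun n : ℕ => Real.log 3 * (1/(n:ℝ))) atTop (𝓝 0) := by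
      simpa using (tendsto_const_nhds (x := Real.log 3)).mul tendsto_one_div_atTop_nhds_zero_nat
    simpa [Function.comp_def] using (Real.continuous_exp.continuousAt (x := 0)).tendsto.comp this
  have ht : Tendsto (fun n : ℕ => (3:ℝ) ^ (1/(n:ℝ)) * (n:ℝ) ^ (1/(n:ℝ)) * c)
      atTop (𝓝 c) := by
    have := (t1.mul t2).mul (tendsto_const_nhds (x := c))
    simpa using this
  calc limsup Fg atTop
      ≤ limsup (fun n : ℕ => (3:ℝ) ^ (1/(n:ℝ)) * (n:ℝ) ^ (1/(n:ℝ)) * c) atTop :=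
        limsup_le_limsup (eventually_atTop.mpr ⟨N₀ + 1, key⟩) hcbg ht.isBoundedUnder_le
    _ = c := ht.limsup_eq

end SG

open Filter in
/-- The cogrowth count `ψ` and the count `g` of words valued in `⟨Δ⟩` have the same
exponential growth rate: `limsup ψ(n)^{1/n} = limsup g(n)^{1/n}`. -/
theorem same_growth_rate (k : ℕ) (hk : 2 ≤ k) (p : Fin k → ℕ) (hp : ∀ i, 2 ≤ p i) :
    limsup (fun n : ℕ =>
        (cogrowthCount (fun i => (PresentedGroup.of i :
            PresentedGroup (Grels p (fin0 hk)))) n : ℝ) ^ (1 / (n : ℝ))) atTop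
      = limsup (fun n : ℕ => (deltaCount p (fin0 hk) n : ℝ) ^ (1 / (n : ℝ))) atTop := by
  exact SG.main p (fin0 hk) hp
end
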